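/- arXiv:1210.1923 — 14 statements merged into one kernel-verified Lean document; each statement's English description precedes it below -/
import Mathlib

section
/- Any automorphism of the Plücker space (L_j, ≁_j) on a connected component L_j of L with respect to ≁ extends to an automorphism of (L, ∼) by acting as the identity on L \ L_j. -/
/-- Any automorphism of the Plücker space on a connected component `C` of `L` with respect
to the relation `≁` (i.e. `fun a b => a = b ∨ ¬ r a b`) extends, by acting as the identity
outside `C`, to an automorphism of the Plücker space `(L, r)`. -/
theorem stmt1 {L : Type*} (r : L → L → Prop)
    (hrefl : Reflexive r) (hsymm : Symmetric r)
    (hconn : ∀ a b : L, Relation.ReflTransGen r a b)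
    (c₀ : L) (C : Set L)
    (hC : C = {x | Relation.ReflTransGen (fun a b => a = b ∨ ¬ r a b) c₀ x})
    (ψ : L ≃ L)
    (hfix : ∀ x ∉ C, ψ x = x)
    (hmap : ∀ x ∈ C, ψ x ∈ C)
    (hauto : ∀ a ∈ C, ∀ b ∈ C,
      ((a = b ∨ ¬ r a b) ↔ (ψ a = ψ b ∨ ¬ r (ψ a) (ψ b)))) :
    ∀ a b : L, r a b ↔ r (ψ a) (ψ b) := by
  -- elements of C are r-related to elements outside C
  have hcross : ∀ a ∈ C, ∀ b ∉ C, r a b := by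
    intro a ha b hb
    by_contra h
    apply hb
    rw [hC] at ha ⊢
    exact ha.trans (Relation.ReflTransGen.single (Or.inr h))
  intro a b
  by_cases ha : a ∈ C <;> by_cases hb : b ∈ C
  · -- both in C
    have h := hauto a ha b hb
    by_cases hab : a = b
    · subst hab
      exact iff_of_true (hrefl a) (hrefl (ψ a))
    · have hab' : ψ a ≠ ψ b := fun h' => hab (ψ.injective h')
      constructor
      · intro hr
        by_contra hr'
        exact (h.mpr (Or.inr hr')).elim hab (fun h2 => h2 hr)
      · intro hr
        by_contra hr'
        exact (h.mp (Or.inr hr')).elim hab' (fun h2 => h2 hr)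
  · -- a ∈ C, b ∉ C
    rw [hfix b hb]
    exact iff_of_true (hcross a ha b hb) (hcross (ψ a) (hmap a ha) b hb)
  · -- a ∉ C, b ∈ C
    rw [hfix a ha]
    exact iff_of_true (hsymm (hcross b hb a ha)) (hsymm (hcross (ψ b) (hmap b hb) a ha))
  · rw [hfix a ha, hfix b hb]
end

section
/- In an affine space of dimension at least 2, the relation of lines 'meeting in a point' (a ∼ b iff a ∩ b ≠ ∅) on the set of all lines is reflexive, symmetric, and connected, i.e., it makes the set of lines a Plücker space. -/
variable (k V P : Type*) [DivisionRing k] [AddCommGroup V] [Module k V] [AddTorsor V P]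

/-- A subset of the affine space `P` is a line iff it is of the form `{t • v +ᵥ p | t : k}`
with `v ≠ 0`. -/
def IsPLine (s : Set P) : Prop :=
  ∃ (p : P) (v : V), v ≠ 0 ∧ s = {q | ∃ t : k, q = t • v +ᵥ p}

/-- The set of all lines of the affine space `P`. -/
abbrev PLine : Type _ := {s : Set P // IsPLine k V P s}

/-- Two lines are related iff they have a common point. -/
def PMeets (a b : PLine k V P) : Prop := (a.1 ∩ b.1).Nonempty

lemma base_mem (p : P) (v : V) : p ∈ {q | ∃ t : k, q = t • v +ᵥ p} :=
  ⟨0, by simp⟩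

/-- In an affine space of dimension at least `2`, the relation "meeting in a point" on the
set of all lines is reflexive, symmetric and connected, i.e. it is a Plücker space. -/
theorem stmt2 (hdim : 2 ≤ Module.rank k V) :
    Reflexive (PMeets k V P) ∧ Symmetric (PMeets k V P) ∧
      ∀ a b : PLine k V P, Relation.ReflTransGen (PMeets k V P) a b := by
  refine ⟨?_, ?_, ?_⟩
  · rintro ⟨s, p, v, hv, rfl⟩
    exact ⟨p, base_mem k V P p v, base_mem k V P p v⟩
  · rintro a b ⟨x, hx1, hx2⟩
    exact ⟨x, hx2, hx1⟩
  · rintro ⟨s, p, v, hv, rfl⟩ ⟨t, q, w, hw, rfl⟩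
    by_cases hpq : p = q
    · refine Relation.ReflTransGen.single ⟨p, base_mem k V P p v, ?_⟩
      subst hpq; exact base_mem k V P p w
    · -- the line through p and q
      set c : PLine k V P := ⟨_, p, q -ᵥ p, vsub_ne_zero.mpr (Ne.symm hpq), rfl⟩
      have h1 : PMeets k V P ⟨_, p, v, hv, rfl⟩ c :=
        ⟨p, base_mem k V P p v, base_mem k V P p _⟩
      have h2 : PMeets k V P c ⟨_, q, w, hw, rfl⟩ :=
        ⟨q, ⟨1, by simp⟩, base_mem k V P q w⟩
      exact Relation.ReflTransGen.head h1 (Relation.ReflTransGen.single h2)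
end

section
/- In an affine space of dimension at least 3, the relation ≁ on lines (a ≁ b iff a = b or a ∩ b = ∅) is connected, i.e., (L, ≁) is a Plücker space. -/
variable (k V P : Type*) [DivisionRing k] [AddCommGroup V] [Module k V] [AddTorsor V P]

variable {k V P}

lemma span_pair_ne_top (hdim : 3 ≤ Module.rank k V) (x y : V) :
    Submodule.span k ({x, y} : Set V) ≠ ⊤ := by
  intro e
  have h1 : Module.rank k (Submodule.span k ({x, y} : Set V)) ≤ 2 := by
    refine (rank_span_le _).trans ?_
    have h2 := Cardinal.mk_insert_le (s := ({y} : Set V)) (a := x)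
    simpa [one_add_one_eq_two] using h2
  rw [e, rank_top] at h1
  exact absurd (hdim.trans h1) (by norm_num)

lemma pkey (p q : P) (v w : V) (hv : v ≠ 0) (hw : w ≠ 0)
    (h : Submodule.span k ({v, w, q -ᵥ p} : Set V) ≠ ⊤) :
    Relation.ReflTransGen (fun x y : PLine k V P => x = y ∨ x.1 ∩ y.1 = ∅)
      ⟨_, ⟨p, v, hv, rfl⟩⟩ ⟨_, ⟨q, w, hw, rfl⟩⟩ := by
  obtain ⟨z, hz⟩ : ∃ z, z ∉ Submodule.span k ({v, w, q -ᵥ p} : Set V) := by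
    by_contra hc
    push_neg at hc
    exact h (eq_top_iff.mpr fun x _ => hc x)
  have hvm : v ∈ Submodule.span k ({v, w, q -ᵥ p} : Set V) := Submodule.subset_span (by simp)
  have hwm : w ∈ Submodule.span k ({v, w, q -ᵥ p} : Set V) := Submodule.subset_span (by simp)
  have hdm : q -ᵥ p ∈ Submodule.span k ({v, w, q -ᵥ p} : Set V) := Submodule.subset_span (by simp)
  set c : PLine k V P := ⟨_, ⟨z +ᵥ p, v, hv, rfl⟩⟩ with hc
  have h1 : (⟨_, ⟨p, v, hv, rfl⟩⟩ : PLine k V P).1 ∩ c.1 = ∅ := by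
    ext x
    simp only [Set.mem_inter_iff, Set.mem_empty_iff_false, iff_false, Set.mem_setOf_eq, not_and]
    rintro ⟨s, rfl⟩ ⟨t, ht⟩
    rw [vadd_vadd] at ht
    have h2 := vadd_right_cancel p ht
    apply hz
    have : z = (s - t) • v := by rw [sub_smul]; rw [h2]; abel
    rw [this]
    exact Submodule.smul_mem _ _ hvm
  have h2 : c.1 ∩ (⟨_, ⟨q, w, hw, rfl⟩⟩ : PLine k V P).1 = ∅ := by
    ext x
    simp only [Set.mem_inter_iff, Set.mem_empty_iff_false, iff_false, Set.mem_setOf_eq, not_and]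
    rintro ⟨s, rfl⟩ ⟨t, ht⟩
    rw [vadd_vadd] at ht
    have h3 : s • v + z = t • w + (q -ᵥ p) := by
      have h4 := congrArg (· -ᵥ p) ht
      simpa [vadd_vsub, vadd_vsub_assoc] using h4
    apply hz
    have : z = t • w + (q -ᵥ p) - s • v := by rw [← h3]; abel
    rw [this]
    exact Submodule.sub_mem _ (Submodule.add_mem _ (Submodule.smul_mem _ _ hwm) hdm)
      (Submodule.smul_mem _ _ hvm)
  exact Relation.ReflTransGen.head (Or.inr h1) (Relation.ReflTransGen.single (Or.inr h2))

variable (k V P)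

/-- In an affine space of dimension at least `3`, the relation `≁` on lines
(`a ≁ b` iff `a = b` or `a ∩ b = ∅`) is connected, i.e. `(L, ≁)` is a Plücker space. -/
theorem stmt3 (hdim : 3 ≤ Module.rank k V) :
    ∀ a b : PLine k V P,
      Relation.ReflTransGen (fun x y : PLine k V P => x = y ∨ x.1 ∩ y.1 = ∅) a b := by
  rintro ⟨A, p, v, hv, rfl⟩ ⟨B, q, w, hw, rfl⟩
  have step1 := pkey (k := k) (V := V) (P := P) p q v v hv hv (by
    have he : ({v, v, q -ᵥ p} : Set V) = {v, q -ᵥ p} := Set.insert_idem ..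
    rw [he]
    exact span_pair_ne_top hdim v (q -ᵥ p))
  have step2 := pkey (k := k) (V := V) (P := P) q q v w hv hw (by
    have he : ({v, w, q -ᵥ q} : Set V) = insert 0 {v, w} := by
      rw [vsub_self]
      ext u
      simp only [Set.mem_insert_iff, Set.mem_singleton_iff]
      tauto
    rw [he, Submodule.span_insert_zero]
    exact span_pair_ne_top hdim v w)
  exact step1.trans step2
end

section
/- In an affine space, the star of lines through a point Q (the set of all lines incident with Q) is a maximal set of mutually related lines, where lines are related if they meet. -/
variable (k V P : Type*) [DivisionRing k] [AddCommGroup V] [Module k V] [AddTorsor V P]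

/-- In an affine space of dimension at least `2`, the star of lines through a point `Q` is
a maximal set of mutually related lines. -/
theorem stmt5 (hdim : 2 ≤ Module.rank k V) (Q : P) :
    (∀ a b : PLine k V P, Q ∈ a.1 → Q ∈ b.1 → PMeets k V P a b) ∧
    (∀ m : PLine k V P, (∀ l : PLine k V P, Q ∈ l.1 → PMeets k V P m l) → Q ∈ m.1) := by
  constructor
  · intro a b ha hb
    exact ⟨Q, ha, hb⟩
  · intro m hm
    obtain ⟨p, v, hv, hs⟩ := m.2
    by_contra hQ
    obtain ⟨x, hx1, hx2⟩ := hm ⟨{q | ∃ t : k, q = t • v +ᵥ Q}, Q, v, hv, rfl⟩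
      ⟨0, by simp⟩
    rw [hs] at hx1
    obtain ⟨s, rfl⟩ := hx1
    obtain ⟨t, ht⟩ := hx2
    apply hQ
    rw [hs]
    refine ⟨s - t, ?_⟩
    have h : Q = -(t • v) +ᵥ (t • v +ᵥ Q) := by simp
    rw [h, ← ht, vadd_vadd, sub_smul]
    abel_nf
end

section
/- Let A be an affine space of dimension ≥ 2. If S is a set of mutually intersecting lines (any two lines of S meet) that do not all pass through one common point, then all lines of S lie in a common plane. -/
variable (k V P : Type*) [DivisionRing k] [AddCommGroup V] [Module k V] [AddTorsor V P]

/-- A subset of the affine space `P` is a plane iff it is of the form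
`{t • v + u • w +ᵥ p | t u : k}` with `v, w` linearly independent. -/
def IsPPlane (s : Set P) : Prop :=
  ∃ (p : P) (v w : V), LinearIndependent k ![v, w] ∧
    s = {q | ∃ t u : k, q = (t • v + u • w) +ᵥ p}

variable {k V P}

/-- A line through two distinct points has the canonical two-point parametrization. -/
lemma line_two_point {s : Set P} (hs : IsPLine k V P s) {x z : P}
    (hx : x ∈ s) (hz : z ∈ s) (hxz : x ≠ z) :
    s = {q | ∃ c : k, q = c • (z -ᵥ x) +ᵥ x} := by
  obtain ⟨p, v, hv, rfl⟩ := hs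
  obtain ⟨tx, rfl⟩ := hx
  obtain ⟨tz, rfl⟩ := hz
  have hzx : (tz • v +ᵥ p) -ᵥ (tx • v +ᵥ p) = (tz - tx) • v := by
    rw [vadd_vsub_vadd_cancel_right, ← sub_smul]
  have htt : tz - tx ≠ 0 := by
    intro h
    exact hxz (by rw [sub_eq_zero] at h; rw [h])
  ext q
  simp only [Set.mem_setOf_eq]
  constructor
  · rintro ⟨t, rfl⟩
    refine ⟨(t - tx) * (tz - tx)⁻¹, ?_⟩
    rw [hzx, smul_smul, mul_assoc, inv_mul_cancel₀ htt, mul_one, vadd_vadd, ← add_smul,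
      sub_add_cancel]
  · rintro ⟨c, rfl⟩
    exact ⟨c * (tz - tx) + tx, by rw [hzx, smul_smul, vadd_vadd, ← add_smul]⟩

/-- Two lines sharing two distinct points are equal. -/
lemma line_unique {a b : Set P} (ha : IsPLine k V P a) (hb : IsPLine k V P b) {x z : P}
    (hxa : x ∈ a) (hza : z ∈ a) (hxb : x ∈ b) (hzb : z ∈ b) (hxz : x ≠ z) : a = b := by
  rw [line_two_point ha hxa hza hxz, line_two_point hb hxb hzb hxz]

variable (k V P)

/-- In an affine space of dimension at least `2`, a set of mutually meeting lines that do
not all pass through one common point lies in a common plane. -/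
theorem stmt7 (hdim : 2 ≤ Module.rank k V)
    (S : Set (PLine k V P))
    (hSmeet : ∀ s ∈ S, ∀ t ∈ S, PMeets k V P s t)
    (hnoQ : ¬ ∃ Q : P, ∀ s ∈ S, Q ∈ s.1) :
    ∃ E : Set P, IsPPlane k V P E ∧ ∀ s ∈ S, s.1 ⊆ E := by
  push_neg at hnoQ
  -- Step A: there exist two set-distinct lines in S
  have hA : ∃ a ∈ S, ∃ b ∈ S, a.1 ≠ b.1 := by
    by_contra h
    push_neg at h
    rcases S.eq_empty_or_nonempty with hS | ⟨a, haS⟩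
    · obtain ⟨s, hsS, -⟩ := hnoQ (Classical.arbitrary P)
      rw [hS] at hsS; exact hsS
    · obtain ⟨p0, v0, hv0, hset⟩ := a.2
      obtain ⟨s, hsS, hQs⟩ := hnoQ (p0 : P)
      apply hQs
      rw [← h a haS s hsS, hset]
      exact ⟨0, by simp⟩
  obtain ⟨a, haS, b, hbS, hab⟩ := hA
  -- the intersection point of a and b
  obtain ⟨p, hpa, hpb⟩ := hSmeet a haS b hbS
  -- a line c not through p
  obtain ⟨c, hcS, hpc⟩ := hnoQ p
  obtain ⟨q, hqa, hqc⟩ := hSmeet a haS c hcS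
  obtain ⟨r, hrb, hrc⟩ := hSmeet b hbS c hcS
  have hqp : q ≠ p := fun h => hpc (h ▸ hqc)
  have hrp : r ≠ p := fun h => hpc (h ▸ hrc)
  have hqr : q ≠ r := by
    intro h
    exact hab (line_unique a.2 b.2 hpa hqa hpb (by rw [h]; exact hrb) (Ne.symm hqp))
  set v : V := q -ᵥ p with hv
  set w : V := r -ᵥ p with hw
  -- the lines a, b, c in two-point form
  have haeq : a.1 = {x | ∃ t : k, x = t • v +ᵥ p} := line_two_point a.2 hpa hqa (Ne.symm hqp)
  have hbeq : b.1 = {x | ∃ t : k, x = t • w +ᵥ p} := line_two_point b.2 hpb hrb (Ne.symm hrp)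
  -- linear independence of v, w
  have hli : LinearIndependent k ![v, w] := by
    rw [linearIndependent_fin2]
    constructor
    · simp only [Matrix.cons_val_one, Matrix.head_cons, Matrix.cons_val_zero, hw]
      exact fun h => hrp (by rwa [vsub_eq_zero_iff_eq] at h)
    · intro t ht
      simp only [Matrix.cons_val_one, Matrix.head_cons, Matrix.cons_val_zero] at ht
      -- then q ∈ b, so a = b
      have hqb : q ∈ b.1 := by
        rw [hbeq]
        exact ⟨t, by rw [ht, hv, vsub_vadd]⟩
      exact hab (line_unique a.2 b.2 hpa hqa hpb hqb (Ne.symm hqp))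
  -- the plane
  set E : Set P := {x | ∃ t u : k, x = (t • v + u • w) +ᵥ p} with hE
  have hpE : p ∈ E := ⟨0, 0, by simp⟩
  have hqE : q ∈ E := ⟨1, 0, by simp [hv]⟩
  have hrE : r ∈ E := ⟨0, 1, by simp [hw]⟩
  -- any line with two distinct points in E lies in E
  have key : ∀ s : Set P, IsPLine k V P s → ∀ x ∈ s, ∀ z ∈ s, x ≠ z → x ∈ E → z ∈ E → s ⊆ E := by
    intro s hs x hx z hz hxz hxE hzE
    rw [line_two_point hs hx hz hxz]
    rintro y ⟨d, rfl⟩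
    obtain ⟨t1, u1, rfl⟩ := hxE
    obtain ⟨t2, u2, rfl⟩ := hzE
    refine ⟨d * (t2 - t1) + t1, d * (u2 - u1) + u1, ?_⟩
    rw [vadd_vsub_vadd_cancel_right, vadd_vadd]
    congr 1
    rw [add_sub_add_comm, ← sub_smul, ← sub_smul, smul_add, smul_smul, smul_smul,
      add_smul, add_smul]
    abel
  have haE : a.1 ⊆ E := key a.1 a.2 p hpa q hqa (Ne.symm hqp) hpE hqE
  have hbE : b.1 ⊆ E := key b.1 b.2 p hpb r hrb (Ne.symm hrp) hpE hrE
  have hcE : c.1 ⊆ E := key c.1 c.2 q hqc r hrc hqr hqE hrE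
  refine ⟨E, ⟨p, v, w, hli, rfl⟩, ?_⟩
  intro s hsS
  obtain ⟨x, hxs, hxa⟩ := hSmeet s hsS a haS
  obtain ⟨y, hys, hyb⟩ := hSmeet s hsS b hbS
  obtain ⟨z, hzs, hzc⟩ := hSmeet s hsS c hcS
  by_cases hxz : x = z
  · by_cases hxy : x = y
    · -- x ∈ a ∩ b and x ∈ c; then x = p, contradiction with p ∉ c
      exfalso
      have hxp : x ≠ p := fun h => hpc (h ▸ hxz ▸ hzc)
      exact hab (line_unique a.2 b.2 hxa hpa (by rw [hxy]; exact hyb) hpb hxp)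
    · exact key s.1 s.2 x hxs y hys hxy (haE hxa) (hbE hyb)
  · exact key s.1 s.2 x hxs z hzs hxz (haE hxa) (hcE hzc)
end

section
/- Let A, A' be affine spaces with dim A' ≥ 3, and let φ be an isomorphism of the Plücker space of lines of A (related = meeting) onto that of A'. Then for every point Q of A, the image φ(L(Q)) of the star of lines through Q is contained in a star of lines of A'. -/
variable (k V P : Type*) [DivisionRing k] [AddCommGroup V] [Module k V] [AddTorsor V P]

variable (k' V' P' : Type*) [DivisionRing k'] [AddCommGroup V'] [Module k' V'] [AddTorsor V' P']

/-! ### Auxiliary material -/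

/-- The line through `p` with direction `v`. -/
def lineSet (F : Type*) {M X : Type*} [DivisionRing F] [AddCommGroup M] [Module F M]
    [AddTorsor M X] (p : X) (v : M) : Set X :=
  {q | ∃ t : F, q = t • v +ᵥ p}

section Aux

variable {F M X : Type*} [DivisionRing F] [AddCommGroup M] [Module F M] [AddTorsor M X]

lemma mem_lineSet_self (p : X) (v : M) : p ∈ lineSet F p v :=
  ⟨0, by rw [zero_smul, zero_vadd]⟩

lemma isPLine_lineSet {v : M} (hv : v ≠ 0) (p : X) : IsPLine F M X (lineSet F p v) :=
  ⟨p, v, hv, rfl⟩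

lemma smul_cancel {a : F} {x : M} (h : a • x = 0) (ha : a ≠ 0) : x = 0 := by
  have := congrArg (fun y => a⁻¹ • y) h
  simpa [smul_smul, inv_mul_cancel₀ ha] using this

lemma lineSet_rebase {p q : X} {v : M} (h : q ∈ lineSet F p v) :
    lineSet F q v = lineSet F p v := by
  obtain ⟨s, rfl⟩ := h
  ext r
  constructor
  · rintro ⟨t, rfl⟩
    exact ⟨t + s, by rw [vadd_vadd, add_smul]⟩
  · rintro ⟨t, rfl⟩
    exact ⟨t - s, by rw [vadd_vadd, ← add_smul, sub_add_cancel]⟩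

lemma lineSet_rescale {t : F} (ht : t ≠ 0) (p : X) (v : M) :
    lineSet F p (t • v) = lineSet F p v := by
  ext r
  constructor
  · rintro ⟨s, rfl⟩
    exact ⟨s * t, by rw [mul_smul]⟩
  · rintro ⟨s, rfl⟩
    exact ⟨s * t⁻¹, by rw [smul_smul, mul_assoc, inv_mul_cancel₀ ht, mul_one]⟩

lemma lineSet_two_point {p x y : X} {v : M} (hx : x ∈ lineSet F p v) (hy : y ∈ lineSet F p v)
    (hxy : x ≠ y) : lineSet F p v = lineSet F x (y -ᵥ x) := by
  obtain ⟨s, rfl⟩ := hx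
  obtain ⟨t, rfl⟩ := hy
  have hyx : (t • v +ᵥ p) -ᵥ (s • v +ᵥ p) = (t - s) • v := by
    rw [vadd_vsub_vadd_cancel_right, sub_smul]
  have hts : t - s ≠ 0 := by
    intro h
    exact hxy (by rw [sub_eq_zero] at h; rw [h])
  rw [hyx, lineSet_rescale hts, lineSet_rebase (⟨s, rfl⟩ : s • v +ᵥ p ∈ lineSet F p v)]

/-- A line through a given point `q` is of the form `lineSet F q v`. -/
lemma PLine.rep_of_mem (l : PLine F M X) {q : X} (hq : q ∈ l.1) :
    ∃ v : M, v ≠ 0 ∧ l.1 = lineSet F q v := by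
  obtain ⟨p, v, hv, hl⟩ := l.2
  have hl' : l.1 = lineSet F p v := hl
  refine ⟨v, hv, ?_⟩
  rw [hl', ← lineSet_rebase (show q ∈ lineSet F p v from hl' ▸ hq)]

/-- Two distinct points determine a line. -/
lemma PLine.eq_of_two_mem {l m : PLine F M X} {x y : X}
    (hxl : x ∈ l.1) (hyl : y ∈ l.1) (hxm : x ∈ m.1) (hym : y ∈ m.1) (hxy : x ≠ y) : l = m := by
  obtain ⟨p, v, hv, hl⟩ := l.2
  obtain ⟨p', v', hv', hm⟩ := m.2
  have hl' : l.1 = lineSet F p v := hl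
  have hm' : m.1 = lineSet F p' v' := hm
  apply Subtype.ext
  rw [hl', hm']
  exact (lineSet_two_point (hl' ▸ hxl) (hl' ▸ hyl) hxy).trans
    (lineSet_two_point (hm' ▸ hxm) (hm' ▸ hym) hxy).symm

lemma PLine.carrier_eq_of_two_mem {l : PLine F M X} {x y : X}
    (hxl : x ∈ l.1) (hyl : y ∈ l.1) (hxy : x ≠ y) : l.1 = lineSet F x (y -ᵥ x) := by
  obtain ⟨p, v, hv, hl⟩ := l.2
  have hl' : l.1 = lineSet F p v := hl
  rw [hl', lineSet_two_point (hl' ▸ hxl) (hl' ▸ hyl) hxy]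

lemma lineSet_dir {q : X} {u v : M} (h : lineSet F q u = lineSet F q v) : ∃ t : F, u = t • v := by
  have : u +ᵥ q ∈ lineSet F q v := h ▸ ⟨1, by rw [one_smul]⟩
  obtain ⟨t, ht⟩ := this
  exact ⟨t, vadd_right_cancel q ht⟩

/-- A line meeting three lines through `Q` with independent directions passes through `Q`. -/
lemma mem_of_meets_three {u v w : M} {Q : X}
    (hI : ∀ s t r : F, s • u + t • v + r • w = 0 → s = 0 ∧ t = 0 ∧ r = 0)
    (d : PLine F M X)
    (hdu : (d.1 ∩ lineSet F Q u).Nonempty)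
    (hdv : (d.1 ∩ lineSet F Q v).Nonempty)
    (hdw : (d.1 ∩ lineSet F Q w).Nonempty) : Q ∈ d.1 := by
  obtain ⟨x, hxd, s, hx⟩ := hdu
  obtain ⟨y, hyd, t, hy⟩ := hdv
  obtain ⟨z, hzd, r, hz⟩ := hdw
  subst hx; subst hy; subst hz
  by_cases hxy : s • u +ᵥ Q = t • v +ᵥ Q
  · have h0 : s • u + (-t) • v + (0 : F) • w = 0 := by
      have := vadd_right_cancel Q hxy
      rw [neg_smul, zero_smul, add_zero, this]
      abel
    have hs := (hI s (-t) 0 h0).1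
    rw [hs, zero_smul, zero_vadd] at hxd
    exact hxd
  · have hd2 : d.1 = lineSet F (s • u +ᵥ Q) ((t • v +ᵥ Q) -ᵥ (s • u +ᵥ Q)) :=
      PLine.carrier_eq_of_two_mem hxd hyd hxy
    have hzd' := hzd
    rw [hd2] at hzd
    obtain ⟨c, hc⟩ := hzd
    rw [vadd_vsub_vadd_cancel_right, vadd_vadd] at hc
    have hc' : r • w = c • (t • v - s • u) + s • u := vadd_right_cancel Q hc
    rw [smul_sub, smul_smul, smul_smul] at hc'
    have h0 : (s - c * s) • u + (c * t) • v + (-r) • w = 0 := by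
      rw [sub_smul, neg_smul, hc']
      abel
    have hr := (hI _ _ _ h0).2.2
    rw [neg_eq_zero] at hr
    rw [hr, zero_smul, zero_vadd] at hzd'
    exact hzd'


lemma PLine.nonempty (l : PLine F M X) : l.1.Nonempty := by
  obtain ⟨p, v, hv, hl⟩ := l.2
  have hl' : l.1 = lineSet F p v := hl
  exact ⟨p, hl' ▸ mem_lineSet_self p v⟩

/-- In a planar affine space, two disjoint lines have proportional directions. -/
lemma dir_prop_of_disjoint {u v : M} (hplanar : ∀ x : M, x ∈ Submodule.span F ({u, v} : Set M))
    {l n : PLine F M X} (hln : ¬ PMeets F M X l n) {p q : X} {w₁ w₂ : M}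
    (hl : l.1 = lineSet F p w₁) (hn : n.1 = lineSet F q w₂) (hw₁ : w₁ ≠ 0) (hw₂ : w₂ ≠ 0) :
    ∃ t : F, w₂ = t • w₁ := by
  by_contra hprop
  push_neg at hprop
  obtain ⟨a₁, b₁, hw1⟩ := Submodule.mem_span_pair.1 (hplanar w₁)
  obtain ⟨a₂, b₂, hw2⟩ := Submodule.mem_span_pair.1 (hplanar w₂)
  set Sp := Submodule.span F ({w₁, w₂} : Set M) with hSp
  have hw₁S : w₁ ∈ Sp := Submodule.subset_span (Set.mem_insert _ _)
  have hw₂S : w₂ ∈ Sp := Submodule.subset_span (Set.mem_insert_of_mem _ rfl)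
  have hv : v ∈ Sp ∧ u ∈ Sp := by
    by_cases ha₁ : a₁ = 0
    · have hb₁ : b₁ ≠ 0 := by
        intro h
        exact hw₁ (by rw [← hw1, ha₁, h, zero_smul, zero_smul, add_zero])
      have hv' : v = b₁⁻¹ • w₁ := by
        rw [← hw1, ha₁, zero_smul, zero_add, smul_smul, inv_mul_cancel₀ hb₁, one_smul]
      have hvS : v ∈ Sp := by rw [hv']; exact Submodule.smul_mem _ _ hw₁S
      have ha₂ : a₂ ≠ 0 := by
        intro h
        exact hprop (b₂ * b₁⁻¹) (by rw [← hw2, h, zero_smul, zero_add, hv', smul_smul])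
      have hu' : u = a₂⁻¹ • (w₂ - b₂ • v) := by
        have h1 : w₂ - b₂ • v = a₂ • u := by rw [← hw2]; abel
        rw [h1, smul_smul, inv_mul_cancel₀ ha₂, one_smul]
      refine ⟨hvS, ?_⟩
      rw [hu']
      exact Submodule.smul_mem _ _ (Submodule.sub_mem _ hw₂S (Submodule.smul_mem _ _ hvS))
    · set β := b₂ - a₂ * a₁⁻¹ * b₁ with hβ
      have hcomb : w₂ - (a₂ * a₁⁻¹) • w₁ = β • v := by
        rw [← hw1, ← hw2, smul_add, smul_smul, smul_smul]
        have h1 : a₂ * a₁⁻¹ * a₁ = a₂ := by rw [mul_assoc, inv_mul_cancel₀ ha₁, mul_one]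
        rw [h1, hβ, sub_smul]
        abel
      have hβ0 : β ≠ 0 := by
        intro h
        apply hprop (a₂ * a₁⁻¹)
        have h2 := hcomb
        rw [h, zero_smul, sub_eq_zero] at h2
        exact h2
      have hvS : v ∈ Sp := by
        have h2 : v = β⁻¹ • (w₂ - (a₂ * a₁⁻¹) • w₁) := by
          rw [hcomb, smul_smul, inv_mul_cancel₀ hβ0, one_smul]
        rw [h2]
        exact Submodule.smul_mem _ _ (Submodule.sub_mem _ hw₂S (Submodule.smul_mem _ _ hw₁S))
      refine ⟨hvS, ?_⟩
      have hu' : u = a₁⁻¹ • (w₁ - b₁ • v) := by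
        have h1 : w₁ - b₁ • v = a₁ • u := by rw [← hw1]; abel
        rw [h1, smul_smul, inv_mul_cancel₀ ha₁, one_smul]
      rw [hu']
      exact Submodule.smul_mem _ _ (Submodule.sub_mem _ hw₁S (Submodule.smul_mem _ _ hvS))
  obtain ⟨hvS, huS⟩ := hv
  have hqp : q -ᵥ p ∈ Sp := by
    obtain ⟨γ, δ, hγδ⟩ := Submodule.mem_span_pair.1 (hplanar (q -ᵥ p))
    rw [← hγδ]
    exact Submodule.add_mem _ (Submodule.smul_mem _ _ huS) (Submodule.smul_mem _ _ hvS)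
  obtain ⟨s, t, hst⟩ := Submodule.mem_span_pair.1 hqp
  apply hln
  refine ⟨s • w₁ +ᵥ p, ?_, ?_⟩
  · rw [hl]; exact ⟨s, rfl⟩
  · rw [hn]
    refine ⟨-t, ?_⟩
    have hq : q = (s • w₁ + t • w₂) +ᵥ p := by rw [hst, vsub_vadd]
    rw [hq, vadd_vadd, neg_smul]
    congr 1
    abel

end Aux


section Aux2

variable {F M X : Type*} [DivisionRing F] [AddCommGroup M] [Module F M] [AddTorsor M X]

/-- If three pairwise distinct, pairwise meeting lines have the property that all their
common transversals pairwise meet, and there are four distinct common transversals, then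
there is a point lying on every common transversal. -/
lemma star_lemma {A B C : PLine F M X}
    (hAB : A ≠ B) (hBC : B ≠ C)
    (mAB : PMeets F M X A B) (mAC : PMeets F M X A C) (mBC : PMeets F M X B C)
    (hclique : ∀ d e : PLine F M X, PMeets F M X d A → PMeets F M X d B → PMeets F M X d C →
      PMeets F M X e A → PMeets F M X e B → PMeets F M X e C → PMeets F M X d e)
    (d₁ d₂ d₃ d₄ : PLine F M X)
    (h12 : d₁ ≠ d₂) (h13 : d₁ ≠ d₃) (h14 : d₁ ≠ d₄)
    (h23 : d₂ ≠ d₃) (h24 : d₂ ≠ d₄) (h34 : d₃ ≠ d₄)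
    (H1 : PMeets F M X d₁ A ∧ PMeets F M X d₁ B ∧ PMeets F M X d₁ C)
    (H2 : PMeets F M X d₂ A ∧ PMeets F M X d₂ B ∧ PMeets F M X d₂ C)
    (H3 : PMeets F M X d₃ A ∧ PMeets F M X d₃ B ∧ PMeets F M X d₃ C)
    (H4 : PMeets F M X d₄ A ∧ PMeets F M X d₄ B ∧ PMeets F M X d₄ C) :
    ∃ Y : X, ∀ d : PLine F M X,
      PMeets F M X d A → PMeets F M X d B → PMeets F M X d C → Y ∈ d.1 := by
  obtain ⟨Xp, hXA, hXB⟩ := mAB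
  by_cases hXC : Xp ∈ C.1
  · -- concurrent case
    refine ⟨Xp, fun d hdA hdB hdC => ?_⟩
    obtain ⟨p, z, hz, hd⟩ := d.2
    have hd' : d.1 = lineSet F p z := hd
    have hg : PMeets F M X d ⟨lineSet F Xp z, isPLine_lineSet hz Xp⟩ :=
      hclique d _ hdA hdB hdC ⟨Xp, mem_lineSet_self Xp z, hXA⟩
        ⟨Xp, mem_lineSet_self Xp z, hXB⟩ ⟨Xp, mem_lineSet_self Xp z, hXC⟩
    obtain ⟨r, hrd, t, hr⟩ := hg
    rw [hd'] at hrd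
    obtain ⟨s, hs⟩ := hrd
    have h1 : t • z +ᵥ Xp = s • z +ᵥ p := by rw [← hr, hs]
    have h2 : Xp = (-t) • z +ᵥ (t • z +ᵥ Xp) := by
      rw [vadd_vadd, neg_smul, neg_add_cancel, zero_vadd]
    have h3 : Xp = (s - t) • z +ᵥ p := by
      calc Xp = (-t) • z +ᵥ (t • z +ᵥ Xp) := h2
        _ = (-t) • z +ᵥ (s • z +ᵥ p) := by rw [h1]
        _ = (s - t) • z +ᵥ p := by rw [vadd_vadd, ← add_smul, neg_add_eq_sub]
    rw [hd']
    exact ⟨s - t, h3⟩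
  · -- triangle case: contradiction
    exfalso
    obtain ⟨Yp, hYA, hYC⟩ := mAC
    obtain ⟨Zp, hZB, hZC⟩ := mBC
    have hXY : Xp ≠ Yp := fun h => hXC (h ▸ hYC)
    have hXZ : Xp ≠ Zp := fun h => hXC (h ▸ hZC)
    have hYZ : Yp ≠ Zp := by
      intro h
      exact hAB (PLine.eq_of_two_mem hXA hYA hXB (h ▸ hZB) hXY)
    set u := Yp -ᵥ Xp with hu_def
    set v := Zp -ᵥ Xp with hv_def
    have hYp : Yp = u +ᵥ Xp := (vsub_vadd Yp Xp).symm
    have hZp : Zp = v +ᵥ Xp := (vsub_vadd Zp Xp).symm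
    have hA1 : A.1 = lineSet F Xp u := PLine.carrier_eq_of_two_mem hXA hYA hXY
    have hB1 : B.1 = lineSet F Xp v := PLine.carrier_eq_of_two_mem hXB hZB hXZ
    have hC1 : C.1 = lineSet F Yp (v - u) := by
      have h := PLine.carrier_eq_of_two_mem hYC hZC hYZ
      rwa [show Zp -ᵥ Yp = v - u from (vsub_sub_vsub_cancel_right Zp Yp Xp).symm] at h
    have hu0 : u ≠ 0 := vsub_ne_zero.2 (Ne.symm hXY)
    have hI2 : ∀ s t : F, s • u + t • v = 0 → s = 0 ∧ t = 0 := by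
      intro s t hst
      by_cases ht : t = 0
      · subst ht
        rw [zero_smul, add_zero] at hst
        refine ⟨?_, rfl⟩
        by_contra hs
        exact hu0 (smul_cancel hst hs)
      · exfalso
        have hv' : v = (-(t⁻¹ * s)) • u := by
          have hst' : t • v + s • u = 0 := by rw [add_comm]; exact hst
          have h1 : t • v = -(s • u) := eq_neg_of_add_eq_zero_left hst'
          have h2 : v = t⁻¹ • (t • v) := by
            rw [smul_smul, inv_mul_cancel₀ ht, one_smul]
          rw [h2, h1, smul_neg, smul_smul, ← neg_smul]
        have hZA : Zp ∈ A.1 := by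
          rw [hA1]
          exact ⟨-(t⁻¹ * s), by rw [← hv', hZp]⟩
        exact hAB (PLine.eq_of_two_mem hXA hZA hXB hZB hXZ)
    by_cases hmu : ∃ μ : F, μ ≠ 0 ∧ μ ≠ 1
    · obtain ⟨μ, hμ0, hμ1⟩ := hmu
      set w₀ : M := (1 - μ) • u + μ • v with hw₀def
      have hw₀ : w₀ ≠ 0 := by
        intro h
        have := (hI2 _ _ h).1
        rw [sub_eq_zero] at this
        exact hμ1 this.symm
      set T : PLine F M X := ⟨lineSet F Xp w₀, isPLine_lineSet hw₀ Xp⟩ with hT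
      set S : PLine F M X := ⟨lineSet F Yp w₀, isPLine_lineSet hw₀ Yp⟩ with hS
      have hTA : PMeets F M X T A := ⟨Xp, mem_lineSet_self Xp w₀, hXA⟩
      have hTB : PMeets F M X T B := ⟨Xp, mem_lineSet_self Xp w₀, hXB⟩
      have hTC : PMeets F M X T C := by
        refine ⟨w₀ +ᵥ Xp, ⟨1, by rw [one_smul]⟩, ?_⟩
        rw [hC1]
        refine ⟨μ, ?_⟩
        rw [hYp, vadd_vadd, smul_sub, hw₀def]
        congr 1
        rw [sub_smul, one_smul]
        abel
      have hSA : PMeets F M X S A := ⟨Yp, mem_lineSet_self Yp w₀, hYA⟩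
      have hSC : PMeets F M X S C := ⟨Yp, mem_lineSet_self Yp w₀, hYC⟩
      have h1μ : (1 : F) - μ ≠ 0 := fun h => hμ1 (by rwa [sub_eq_zero, eq_comm] at h)
      have hSB : PMeets F M X S B := by
        have hmemS : (-(1 - μ)⁻¹ * μ) • v +ᵥ Xp ∈ S.1 := by
          show _ ∈ lineSet F Yp w₀
          refine ⟨-(1 - μ)⁻¹, ?_⟩
          rw [hYp, vadd_vadd]
          have hexp : (-(1 - μ)⁻¹) • w₀ = -u + (-(1 - μ)⁻¹ * μ) • v := by
            rw [hw₀def, smul_add, smul_smul, smul_smul, neg_mul, inv_mul_cancel₀ h1μ,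
              neg_one_smul]
          rw [hexp]
          congr 1
          abel
        have hmemB : (-(1 - μ)⁻¹ * μ) • v +ᵥ Xp ∈ B.1 := by
          rw [hB1]; exact ⟨-(1 - μ)⁻¹ * μ, rfl⟩
        exact ⟨_, hmemS, hmemB⟩
      obtain ⟨r, ⟨t₁, hr1⟩, ⟨t₂, hr2⟩⟩ := hclique T S hTA hTB hTC hSA hSB hSC
      have hkey : (t₁ - t₂) • w₀ = u := by
        have h1 : t₁ • w₀ +ᵥ Xp = t₂ • w₀ +ᵥ (u +ᵥ Xp) := by
          rw [← hr1, hr2, hYp]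
        rw [vadd_vadd] at h1
        have h2 := vadd_right_cancel Xp h1
        rw [sub_smul, h2]
        abel
      have hzero : ((t₁ - t₂) * (1 - μ) - 1) • u + ((t₁ - t₂) * μ) • v = 0 := by
        have hexp : (t₁ - t₂) • w₀ = ((t₁ - t₂) * (1 - μ)) • u + ((t₁ - t₂) * μ) • v := by
          rw [hw₀def, smul_add, smul_smul, smul_smul]
        have h : ((t₁ - t₂) * (1 - μ)) • u + ((t₁ - t₂) * μ) • v = u := hexp.symm.trans hkey
        rw [sub_smul, one_smul]
        calc ((t₁ - t₂) * (1 - μ)) • u - u + ((t₁ - t₂) * μ) • v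
            = ((t₁ - t₂) * (1 - μ)) • u + ((t₁ - t₂) * μ) • v - u := by abel
          _ = u - u := by rw [h]
          _ = 0 := sub_self u
      have h2 := (hI2 _ _ hzero).2
      have hc0 : t₁ - t₂ = 0 := by
        have := mul_eq_zero.1 h2
        tauto
      have h1 := (hI2 _ _ hzero).1
      rw [hc0, zero_mul, zero_sub, neg_eq_zero] at h1
      exact one_ne_zero h1
    · push_neg at hmu
      have hbin : ∀ μ : F, μ = 0 ∨ μ = 1 := by
        intro μ
        by_cases h : μ = 0
        · exact Or.inl h
        · exact Or.inr (hmu μ h)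
      have hmem : ∀ d : PLine F M X, PMeets F M X d A → PMeets F M X d B → PMeets F M X d C →
          d = A ∨ d = B ∨ d = C := by
        intro d hdA hdB hdC
        obtain ⟨pa, hpad, hpaA⟩ := hdA
        obtain ⟨pb, hpbd, hpbB⟩ := hdB
        obtain ⟨pc, hpcd, hpcC⟩ := hdC
        have hpa : pa = Xp ∨ pa = Yp := by
          rw [hA1] at hpaA
          obtain ⟨t, ht⟩ := hpaA
          rcases hbin t with rfl | rfl
          · left; rw [ht, zero_smul, zero_vadd]
          · right; rw [ht, one_smul, ← hYp]
        have hpb : pb = Xp ∨ pb = Zp := by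
          rw [hB1] at hpbB
          obtain ⟨t, ht⟩ := hpbB
          rcases hbin t with rfl | rfl
          · left; rw [ht, zero_smul, zero_vadd]
          · right; rw [ht, one_smul, ← hZp]
        have hpc : pc = Yp ∨ pc = Zp := by
          rw [hC1] at hpcC
          obtain ⟨t, ht⟩ := hpcC
          rcases hbin t with rfl | rfl
          · left; rw [ht, zero_smul, zero_vadd]
          · right
            rw [ht, one_smul, hYp, vadd_vadd, hZp]
            congr 1
            abel
        rcases hpa with rfl | rfl
        · rcases hpc with rfl | rfl
          · exact Or.inl (PLine.eq_of_two_mem hpad hpcd hXA hYA hXY)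
          · exact Or.inr (Or.inl (PLine.eq_of_two_mem hpad hpcd hXB hZB hXZ))
        · rcases hpb with rfl | rfl
          · exact Or.inl (PLine.eq_of_two_mem hpbd hpad hXA hYA hXY)
          · exact Or.inr (Or.inr (PLine.eq_of_two_mem hpad hpbd hYC hZC hYZ))
      have e1 := hmem d₁ H1.1 H1.2.1 H1.2.2
      have e2 := hmem d₂ H2.1 H2.2.1 H2.2.2
      have e3 := hmem d₃ H3.1 H3.2.1 H3.2.2
      have e4 := hmem d₄ H4.1 H4.2.1 H4.2.2
      rcases e1 with rfl | rfl | rfl <;> rcases e2 with rfl | rfl | rfl <;>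
        rcases e3 with rfl | rfl | rfl <;> rcases e4 with rfl | rfl | rfl <;>
        first
          | exact h12 rfl | exact h13 rfl | exact h14 rfl
          | exact h23 rfl | exact h24 rfl | exact h34 rfl

end Aux2

/-- For an isomorphism `φ` of affine Plücker spaces with `dim A' ≥ 3`, the image of any
star of lines is contained in a star of lines. -/
theorem stmt8 (hdim' : 3 ≤ Module.rank k' V')
    (φ : PLine k V P ≃ PLine k' V' P')
    (hiso : ∀ a b : PLine k V P, PMeets k V P a b ↔ PMeets k' V' P' (φ a) (φ b))
    (Q : P) :
    ∃ Q' : P', ∀ l : PLine k V P, Q ∈ l.1 → Q' ∈ (φ l).1 := by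
  classical
  by_cases hex : ∃ l : PLine k V P, Q ∈ l.1
  · obtain ⟨a, haQ⟩ := hex
    by_cases hall : ∀ l : PLine k V P, Q ∈ l.1 → φ l = φ a
    · obtain ⟨p, v, hv, hrep⟩ := (φ a).2
      have hrep' : (φ a).1 = lineSet k' p v := hrep
      refine ⟨p, fun l hl => ?_⟩
      rw [hall l hl, hrep']
      exact mem_lineSet_self p v
    · push_neg at hall
      obtain ⟨b, hbQ, hba⟩ := hall
      obtain ⟨u, hu0, ha1⟩ := PLine.rep_of_mem a haQ
      obtain ⟨v, hv0, hb1⟩ := PLine.rep_of_mem b hbQ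
      have hab : a ≠ b := fun h => hba (by rw [h])
      have hsym : ∀ x' y' : PLine k' V' P',
          PMeets k V P (φ.symm x') (φ.symm y') ↔ PMeets k' V' P' x' y' := by
        intro x' y'
        constructor
        · intro h
          have h2 := (hiso _ _).1 h
          rwa [Equiv.apply_symm_apply, Equiv.apply_symm_apply] at h2
        · intro h
          exact (hiso _ _).2 (by rwa [Equiv.apply_symm_apply, Equiv.apply_symm_apply])
      have hprop_uv : ∀ t : k, v ≠ t • u := by
        intro t h
        apply hab
        apply Subtype.ext
        have ht : t ≠ 0 := by
          intro h0
          rw [h0, zero_smul] at h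
          exact hv0 h
        rw [ha1, hb1, h, lineSet_rescale ht]
      have hI2 : ∀ s t : k, s • u + t • v = 0 → s = 0 ∧ t = 0 := by
        intro s t h
        by_cases ht : t = 0
        · subst ht
          rw [zero_smul, add_zero] at h
          refine ⟨?_, rfl⟩
          by_contra hs
          exact hu0 (smul_cancel h hs)
        · exfalso
          apply hprop_uv (-(t⁻¹ * s))
          have h1 : t • v + s • u = 0 := by rw [add_comm]; exact h
          have h2 : t • v = -(s • u) := eq_neg_of_add_eq_zero_left h1
          calc v = t⁻¹ • (t • v) := by rw [smul_smul, inv_mul_cancel₀ ht, one_smul]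
            _ = t⁻¹ • (-(s • u)) := by rw [h2]
            _ = (-(t⁻¹ * s)) • u := by rw [smul_neg, smul_smul, ← neg_smul]
      by_cases hspan : ∀ x : V, x ∈ Submodule.span k ({u, v} : Set V)
      · -- the source space is a plane: contradiction with dim A' ≥ 3
        exfalso
        have h3 : ((3 : ℕ) : Cardinal) ≤ Module.rank k' V' := by exact_mod_cast hdim'
        obtain ⟨f, hf⟩ := exists_linearIndependent_of_le_rank h3
        have hI3' : ∀ s t r : k', s • f 0 + t • f 1 + r • f 2 = 0 →
            s = 0 ∧ t = 0 ∧ r = 0 := by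
          intro s t r h
          have h0 : ∀ i, ![s, t, r] i = 0 :=
            Fintype.linearIndependent_iff.1 hf ![s, t, r]
              (by rw [Fin.sum_univ_three]; simpa using h)
          exact ⟨by simpa using h0 0, by simpa using h0 1, by simpa using h0 2⟩
        have hu'0 : f 0 ≠ 0 := hf.ne_zero 0
        have hv'0 : f 1 ≠ 0 := hf.ne_zero 1
        obtain O : P' := Classical.arbitrary P'
        let l' : PLine k' V' P' := ⟨lineSet k' O (f 0), isPLine_lineSet hu'0 O⟩
        let m' : PLine k' V' P' := ⟨lineSet k' O (f 1), isPLine_lineSet hv'0 O⟩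
        let n' : PLine k' V' P' := ⟨lineSet k' (f 2 +ᵥ O) (f 0), isPLine_lineSet hu'0 _⟩
        have hl'1 : l'.1 = lineSet k' O (f 0) := rfl
        have hm'1 : m'.1 = lineSet k' O (f 1) := rfl
        have hn'1 : n'.1 = lineSet k' (f 2 +ᵥ O) (f 0) := rfl
        have hlm : PMeets k' V' P' l' m' :=
          ⟨O, mem_lineSet_self O (f 0), mem_lineSet_self O (f 1)⟩
        have hln : ¬ PMeets k' V' P' l' n' := by
          rintro ⟨x, ⟨t, rfl⟩, s, hs⟩
          rw [vadd_vadd] at hs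
          have h1 := vadd_right_cancel O hs
          have h0 : (t - s) • f 0 + (0 : k') • f 1 + (-1 : k') • f 2 = 0 := by
            rw [sub_smul, zero_smul, add_zero, neg_one_smul, h1]
            abel
          exact one_ne_zero (neg_eq_zero.1 (hI3' _ _ _ h0).2.2)
        have hmn : ¬ PMeets k' V' P' m' n' := by
          rintro ⟨x, ⟨t, rfl⟩, s, hs⟩
          rw [vadd_vadd] at hs
          have h1 := vadd_right_cancel O hs
          have h0 : (-s) • f 0 + t • f 1 + (-1 : k') • f 2 = 0 := by
            rw [neg_smul, neg_one_smul, h1]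
            abel
          exact one_ne_zero (neg_eq_zero.1 (hI3' _ _ _ h0).2.2)
        have hl'm' : l' ≠ m' := by
          intro h
          have h2 : lineSet k' O (f 0) = lineSet k' O (f 1) := by
            rw [← hl'1, h]
          obtain ⟨t, ht⟩ := lineSet_dir h2
          have h0 : (-1 : k') • f 0 + t • f 1 + (0 : k') • f 2 = 0 := by
            rw [neg_one_smul, zero_smul, add_zero, ← ht]
            abel
          exact one_ne_zero (neg_eq_zero.1 (hI3' _ _ _ h0).1)
        have hl'n' : l' ≠ n' := by
          intro h
          exact hln ⟨O, mem_lineSet_self O (f 0), by rw [← h]; exact mem_lineSet_self O (f 0)⟩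
        have hm'n' : m' ≠ n' := by
          intro h
          exact hmn ⟨O, mem_lineSet_self O (f 1), by rw [← h]; exact mem_lineSet_self O (f 1)⟩
        -- pull everything back
        have hlmm : PMeets k V P (φ.symm l') (φ.symm m') := (hsym l' m').2 hlm
        have hlnn : ¬ PMeets k V P (φ.symm l') (φ.symm n') := fun h => hln ((hsym l' n').1 h)
        have hmnn : ¬ PMeets k V P (φ.symm m') (φ.symm n') := fun h => hmn ((hsym m' n').1 h)
        have hlm_ne : φ.symm l' ≠ φ.symm m' := fun h => hl'm' (φ.symm.injective h)
        obtain ⟨pl, wl, hwl0, hlrep⟩ := (φ.symm l').2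
        obtain ⟨pm, wm, hwm0, hmrep⟩ := (φ.symm m').2
        obtain ⟨pn, wn, hwn0, hnrep⟩ := (φ.symm n').2
        have hlrep' : (φ.symm l').1 = lineSet k pl wl := hlrep
        have hmrep' : (φ.symm m').1 = lineSet k pm wm := hmrep
        have hnrep' : (φ.symm n').1 = lineSet k pn wn := hnrep
        obtain ⟨t₁, ht₁⟩ := dir_prop_of_disjoint hspan hlnn hlrep' hnrep' hwl0 hwn0
        obtain ⟨t₂, ht₂⟩ := dir_prop_of_disjoint hspan hmnn hmrep' hnrep' hwm0 hwn0
        have ht₂0 : t₂ ≠ 0 := by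
          intro h
          rw [h, zero_smul] at ht₂
          exact hwn0 ht₂
        have hwm : wm = (t₂⁻¹ * t₁) • wl := by
          have h1 : t₂ • wm = t₁ • wl := by rw [← ht₁, ← ht₂]
          calc wm = t₂⁻¹ • (t₂ • wm) := by rw [smul_smul, inv_mul_cancel₀ ht₂0, one_smul]
            _ = t₂⁻¹ • (t₁ • wl) := by rw [h1]
            _ = (t₂⁻¹ * t₁) • wl := by rw [smul_smul]
        have ht₁0 : t₁ ≠ 0 := by
          intro h
          rw [h, zero_smul] at ht₁
          exact hwn0 ht₁
        have hcoef : t₂⁻¹ * t₁ ≠ 0 := by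
          intro h
          rcases mul_eq_zero.1 h with h' | h'
          · exact ht₂0 (by rwa [inv_eq_zero] at h')
          · exact ht₁0 h'
        obtain ⟨x, hxl, hxm⟩ := hlmm
        apply hlm_ne
        apply Subtype.ext
        have hxl' : x ∈ lineSet k pl wl := hlrep' ▸ hxl
        have hxm' : x ∈ lineSet k pm wm := hmrep' ▸ hxm
        rw [hlrep', hmrep', ← lineSet_rebase hxl', ← lineSet_rebase hxm', hwm,
          lineSet_rescale hcoef]
      · -- main case
        push_neg at hspan
        obtain ⟨w, hw⟩ := hspan
        have hw0 : w ≠ 0 := fun h => hw (h ▸ Submodule.zero_mem _)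
        have hI3 : ∀ s t r : k, s • u + t • v + r • w = 0 → s = 0 ∧ t = 0 ∧ r = 0 := by
          intro s t r h
          by_cases hr : r = 0
          · subst hr
            rw [zero_smul, add_zero] at h
            obtain ⟨hs, ht⟩ := hI2 s t h
            exact ⟨hs, ht, rfl⟩
          · exfalso
            apply hw
            have h1 : r • w = -(s • u + t • v) :=
              eq_neg_of_add_eq_zero_left (by rw [add_comm]; exact h)
            have h2 : w = (-(r⁻¹ * s)) • u + (-(r⁻¹ * t)) • v := by
              calc w = r⁻¹ • (r • w) := by rw [smul_smul, inv_mul_cancel₀ hr, one_smul]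
                _ = r⁻¹ • (-(s • u + t • v)) := by rw [h1]
                _ = _ := by
                    rw [smul_neg, smul_add, smul_smul, smul_smul, neg_add, ← neg_smul, ← neg_smul]
            rw [h2]
            exact Submodule.add_mem _
              (Submodule.smul_mem _ _ (Submodule.subset_span (Set.mem_insert _ _)))
              (Submodule.smul_mem _ _ (Submodule.subset_span (Set.mem_insert_of_mem _ rfl)))
        have huv0 : u + v ≠ 0 := by
          intro h
          exact one_ne_zero (hI2 1 1 (by rw [one_smul, one_smul]; exact h)).1
        let e : PLine k V P := ⟨lineSet k Q w, isPLine_lineSet hw0 Q⟩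
        let f4 : PLine k V P := ⟨lineSet k Q (u + v), isPLine_lineSet huv0 Q⟩
        have he1 : e.1 = lineSet k Q w := rfl
        have hf1 : f4.1 = lineSet k Q (u + v) := rfl
        have hQe : Q ∈ e.1 := mem_lineSet_self Q w
        have hQf : Q ∈ f4.1 := mem_lineSet_self Q (u + v)
        have hdir : ∀ {x y : V}, (∀ s t : k, s • x + t • y = 0 → s = 0 ∧ t = 0) →
            lineSet k Q x ≠ lineSet k Q y := by
          intro x y hxy h
          obtain ⟨t, ht⟩ := lineSet_dir h
          refine one_ne_zero (hxy 1 (-t) ?_).1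
          rw [one_smul, neg_smul, ht]
          abel
        have hIuw : ∀ s t : k, s • u + t • w = 0 → s = 0 ∧ t = 0 := by
          intro s t h
          have h3 := hI3 s 0 t (by rw [zero_smul, add_zero]; exact h)
          exact ⟨h3.1, h3.2.2⟩
        have hIvw : ∀ s t : k, s • v + t • w = 0 → s = 0 ∧ t = 0 := by
          intro s t h
          have h3 := hI3 0 s t (by rw [zero_smul, zero_add]; exact h)
          exact ⟨h3.2.1, h3.2.2⟩
        have hIfu : ∀ s t : k, s • (u + v) + t • u = 0 → s = 0 ∧ t = 0 := by
          intro s t h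
          rw [smul_add] at h
          have hexp : (s + t) • u + s • v = 0 := by
            rw [add_smul]
            calc s • u + t • u + s • v = s • u + s • v + t • u := by abel
              _ = 0 := h
          obtain ⟨hst, hs⟩ := hI2 _ _ hexp
          refine ⟨hs, ?_⟩
          rwa [hs, zero_add] at hst
        have hIfv : ∀ s t : k, s • (u + v) + t • v = 0 → s = 0 ∧ t = 0 := by
          intro s t h
          rw [smul_add] at h
          have hexp : s • u + (s + t) • v = 0 := by
            rw [add_smul]
            calc s • u + (s • v + t • v) = s • u + s • v + t • v := by abel
              _ = 0 := h
          obtain ⟨hs, hst⟩ := hI2 _ _ hexp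
          refine ⟨hs, ?_⟩
          rwa [hs, zero_add] at hst
        have hIfw : ∀ s t : k, s • (u + v) + t • w = 0 → s = 0 ∧ t = 0 := by
          intro s t h
          rw [smul_add] at h
          have h3 := hI3 s s t h
          exact ⟨h3.1, h3.2.2⟩
        have hae : a ≠ e := fun h => hdir hIuw (by rw [← ha1, h, he1])
        have hbe : b ≠ e := fun h => hdir hIvw (by rw [← hb1, h, he1])
        have hfa : f4 ≠ a := fun h => hdir hIfu (by rw [← hf1, h, ha1])
        have hfb : f4 ≠ b := fun h => hdir hIfv (by rw [← hf1, h, hb1])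
        have hfe : f4 ≠ e := fun h => hdir hIfw (by rw [← hf1, h, he1])
        -- the images of all lines through Q meet φ a, φ b, φ e; transversal sets coincide
        have hmeet : ∀ (x y : PLine k V P), Q ∈ x.1 → Q ∈ y.1 →
            PMeets k' V' P' (φ x) (φ y) := fun x y hx hy => (hiso x y).1 ⟨Q, hx, hy⟩
        have hclique : ∀ d g : PLine k' V' P',
            PMeets k' V' P' d (φ a) → PMeets k' V' P' d (φ b) → PMeets k' V' P' d (φ e) →
            PMeets k' V' P' g (φ a) → PMeets k' V' P' g (φ b) → PMeets k' V' P' g (φ e) →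
            PMeets k' V' P' d g := by
          intro d g hda hdb hde hga hgb hge
          have hback : ∀ (d' : PLine k' V' P'),
              PMeets k' V' P' d' (φ a) → PMeets k' V' P' d' (φ b) → PMeets k' V' P' d' (φ e) →
              Q ∈ (φ.symm d').1 := by
            intro d' h1 h2 h3
            have m1 : PMeets k V P (φ.symm d') a :=
              (hiso _ a).2 (by rwa [Equiv.apply_symm_apply])
            have m2 : PMeets k V P (φ.symm d') b :=
              (hiso _ b).2 (by rwa [Equiv.apply_symm_apply])
            have m3 : PMeets k V P (φ.symm d') e :=
              (hiso _ e).2 (by rwa [Equiv.apply_symm_apply])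
            apply mem_of_meets_three hI3 (φ.symm d')
            · rw [← ha1]; exact m1
            · rw [← hb1]; exact m2
            · rw [← he1]; exact m3
          have hQd := hback d hda hdb hde
          have hQg := hback g hga hgb hge
          exact (hsym d g).1 ⟨Q, hQd, hQg⟩
        obtain ⟨Y, hY⟩ := star_lemma
          (φ.injective.ne hab) (φ.injective.ne hbe)
          (hmeet a b haQ hbQ) (hmeet a e haQ hQe) (hmeet b e hbQ hQe)
          hclique
          (φ a) (φ b) (φ e) (φ f4)
          (φ.injective.ne hab) (φ.injective.ne hae) (φ.injective.ne hfa.symm)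
          (φ.injective.ne hbe) (φ.injective.ne hfb.symm) (φ.injective.ne hfe.symm)
          ⟨hmeet a a haQ haQ, hmeet a b haQ hbQ, hmeet a e haQ hQe⟩
          ⟨hmeet b a hbQ haQ, hmeet b b hbQ hbQ, hmeet b e hbQ hQe⟩
          ⟨hmeet e a hQe haQ, hmeet e b hQe hbQ, hmeet e e hQe hQe⟩
          ⟨hmeet f4 a hQf haQ, hmeet f4 b hQf hbQ, hmeet f4 e hQf hQe⟩
        refine ⟨Y, fun l hl => ?_⟩
        exact hY (φ l) (hmeet l a hl haQ) (hmeet l b hl hbQ) (hmeet l e hl hQe)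
  · exact ⟨Classical.arbitrary P', fun l hl => absurd ⟨l, hl⟩ hex⟩
end

section
/- Let A, A' be affine spaces with dim A' ≥ 3 and let φ : L → L' be an isomorphism of the affine Plücker spaces (lines related iff they meet). Then the map κ sending the point a ∩ b (for adjacent lines a ≈ b) to the point a^φ ∩ b^φ is a well-defined bijection of the point sets that preserves collinearity and non-collinearity, i.e., a collineation. Hence every isomorphism of affine Plücker spaces with dim ≥ 3 target is induced by a collineation. -/
variable (k V P : Type*) [DivisionRing k] [AddCommGroup V] [Module k V] [AddTorsor V P]

namespace Stmt9Aux

variable {k V P : Type*} [DivisionRing k] [AddCommGroup V] [Module k V] [AddTorsor V P]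

variable (k) in
/-- The line through `p` with direction `v`. -/
def lineT (p : P) (v : V) : Set P := {q | ∃ t : k, q = t • v +ᵥ p}

lemma mem_lineT_self (p : P) (v : V) : p ∈ lineT k p v := ⟨0, by simp⟩

lemma mem_lineT_vadd (p : P) (v : V) (t : k) : t • v +ᵥ p ∈ lineT k p v := ⟨t, rfl⟩

lemma lineT_eq_of_mem {p q : P} {v : V} (h : q ∈ lineT k p v) : lineT k p v = lineT k q v := by
  obtain ⟨t0, rfl⟩ := h
  ext x
  constructor
  · rintro ⟨t, rfl⟩
    exact ⟨t - t0, by rw [vadd_vadd, ← add_smul, sub_add_cancel]⟩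
  · rintro ⟨t, rfl⟩
    exact ⟨t + t0, by rw [vadd_vadd, ← add_smul]⟩

lemma lineT_smul {c : k} (hc : c ≠ 0) (p : P) (v : V) : lineT k p (c • v) = lineT k p v := by
  ext x
  constructor
  · rintro ⟨t, rfl⟩
    exact ⟨t * c, by rw [mul_smul]⟩
  · rintro ⟨t, rfl⟩
    exact ⟨t * c⁻¹, by rw [smul_smul, mul_assoc, inv_mul_cancel₀ hc, mul_one]⟩

lemma vsub_of_mem_lineT {p x y : P} {v : V} (hx : x ∈ lineT k p v) (hy : y ∈ lineT k p v) :
    ∃ t : k, y -ᵥ x = t • v := by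
  obtain ⟨t1, rfl⟩ := hx
  obtain ⟨t2, rfl⟩ := hy
  exact ⟨t2 - t1, by rw [vadd_vsub_vadd_cancel_right, ← sub_smul]⟩

lemma param_of_mem_lineT {p x y z : P} {v : V} (hx : x ∈ lineT k p v) (hy : y ∈ lineT k p v)
    (hz : z ∈ lineT k p v) (hxy : x ≠ y) : ∃ s : k, z -ᵥ x = s • (y -ᵥ x) := by
  obtain ⟨t, ht⟩ := vsub_of_mem_lineT hx hy
  obtain ⟨r, hr⟩ := vsub_of_mem_lineT hx hz
  have htne : t ≠ 0 := by
    rintro rfl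
    rw [zero_smul, vsub_eq_zero_iff_eq] at ht
    exact hxy ht.symm
  refine ⟨r * t⁻¹, ?_⟩
  rw [ht, hr, smul_smul, mul_assoc, inv_mul_cancel₀ htne, mul_one]

variable (k) in
/-- Build a `PLine` from a point and a nonzero direction. -/
def mkL (x : P) (v : V) (hv : v ≠ 0) : PLine k V P := ⟨lineT k x v, x, v, hv, rfl⟩

lemma mkL_val (x : P) (v : V) (hv : v ≠ 0) : (mkL k x v hv).1 = lineT k x v := rfl

lemma repr_of_mem (a : PLine k V P) {x : P} (hx : x ∈ a.1) :
    ∃ v : V, v ≠ 0 ∧ a.1 = lineT k x v := by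
  obtain ⟨p, v, hv, hs⟩ := a.2
  refine ⟨v, hv, ?_⟩
  rw [hs]
  exact lineT_eq_of_mem (by rwa [hs] at hx)

lemma line_eq_of_two_mem {a : PLine k V P} {x y : P} (hx : x ∈ a.1) (hy : y ∈ a.1)
    (hxy : x ≠ y) : a.1 = lineT k x (y -ᵥ x) := by
  obtain ⟨v, hv, ha⟩ := repr_of_mem a hx
  obtain ⟨t, ht⟩ := vsub_of_mem_lineT (p := x) (mem_lineT_self x v) (ha ▸ hy)
  have htne : t ≠ 0 := by
    rintro rfl
    rw [zero_smul, vsub_eq_zero_iff_eq] at ht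
    exact hxy ht.symm
  rw [ha, ht, lineT_smul htne]

lemma eq_of_two_mem {a b : PLine k V P} {x y : P} (hxa : x ∈ a.1) (hya : y ∈ a.1)
    (hxb : x ∈ b.1) (hyb : y ∈ b.1) (hxy : x ≠ y) : a = b :=
  Subtype.ext ((line_eq_of_two_mem hxa hya hxy).trans (line_eq_of_two_mem hxb hyb hxy).symm)


variable (k) in
def Indep2 (u v : V) : Prop := ∀ α β : k, α • u + β • v = 0 → α = 0 ∧ β = 0

variable (k) in
def Indep3 (u v w : V) : Prop :=
  ∀ α β γ : k, α • u + β • v + γ • w = 0 → α = 0 ∧ β = 0 ∧ γ = 0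

lemma Indep2.ne_zero_left {u v : V} (h : Indep2 k u v) : u ≠ 0 := by
  rintro rfl
  simpa using (h 1 0 (by simp)).1

lemma Indep2.ne_zero_right {u v : V} (h : Indep2 k u v) : v ≠ 0 := by
  rintro rfl
  simpa using (h 0 1 (by simp)).2

lemma Indep2.symm {u v : V} (h : Indep2 k u v) : Indep2 k v u := by
  intro α β hab
  obtain ⟨h1, h2⟩ := h β α (by rw [add_comm]; exact hab)
  exact ⟨h2, h1⟩

lemma Indep3.i12 {u v w : V} (h : Indep3 k u v w) : Indep2 k u v := by
  intro α β hab
  obtain ⟨h1, h2, _⟩ := h α β 0 (by rw [zero_smul, add_zero]; exact hab)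
  exact ⟨h1, h2⟩

lemma Indep3.i13 {u v w : V} (h : Indep3 k u v w) : Indep2 k u w := by
  intro α β hab
  obtain ⟨h1, _, h3⟩ := h α 0 β (by rw [zero_smul, add_zero]; exact hab)
  exact ⟨h1, h3⟩

lemma Indep3.i23 {u v w : V} (h : Indep3 k u v w) : Indep2 k v w := by
  intro α β hab
  obtain ⟨_, h2, h3⟩ := h 0 α β (by rw [zero_smul, zero_add]; exact hab)
  exact ⟨h2, h3⟩

/-- Directions of distinct lines through a common point are independent. -/
lemma indep2_of_ne {a b : PLine k V P} {Q : P} {u v : V} (hu : u ≠ 0) (hv : v ≠ 0)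
    (ha : a.1 = lineT k Q u) (hb : b.1 = lineT k Q v) (hne : a ≠ b) : Indep2 k u v := by
  intro α β hab
  by_cases hβ : β = 0
  · subst hβ
    rw [zero_smul, add_zero] at hab
    exact ⟨(smul_eq_zero.1 hab).resolve_right hu, rfl⟩
  · exfalso
    have hvu : v = (-β⁻¹ * α) • u := by
      have : β • v = -(α • u) := eq_neg_of_add_eq_zero_right hab
      calc v = β⁻¹ • β • v := by rw [smul_smul, inv_mul_cancel₀ hβ, one_smul]
        _ = β⁻¹ • -(α • u) := by rw [this]
        _ = (-β⁻¹ * α) • u := by rw [smul_neg, smul_smul, ← neg_smul, neg_mul]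
    have hc : (-β⁻¹ * α) ≠ 0 := by
      rintro h0
      rw [h0, zero_smul] at hvu
      exact hv hvu
    apply hne
    apply Subtype.ext
    rw [ha, hb, hvu, lineT_smul hc]

/-- If a line `d` meets three lines through `Q` with independent directions, then `Q ∈ d`. -/
lemma mem_of_meets_three {a b c d : PLine k V P} {Q : P} {u v w : V}
    (ha : a.1 = lineT k Q u) (hb : b.1 = lineT k Q v) (hc : c.1 = lineT k Q w)
    (hind : Indep3 k u v w)
    (hda : (d.1 ∩ a.1).Nonempty) (hdb : (d.1 ∩ b.1).Nonempty)
    (hdc : (d.1 ∩ c.1).Nonempty) : Q ∈ d.1 := by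
  by_contra hQ
  obtain ⟨x, hxd, hxa⟩ := hda
  obtain ⟨y, hyd, hyb⟩ := hdb
  obtain ⟨z, hzd, hzc⟩ := hdc
  rw [ha] at hxa; rw [hb] at hyb; rw [hc] at hzc
  obtain ⟨t1, rfl⟩ := hxa
  obtain ⟨t2, rfl⟩ := hyb
  obtain ⟨t3, rfl⟩ := hzc
  have ht1 : t1 ≠ 0 := by rintro rfl; rw [zero_smul, zero_vadd] at hxd; exact hQ hxd
  have ht2 : t2 ≠ 0 := by rintro rfl; rw [zero_smul, zero_vadd] at hyd; exact hQ hyd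
  have ht3 : t3 ≠ 0 := by rintro rfl; rw [zero_smul, zero_vadd] at hzd; exact hQ hzd
  have hxy : t1 • u +ᵥ Q ≠ t2 • v +ᵥ Q := by
    intro h
    have : t1 • u + (-t2) • v = 0 := by
      rw [neg_smul, ← sub_eq_add_neg, sub_eq_zero]
      exact vadd_right_cancel Q h
    exact ht1 (hind.i12 t1 (-t2) this).1
  obtain ⟨v0, _, hd⟩ := repr_of_mem d hxd
  rw [hd] at hxd hyd hzd
  obtain ⟨s, hs⟩ := param_of_mem_lineT hxd hyd hzd hxy
  rw [vadd_vsub_vadd_cancel_right, vadd_vsub_vadd_cancel_right, smul_sub, smul_smul,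
    smul_smul] at hs
  have key : (s * t1 - t1) • u + (-(s * t2)) • v + t3 • w = 0 := by
    rw [sub_smul, neg_smul]
    have : t3 • w - t1 • u - ((s * t2) • v - (s * t1) • u) = 0 := by
      rw [hs]; abel
    calc (s * t1) • u - t1 • u + -((s * t2) • v) + t3 • w
        = t3 • w - t1 • u - ((s * t2) • v - (s * t1) • u) := by abel
      _ = 0 := this
  exact ht3 (hind (s * t1 - t1) (-(s * t2)) t3 key).2.2

/-- Two distinct parallel lines (direction `u - λ • v`, `Indep2 u v`, `λ ≠ 0`) are disjoint. -/
lemma not_meets_parallel {u v : V} (huv : Indep2 k u v) {lam : k} (hlam : lam ≠ 0)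
    (Q : P) (he : u - lam • v ≠ 0) :
    ¬ PMeets k V P (mkL k Q (u - lam • v) he) (mkL k (u +ᵥ Q) (u - lam • v) he) := by
  rintro ⟨q, hq0, hq1⟩
  rw [mkL_val] at hq0 hq1
  obtain ⟨s, rfl⟩ := hq0
  obtain ⟨s', hs'⟩ := hq1
  rw [vadd_vadd] at hs'
  have h0 : s • (u - lam • v) - (s' • (u - lam • v) + u) = 0 := by
    rw [sub_eq_zero]
    exact vadd_right_cancel Q hs'
  have hveq : (s - s' - 1) • u + (-((s - s') * lam)) • v = 0 := by
    calc (s - s' - 1) • u + (-((s - s') * lam)) • v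
        = s • (u - lam • v) - (s' • (u - lam • v) + u) := by
          rw [sub_smul, sub_smul, neg_smul, mul_smul, sub_smul, smul_sub, smul_sub, one_smul]; abel
      _ = 0 := h0
  obtain ⟨h1, h2⟩ := huv (s - s' - 1) (-((s - s') * lam)) hveq
  rw [sub_eq_zero] at h1
  rw [neg_eq_zero, mul_eq_zero] at h2
  rcases h2 with h2 | h2
  · rw [sub_eq_zero] at h2  -- s = s'
    rw [h2, sub_self] at h1
    exact one_ne_zero h1.symm
  · exact hlam h2


variable (k V P) in
/-- `d` is a transversal of `a`, `b`, `c`. -/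
def Trans (a b c d : PLine k V P) : Prop :=
  (d.1 ∩ a.1).Nonempty ∧ (d.1 ∩ b.1).Nonempty ∧ (d.1 ∩ c.1).Nonempty

lemma exists_lam {k : Type*} [DivisionRing k] (h : ¬ ∀ x : k, x = 0 ∨ x = 1) :
    ∃ lam : k, lam ≠ 0 ∧ lam ≠ 1 := by
  push_neg at h
  obtain ⟨x, hx⟩ := h
  exact ⟨x, hx.1, hx.2⟩

lemma exists_lam' {k : Type*} [DivisionRing k] (h : ¬ ∀ x : k, x = 0 ∨ x = 1) :
    ∃ lam : k, lam ≠ 0 ∧ lam ≠ -1 := by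
  obtain ⟨x, h0, h1⟩ := exists_lam h
  by_cases hn : (-1 : k) = 1
  · exact ⟨x, h0, fun hx => h1 (by rw [hx, hn])⟩
  · exact ⟨1, one_ne_zero, fun h' => hn h'.symm⟩

lemma solve2 {k V : Type*} [DivisionRing k] [AddCommGroup V] [Module k V]
    {u v : V} {α β : k} (hβ : β ≠ 0) (h : α • u + β • v = 0) :
    v = (-β⁻¹ * α) • u := by
  have h1 : β • v = -(α • u) := eq_neg_of_add_eq_zero_right (by rw [add_comm] at h ⊢; exact h)
  calc v = β⁻¹ • β • v := by rw [smul_smul, inv_mul_cancel₀ hβ, one_smul]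
    _ = β⁻¹ • -(α • u) := by rw [h1]
    _ = (-β⁻¹ * α) • u := by rw [smul_neg, smul_smul, ← neg_smul, neg_mul]

lemma mkL_ne {u v : V} (huv : Indep2 k u v) (hu : u ≠ 0) (hv : v ≠ 0) (Q : P) :
    mkL k Q u hu ≠ mkL k Q v hv := by
  intro h
  have hval : lineT k Q u = lineT k Q v := congrArg Subtype.val h
  have hm : v +ᵥ Q ∈ lineT k Q u := by
    rw [hval]
    exact ⟨1, by rw [one_smul]⟩
  obtain ⟨t, ht⟩ := hm
  have : t • u + (-1 : k) • v = 0 := by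
    rw [neg_one_smul, ← sub_eq_add_neg, sub_eq_zero]
    exact (vadd_right_cancel Q ht).symm
  exact one_ne_zero (neg_eq_zero.1 (huv t (-1) this).2)

/-- The key structure lemma: a "clique with an extra transversal" configuration of three
pairwise-meeting lines is a star, and yields three independent directions. -/
lemma sigma_structure {a b c : PLine k V P} (hab : a ≠ b) (hac : a ≠ c) (hbc : b ≠ c)
    (mab : (a.1 ∩ b.1).Nonempty) (mac : (a.1 ∩ c.1).Nonempty) (mbc : (b.1 ∩ c.1).Nonempty)
    (hclique : ∀ d e, Trans k V P a b c d → Trans k V P a b c e → PMeets k V P d e)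
    (hextra : ∃ d, Trans k V P a b c d ∧ d ≠ a ∧ d ≠ b ∧ d ≠ c) :
    (∃ Q : P, ∀ d, Trans k V P a b c d ↔ Q ∈ d.1) ∧ ∃ u v w : V, Indep3 k u v w := by
  by_cases hconc : ∃ Q : P, Q ∈ a.1 ∧ Q ∈ b.1 ∧ Q ∈ c.1
  · obtain ⟨Q, hQa, hQb, hQc⟩ := hconc
    obtain ⟨u, hu, ha⟩ := repr_of_mem a hQa
    obtain ⟨v, hv, hb⟩ := repr_of_mem b hQb
    obtain ⟨w, hw, hc⟩ := repr_of_mem c hQc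
    have iuv := indep2_of_ne hu hv ha hb hab
    have ivw := indep2_of_ne hv hw hb hc hbc
    have easy : ∀ d : PLine k V P, Q ∈ d.1 → Trans k V P a b c d :=
      fun d hd => ⟨⟨Q, hd, hQa⟩, ⟨Q, hd, hQb⟩, ⟨Q, hd, hQc⟩⟩
    by_cases hind : Indep3 k u v w
    · exact ⟨⟨Q, fun d =>
        ⟨fun hd => mem_of_meets_three ha hb hc hind hd.1 hd.2.1 hd.2.2, easy d⟩⟩,
        u, v, w, hind⟩
    · -- dependent case: w is a combination of u and v with nonzero coefficients
      have hdep : ∃ α β γ : k, α • u + β • v + γ • w = 0 ∧ γ ≠ 0 := by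
        by_contra hno
        push_neg at hno
        apply hind
        intro α β γ heq
        have hγ : γ = 0 := hno α β γ heq
        rw [hγ, zero_smul, add_zero] at heq
        obtain ⟨h1, h2⟩ := iuv α β heq
        exact ⟨h1, h2, hγ⟩
      obtain ⟨α, β, γ, heq, hγ⟩ := hdep
      have hw' : w = (-γ⁻¹ * α) • u + (-γ⁻¹ * β) • v := by
        have h1 : γ • w = -(α • u + β • v) := eq_neg_of_add_eq_zero_right
          (by rw [add_comm] at heq ⊢; exact heq)
        calc w = γ⁻¹ • γ • w := by rw [smul_smul, inv_mul_cancel₀ hγ, one_smul]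
          _ = γ⁻¹ • -(α • u + β • v) := by rw [h1]
          _ = (-γ⁻¹ * α) • u + (-γ⁻¹ * β) • v := by
              rw [smul_neg, smul_add, neg_add, smul_smul, smul_smul, ← neg_smul, ← neg_smul,
                neg_mul, neg_mul]
      set α' : k := -γ⁻¹ * α with hα'def
      set β' : k := -γ⁻¹ * β with hβ'def
      have hα' : α' ≠ 0 := by
        rintro h
        rw [h, zero_smul, zero_add] at hw'
        have : β' • v + (-1 : k) • w = 0 := by rw [neg_one_smul, hw', add_neg_cancel]
        exact one_ne_zero (neg_eq_zero.1 (ivw β' (-1) this).2)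
      have hβ' : β' ≠ 0 := by
        rintro h
        rw [h, zero_smul, add_zero] at hw'
        have iuw := indep2_of_ne hu hw ha hc hac
        have : α' • u + (-1 : k) • w = 0 := by rw [neg_one_smul, hw', add_neg_cancel]
        exact one_ne_zero (neg_eq_zero.1 (iuw α' (-1) this).2)
      set u1 : V := α' • u with hu1def
      set v1 : V := β' • v with hv1def
      have hu1 : u1 ≠ 0 := smul_ne_zero hα' hu
      have hv1 : v1 ≠ 0 := smul_ne_zero hβ' hv
      have ha1 : a.1 = lineT k Q u1 := by rw [ha, hu1def, lineT_smul hα']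
      have hb1 : b.1 = lineT k Q v1 := by rw [hb, hv1def, lineT_smul hβ']
      have hw1 : w = u1 + v1 := hw'
      have iu1v1 := indep2_of_ne hu1 hv1 ha1 hb1 hab
      clear_value u1 v1
      by_cases htwo : ∀ x : k, x = 0 ∨ x = 1
      · -- two-element field
        have hQQ : ∀ d, Trans k V P a b c d → Q ∈ d.1 := by
          intro d hd
          by_contra hQd
          obtain ⟨x, hxd, hxa⟩ := hd.1
          obtain ⟨y, hyd, hyb⟩ := hd.2.1
          obtain ⟨z, hzd, hzc⟩ := hd.2.2
          rw [ha1] at hxa; rw [hb1] at hyb; rw [hc] at hzc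
          obtain ⟨t1, rfl⟩ := hxa
          obtain ⟨t2, rfl⟩ := hyb
          obtain ⟨t3, rfl⟩ := hzc
          have ht1 : t1 = 1 := by
            rcases htwo t1 with h | h
            · exfalso; rw [h, zero_smul, zero_vadd] at hxd; exact hQd hxd
            · exact h
          have ht2 : t2 = 1 := by
            rcases htwo t2 with h | h
            · exfalso; rw [h, zero_smul, zero_vadd] at hyd; exact hQd hyd
            · exact h
          have ht3 : t3 = 1 := by
            rcases htwo t3 with h | h
            · exfalso; rw [h, zero_smul, zero_vadd] at hzd; exact hQd hzd
            · exact h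
          rw [ht1, one_smul] at hxd
          rw [ht2, one_smul] at hyd
          rw [ht3, one_smul] at hzd
          have hxy : u1 +ᵥ Q ≠ v1 +ᵥ Q := by
            intro h
            have : (1 : k) • u1 + (-1 : k) • v1 = 0 := by
              rw [one_smul, neg_one_smul, ← sub_eq_add_neg, sub_eq_zero]
              exact vadd_right_cancel Q h
            exact one_ne_zero (iu1v1 1 (-1) this).1
          obtain ⟨v0, _, hdrep⟩ := repr_of_mem d hxd
          rw [hdrep] at hxd hyd hzd
          obtain ⟨s, hs⟩ := param_of_mem_lineT hxd hyd hzd hxy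
          rw [vadd_vsub_vadd_cancel_right, vadd_vsub_vadd_cancel_right, hw1] at hs
          have hs' : v1 = s • (v1 - u1) := by
            calc v1 = u1 + v1 - u1 := by abel
              _ = s • (v1 - u1) := hs
          rcases htwo s with h | h
          · rw [h, zero_smul] at hs'; exact hv1 hs'
          · rw [h, one_smul] at hs'
            apply hu1
            have := hs'
            calc u1 = v1 - (v1 - u1) := by abel
              _ = 0 := by rw [← this]; abel
        obtain ⟨d, hd, hda, hdb, hdc⟩ := hextra
        have hQd := hQQ d hd
        obtain ⟨m, hm, hdrep⟩ := repr_of_mem d hQd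
        refine ⟨⟨Q, fun d' => ⟨hQQ d', easy d'⟩⟩, u1, v1, m, ?_⟩
        -- show `Indep3 u1 v1 m`
        have h2 : (1 : k) + 1 = 0 := by
          rcases htwo (1 + 1 : k) with h | h
          · exact h
          · exfalso
            have h' : (1 : k) + 1 - 1 = 1 - 1 := by rw [h]
            rw [add_sub_cancel_right, sub_self] at h'
            exact one_ne_zero h'
        have hneg1 : (-1 : k) = 1 := neg_eq_of_add_eq_zero_left h2
        intro α2 β2 γ2 habg
        have hγ2 : γ2 = 0 := by
          by_contra hγ2
          have hγ21 : γ2 = 1 := (htwo γ2).resolve_left hγ2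
          rw [hγ21, one_smul] at habg
          have hmeq : m = α2 • u1 + β2 • v1 := by
            have h1 : m = -(α2 • u1 + β2 • v1) := eq_neg_of_add_eq_zero_right habg
            rw [h1, ← neg_one_smul k, hneg1, one_smul]
          rcases htwo α2 with hα2 | hα2 <;> rcases htwo β2 with hβ2 | hβ2
          · rw [hα2, hβ2, zero_smul, zero_smul, add_zero] at hmeq
            exact hm hmeq
          · rw [hα2, hβ2, zero_smul, one_smul, zero_add] at hmeq
            exact hdb (Subtype.ext (by rw [hdrep, hmeq, hb1]))
          · rw [hα2, hβ2, one_smul, zero_smul, add_zero] at hmeq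
            exact hda (Subtype.ext (by rw [hdrep, hmeq, ha1]))
          · rw [hα2, hβ2, one_smul, one_smul] at hmeq
            exact hdc (Subtype.ext (by rw [hdrep, hmeq, ← hw1, hc]))
        rw [hγ2, zero_smul, add_zero] at habg
        obtain ⟨h1, h2'⟩ := iu1v1 α2 β2 habg
        exact ⟨h1, h2', hγ2⟩
      · -- at least three elements: contradiction with the clique property
        exfalso
        obtain ⟨lam, hl0, hlm1⟩ := exists_lam' htwo
        have he : u1 - lam • v1 ≠ 0 := by
          intro h
          have : (1 : k) • u1 + (-lam) • v1 = 0 := by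
            rw [one_smul, neg_smul, ← sub_eq_add_neg]; exact h
          exact one_ne_zero (iu1v1 1 (-lam) this).1
        have t0 : Trans k V P a b c (mkL k Q (u1 - lam • v1) he) :=
          easy _ (mem_lineT_self Q _)
        have t1 : Trans k V P a b c (mkL k (u1 +ᵥ Q) (u1 - lam • v1) he) := by
          have h1l : (1 : k) + lam ≠ 0 := by
            intro h
            exact hlm1 (eq_neg_of_add_eq_zero_right h)
          set s : k := -(1 + lam)⁻¹ with hsdef
          have hcoef : -(s * lam) = 1 + s := by
            have h1 : s * (lam + 1) = -1 := by
              rw [hsdef, neg_mul, add_comm lam 1, inv_mul_cancel₀ h1l]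
            have h2 : s * lam + s = -1 := by rw [← h1, mul_add, mul_one]
            have h3 : s * lam = -1 - s := eq_sub_of_add_eq h2
            rw [h3]; abel
          clear_value s
          refine ⟨⟨u1 +ᵥ Q, mem_lineT_self _ _, ?_⟩,
            ⟨lam • v1 +ᵥ Q, ⟨-1, ?_⟩, ?_⟩,
            ⟨s • (u1 - lam • v1) +ᵥ (u1 +ᵥ Q), ⟨s, rfl⟩, ?_⟩⟩
          · rw [ha1]; exact ⟨1, by rw [one_smul]⟩
          · rw [vadd_vadd]
            congr 1
            rw [neg_one_smul]
            abel
          · rw [hb1]; exact ⟨lam, rfl⟩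
          · rw [hc]
            refine ⟨1 + s, ?_⟩
            rw [vadd_vadd]
            congr 1
            rw [hw1]
            calc s • (u1 - lam • v1) + u1
                = (1 + s) • u1 + (-(s * lam)) • v1 := by
                  rw [smul_sub, smul_smul, add_smul, one_smul, neg_smul]; abel
              _ = (1 + s) • u1 + (1 + s) • v1 := by rw [hcoef]
              _ = (1 + s) • (u1 + v1) := by rw [smul_add]
        exact absurd (hclique _ _ t0 t1) (not_meets_parallel iu1v1 hl0 Q he)
  · -- non-concurrent case: impossible
    exfalso
    obtain ⟨R, hRa, hRb⟩ := mab
    obtain ⟨Tp, hTa, hTc⟩ := mac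
    obtain ⟨Sp, hSb, hSc⟩ := mbc
    have hRT : R ≠ Tp := fun h => hconc ⟨R, hRa, hRb, h ▸ hTc⟩
    have hRS : R ≠ Sp := fun h => hconc ⟨R, hRa, hRb, h ▸ hSc⟩
    have hTS : Tp ≠ Sp := fun h => hconc ⟨Tp, hTa, h ▸ hSb, hTc⟩
    set p : V := Tp -ᵥ R with hpdef
    set q : V := Sp -ᵥ R with hqdef
    have hp0 : p ≠ 0 := fun h => hRT (vsub_eq_zero_iff_eq.1 h).symm
    have hq0 : q ≠ 0 := fun h => hRS (vsub_eq_zero_iff_eq.1 h).symm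
    have ha : a.1 = lineT k R p := line_eq_of_two_mem hRa hTa hRT
    have hb : b.1 = lineT k R q := line_eq_of_two_mem hRb hSb hRS
    have hpq : p - q = Tp -ᵥ Sp := by rw [hpdef, hqdef, vsub_sub_vsub_cancel_right]
    have hc : c.1 = lineT k Sp (p - q) := by
      rw [hpq]; exact line_eq_of_two_mem hSc hTc (Ne.symm hTS)
    have hSpR : Sp = q +ᵥ R := by rw [hqdef, vsub_vadd]
    have hTpR : Tp = p +ᵥ R := by rw [hpdef, vsub_vadd]
    have ipq : Indep2 k p q := by
      intro α β h
      by_cases hβ : β = 0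
      · rw [hβ, zero_smul, add_zero] at h
        exact ⟨(smul_eq_zero.1 h).resolve_right hp0, hβ⟩
      · exfalso
        have hq' := solve2 hβ h
        apply hconc
        refine ⟨Sp, ?_, hSb, hSc⟩
        rw [ha, hSpR, hq']
        exact ⟨-β⁻¹ * α, rfl⟩
    by_cases htwo : ∀ x : k, x = 0 ∨ x = 1
    · -- two-element field: the extra transversal must be one of a, b, c
      obtain ⟨d, ⟨hda', hdb', hdc'⟩, hda, hdb, hdc⟩ := hextra
      obtain ⟨x, hxd, hxa⟩ := hda'
      obtain ⟨y, hyd, hyb⟩ := hdb'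
      obtain ⟨z, hzd, hzc⟩ := hdc'
      rw [ha] at hxa; rw [hb] at hyb; rw [hc] at hzc
      obtain ⟨t1, rfl⟩ := hxa
      obtain ⟨t2, rfl⟩ := hyb
      obtain ⟨t3, rfl⟩ := hzc
      have hx2 : t1 • p +ᵥ R = R ∨ t1 • p +ᵥ R = Tp := by
        rcases htwo t1 with h | h
        · left; rw [h, zero_smul, zero_vadd]
        · right; rw [h, one_smul, hTpR]
      have hy2 : t2 • q +ᵥ R = R ∨ t2 • q +ᵥ R = Sp := by
        rcases htwo t2 with h | h
        · left; rw [h, zero_smul, zero_vadd]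
        · right; rw [h, one_smul, hSpR]
      have hz2 : t3 • (p - q) +ᵥ Sp = Sp ∨ t3 • (p - q) +ᵥ Sp = Tp := by
        rcases htwo t3 with h | h
        · left; rw [h, zero_smul, zero_vadd]
        · right; rw [h, one_smul, hpq, vsub_vadd]
      rcases hx2 with hx | hx <;> rcases hy2 with hy | hy
      · -- x = R, y = R : use z
        rw [hx] at hxd
        rcases hz2 with hz | hz <;> rw [hz] at hzd
        · exact hdb (eq_of_two_mem hxd hzd hRb hSb hRS)
        · exact hda (eq_of_two_mem hxd hzd hRa hTa hRT)
      · rw [hx] at hxd; rw [hy] at hyd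
        exact hdb (eq_of_two_mem hxd hyd hRb hSb hRS)
      · rw [hx] at hxd; rw [hy] at hyd
        exact hda (eq_of_two_mem hyd hxd hRa hTa hRT)
      · rw [hx] at hxd; rw [hy] at hyd
        exact hdc (eq_of_two_mem hyd hxd hSc hTc (Ne.symm hTS))
    · -- at least three elements
      obtain ⟨lam, hl0, hl1⟩ := exists_lam htwo
      have he : p - lam • q ≠ 0 := by
        intro h
        have : (1 : k) • p + (-lam) • q = 0 := by
          rw [one_smul, neg_smul, ← sub_eq_add_neg]; exact h
        exact one_ne_zero (ipq 1 (-lam) this).1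
      have h1l : (1 : k) - lam ≠ 0 := fun h => hl1 (sub_eq_zero.1 h).symm
      set s : k := (1 - lam)⁻¹ with hsdef
      have hss : s * (1 - lam) = 1 := inv_mul_cancel₀ h1l
      have t0 : Trans k V P a b c (mkL k R (p - lam • q) he) := by
        refine ⟨⟨R, mem_lineT_self _ _, ha ▸ mem_lineT_self _ _⟩,
          ⟨R, mem_lineT_self _ _, hb ▸ mem_lineT_self _ _⟩,
          ⟨s • (p - lam • q) +ᵥ R, ⟨s, rfl⟩, ?_⟩⟩
        rw [hc, hSpR]
        refine ⟨s, ?_⟩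
        rw [vadd_vadd]
        congr 1
        have key : s * (1 - lam) - 1 = 0 := by rw [hss, sub_self]
        calc s • (p - lam • q)
            = s • (p - q) + q + (s * (1 - lam) - 1) • q := by
              rw [mul_sub, mul_one, sub_smul, sub_smul, smul_sub, smul_sub, smul_smul,
                one_smul]
              abel
          _ = s • (p - q) + q + (0 : k) • q := by rw [key]
          _ = s • (p - q) + q := by rw [zero_smul, add_zero]
      have t1 : Trans k V P a b c (mkL k (p +ᵥ R) (p - lam • q) he) := by
        refine ⟨⟨p +ᵥ R, mem_lineT_self _ _, ?_⟩,
          ⟨lam • q +ᵥ R, ⟨-1, ?_⟩, ?_⟩,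
          ⟨p +ᵥ R, mem_lineT_self _ _, ?_⟩⟩
        · rw [ha]; exact ⟨1, by rw [one_smul]⟩
        · rw [vadd_vadd]
          congr 1
          rw [neg_one_smul]
          abel
        · rw [hb]; exact ⟨lam, rfl⟩
        · rw [hc, hSpR]
          refine ⟨1, ?_⟩
          rw [one_smul, vadd_vadd]
          congr 1
          abel
      exact absurd (hclique _ _ t0 t1) (not_meets_parallel ipq hl0 R he)

/-- Through every point there is a "Σ-configuration" star. -/
lemma star_exists {u v w : V} (hind : Indep3 k u v w) (Q : P) :
    ∃ a b c : PLine k V P, a ≠ b ∧ a ≠ c ∧ b ≠ c ∧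
      (a.1 ∩ b.1).Nonempty ∧ (a.1 ∩ c.1).Nonempty ∧ (b.1 ∩ c.1).Nonempty ∧
      (∀ d e, Trans k V P a b c d → Trans k V P a b c e → PMeets k V P d e) ∧
      (∃ d, Trans k V P a b c d ∧ d ≠ a ∧ d ≠ b ∧ d ≠ c) ∧
      (∀ d, Trans k V P a b c d ↔ Q ∈ d.1) := by
  have hu : u ≠ 0 := hind.i12.ne_zero_left
  have hv : v ≠ 0 := hind.i12.ne_zero_right
  have hw : w ≠ 0 := hind.i13.ne_zero_right
  refine ⟨mkL k Q u hu, mkL k Q v hv, mkL k Q w hw,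
    mkL_ne hind.i12 hu hv Q, mkL_ne hind.i13 hu hw Q, mkL_ne hind.i23 hv hw Q,
    ⟨Q, mem_lineT_self _ _, mem_lineT_self _ _⟩,
    ⟨Q, mem_lineT_self _ _, mem_lineT_self _ _⟩,
    ⟨Q, mem_lineT_self _ _, mem_lineT_self _ _⟩, ?_, ?_, ?_⟩
  case refine_3 =>
    intro d
    constructor
    · intro hd
      exact mem_of_meets_three rfl rfl rfl hind hd.1 hd.2.1 hd.2.2
    · intro hd
      exact ⟨⟨Q, hd, mem_lineT_self _ _⟩, ⟨Q, hd, mem_lineT_self _ _⟩,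
        ⟨Q, hd, mem_lineT_self _ _⟩⟩
  case refine_1 =>
    intro d e hd he
    have hQd : Q ∈ d.1 := mem_of_meets_three rfl rfl rfl hind hd.1 hd.2.1 hd.2.2
    have hQe : Q ∈ e.1 := mem_of_meets_three rfl rfl rfl hind he.1 he.2.1 he.2.2
    exact ⟨Q, hQd, hQe⟩
  case refine_2 =>
    have huv : u + v ≠ 0 := by
      intro h
      have : (1 : k) • u + (1 : k) • v + (0 : k) • w = 0 := by
        rw [one_smul, one_smul, zero_smul, add_zero]; exact h
      exact one_ne_zero (hind 1 1 0 this).1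
    refine ⟨mkL k Q (u + v) huv,
      ⟨⟨Q, mem_lineT_self _ _, mem_lineT_self _ _⟩,
       ⟨Q, mem_lineT_self _ _, mem_lineT_self _ _⟩,
       ⟨Q, mem_lineT_self _ _, mem_lineT_self _ _⟩⟩, ?_, ?_, ?_⟩
    · apply mkL_ne _ huv hu Q
      intro α β h
      have : (α + β) • u + α • v + (0 : k) • w = 0 := by
        rw [zero_smul, add_zero, add_smul]
        calc α • u + β • u + α • v = α • (u + v) + β • u := by rw [smul_add]; abel
          _ = 0 := h
      obtain ⟨h1, h2, _⟩ := hind (α + β) α 0 this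
      refine ⟨h2, ?_⟩
      rw [h2, zero_add] at h1
      exact h1
    · apply mkL_ne _ huv hv Q
      intro α β h
      have : α • u + (α + β) • v + (0 : k) • w = 0 := by
        rw [zero_smul, add_zero, add_smul]
        calc α • u + (α • v + β • v) = α • (u + v) + β • v := by rw [smul_add]; abel
          _ = 0 := h
      obtain ⟨h1, h2, _⟩ := hind α (α + β) 0 this
      refine ⟨h1, ?_⟩
      rw [h1, zero_add] at h2
      exact h2
    · apply mkL_ne _ huv hw Q
      intro α β h
      have : α • u + α • v + β • w = 0 := by
        calc α • u + α • v + β • w = α • (u + v) + β • w := by rw [smul_add]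
          _ = 0 := h
      obtain ⟨h1, _, h3⟩ := hind α α β this
      exact ⟨h1, h3⟩

/-- Points are separated by lines. -/
lemma eq_of_forall_line {u v w : V} (hind : Indep3 k u v w) {Q1 Q2 : P}
    (h : ∀ l : PLine k V P, Q1 ∈ l.1 ↔ Q2 ∈ l.1) : Q1 = Q2 := by
  by_contra hne
  have he : Q2 -ᵥ Q1 ≠ 0 := fun h0 => hne (vsub_eq_zero_iff_eq.1 h0).symm
  have hu : u ≠ 0 := hind.i12.ne_zero_left
  have hv : v ≠ 0 := hind.i12.ne_zero_right
  have key : ∀ m : V, (hm : m ≠ 0) → (∃ t : k, Q2 -ᵥ Q1 = t • m) → False → True := fun _ _ _ _ => trivial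
  by_cases h1 : ∃ t : k, Q2 -ᵥ Q1 = t • u
  · -- then Q2 is not on the line through Q1 with direction v
    obtain ⟨t2, ht2⟩ := ((h (mkL k Q1 v hv)).1 (mem_lineT_self _ _) : Q2 ∈ lineT k Q1 v)
    obtain ⟨t1, ht1⟩ := h1
    have ht2' : Q2 -ᵥ Q1 = t2 • v := by rw [ht2, vadd_vsub]
    have htne : t1 ≠ 0 := by
      rintro rfl
      rw [zero_smul] at ht1
      exact he ht1
    have : t1 • u + (-t2) • v = 0 := by
      rw [neg_smul, ← sub_eq_add_neg, sub_eq_zero, ← ht1, ← ht2']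
    exact htne (hind.i12 t1 (-t2) this).1
  · obtain ⟨t1, ht1⟩ := ((h (mkL k Q1 u hu)).1 (mem_lineT_self _ _) : Q2 ∈ lineT k Q1 u)
    exact h1 ⟨t1, by rw [ht1, vadd_vsub]⟩

lemma indep3_of_rank {k V : Type*} [DivisionRing k] [AddCommGroup V] [Module k V]
    (h : 3 ≤ Module.rank k V) : ∃ u v w : V, Indep3 k u v w := by
  have key : ∀ u v : V, ∃ x, x ∉ Submodule.span k ({u, v} : Set V) := by
    intro u v
    by_contra hno
    push_neg at hno
    have htop : Submodule.span k ({u, v} : Set V) = ⊤ := eq_top_iff.2 fun x _ => hno x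
    have hrank : Module.rank k V ≤ Cardinal.mk ({u, v} : Set V) := by
      rw [← rank_top k V, ← htop]
      exact rank_span_le _
    have hcard : Cardinal.mk ({u, v} : Set V) ≤ 2 := by
      calc Cardinal.mk ({u, v} : Set V) ≤ Cardinal.mk ({v} : Set V) + 1 := Cardinal.mk_insert_le
        _ = 2 := by rw [Cardinal.mk_singleton]; norm_num
    have : (3 : Cardinal) ≤ 2 := h.trans (hrank.trans hcard)
    norm_num at this
  obtain ⟨u, hu⟩ := key 0 0
  obtain ⟨v, hv⟩ := key u u
  obtain ⟨w, hw⟩ := key u v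
  rw [Set.pair_eq_singleton] at hu hv
  have hu0 : u ≠ 0 := fun h0 => hu (by rw [h0]; exact Submodule.zero_mem _)
  refine ⟨u, v, w, ?_⟩
  intro α β γ habg
  have hγ : γ = 0 := by
    by_contra hγ
    apply hw
    have h1 : γ • w = -(α • u + β • v) :=
      eq_neg_of_add_eq_zero_right (by rw [add_comm] at habg ⊢; exact habg)
    have h2 : w = (-γ⁻¹ * α) • u + (-γ⁻¹ * β) • v := by
      calc w = γ⁻¹ • γ • w := by rw [smul_smul, inv_mul_cancel₀ hγ, one_smul]
        _ = γ⁻¹ • -(α • u + β • v) := by rw [h1]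
        _ = (-γ⁻¹ * α) • u + (-γ⁻¹ * β) • v := by
            rw [smul_neg, smul_add, neg_add, smul_smul, smul_smul, ← neg_smul, ← neg_smul,
              neg_mul, neg_mul]
    exact Submodule.mem_span_pair.2 ⟨-γ⁻¹ * α, -γ⁻¹ * β, h2.symm⟩
  rw [hγ, zero_smul, add_zero] at habg
  have hβ : β = 0 := by
    by_contra hβ
    exact hv (Submodule.mem_span_singleton.2 ⟨-β⁻¹ * α, (solve2 hβ habg).symm⟩)
  rw [hβ, zero_smul, add_zero] at habg
  exact ⟨(smul_eq_zero.1 habg).resolve_right hu0, hβ, hγ⟩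

lemma collinear_degenerate {Q R S : P} (h : Q = R ∨ Q = S ∨ R = S) :
    Collinear k ({Q, R, S} : Set P) := by
  rcases h with rfl | rfl | rfl
  · refine Collinear.subset ?_ (collinear_pair k Q S)
    intro x hx
    simp only [Set.mem_insert_iff, Set.mem_singleton_iff] at hx ⊢
    tauto
  · refine Collinear.subset ?_ (collinear_pair k Q R)
    intro x hx
    simp only [Set.mem_insert_iff, Set.mem_singleton_iff] at hx ⊢
    tauto
  · refine Collinear.subset ?_ (collinear_pair k Q R)
    intro x hx
    simp only [Set.mem_insert_iff, Set.mem_singleton_iff] at hx ⊢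
    tauto

lemma collinear_of_line {Q R S : P} (l : PLine k V P) (hQ : Q ∈ l.1) (hR : R ∈ l.1)
    (hS : S ∈ l.1) : Collinear k ({Q, R, S} : Set P) := by
  obtain ⟨p, v, hv, hl⟩ := l.2
  rw [hl] at hQ hR hS
  rw [collinear_iff_exists_forall_eq_smul_vadd]
  refine ⟨p, v, fun x hx => ?_⟩
  rcases hx with rfl | rfl | rfl
  · exact hQ
  · exact hR
  · exact hS

lemma line_of_collinear {Q R S : P} (h : Collinear k ({Q, R, S} : Set P)) (hQR : Q ≠ R) :
    ∃ l : PLine k V P, Q ∈ l.1 ∧ R ∈ l.1 ∧ S ∈ l.1 := by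
  rw [collinear_iff_exists_forall_eq_smul_vadd] at h
  obtain ⟨p, v, hv⟩ := h
  obtain ⟨r1, h1⟩ := hv Q (by simp)
  obtain ⟨r2, h2⟩ := hv R (by simp)
  obtain ⟨r3, h3⟩ := hv S (by simp)
  have hvne : v ≠ 0 := by
    rintro rfl
    exact hQR (by rw [h1, h2, smul_zero, smul_zero])
  exact ⟨⟨lineT k p v, p, v, hvne, rfl⟩, ⟨r1, h1⟩, ⟨r2, h2⟩, ⟨r3, h3⟩⟩

section Transfer

variable {k' V' P' : Type*} [DivisionRing k'] [AddCommGroup V'] [Module k' V']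
  [AddTorsor V' P']

/-- The main transfer lemma: a Plücker-space isomorphism maps stars into stars; in
particular each point has a well-defined image point, and the target space admits three
independent directions. -/
lemma transfer_star (φ : PLine k V P ≃ PLine k' V' P')
    (hiso : ∀ a b : PLine k V P, PMeets k V P a b ↔ PMeets k' V' P' (φ a) (φ b))
    {u v w : V} (hind : Indep3 k u v w) (Q : P) :
    (∃ Q' : P', ∀ l : PLine k V P, Q ∈ l.1 ↔ Q' ∈ (φ l).1) ∧
      ∃ u' v' w' : V', Indep3 k' u' v' w' := by
  obtain ⟨a, b, c, hab, hac, hbc, mab, mac, mbc, hclique, hextra, hstar⟩ := star_exists hind Q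
  have trans_iff : ∀ d : PLine k V P,
      Trans k V P a b c d ↔ Trans k' V' P' (φ a) (φ b) (φ c) (φ d) := by
    intro d
    exact and_congr (hiso d a) (and_congr (hiso d b) (hiso d c))
  have hclique' : ∀ d' e', Trans k' V' P' (φ a) (φ b) (φ c) d' →
      Trans k' V' P' (φ a) (φ b) (φ c) e' → PMeets k' V' P' d' e' := by
    intro d' e' hd' he'
    have hd : Trans k V P a b c (φ.symm d') := (trans_iff (φ.symm d')).2 (by
      rw [φ.apply_symm_apply]; exact hd')
    have he : Trans k V P a b c (φ.symm e') := (trans_iff (φ.symm e')).2 (by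
      rw [φ.apply_symm_apply]; exact he')
    have := (hiso (φ.symm d') (φ.symm e')).1 (hclique _ _ hd he)
    rwa [φ.apply_symm_apply, φ.apply_symm_apply] at this
  have hextra' : ∃ d', Trans k' V' P' (φ a) (φ b) (φ c) d' ∧ d' ≠ φ a ∧ d' ≠ φ b ∧ d' ≠ φ c := by
    obtain ⟨d, hd, hda, hdb, hdc⟩ := hextra
    exact ⟨φ d, (trans_iff d).1 hd, fun h => hda (φ.injective h),
      fun h => hdb (φ.injective h), fun h => hdc (φ.injective h)⟩
  obtain ⟨⟨Q', hQ'⟩, hind'⟩ := sigma_structure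
    (fun h => hab (φ.injective h)) (fun h => hac (φ.injective h)) (fun h => hbc (φ.injective h))
    ((hiso a b).1 mab) ((hiso a c).1 mac) ((hiso b c).1 mbc) hclique' hextra'
  refine ⟨⟨Q', fun l => ?_⟩, hind'⟩
  rw [← hstar l, trans_iff l]
  exact hQ' (φ l)

end Transfer

end Stmt9Aux

variable (k' V' P' : Type*) [DivisionRing k'] [AddCommGroup V'] [Module k' V'] [AddTorsor V' P']

open Stmt9Aux in
/-- Every isomorphism `φ` of affine Plücker spaces with `dim A' ≥ 3` is induced by a
collineation `κ`, which maps the intersection point of two adjacent lines `a, b` to the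
intersection point of `φ a` and `φ b`. -/
theorem stmt9 (hdim' : 3 ≤ Module.rank k' V')
    (φ : PLine k V P ≃ PLine k' V' P')
    (hiso : ∀ a b : PLine k V P, PMeets k V P a b ↔ PMeets k' V' P' (φ a) (φ b)) :
    ∃ κ : P ≃ P',
      (∀ a b : PLine k V P, a ≠ b → ∀ Q : P, Q ∈ a.1 ∩ b.1 →
        κ Q ∈ (φ a).1 ∩ (φ b).1) ∧
      (∀ Q R S : P,
        Collinear k ({Q, R, S} : Set P) ↔ Collinear k' ({κ Q, κ R, κ S} : Set P')) := by
  classical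
  obtain ⟨u', v', w', hind'⟩ := indep3_of_rank hdim'
  have hiso' : ∀ a' b' : PLine k' V' P',
      PMeets k' V' P' a' b' ↔ PMeets k V P (φ.symm a') (φ.symm b') := by
    intro a' b'
    have := hiso (φ.symm a') (φ.symm b')
    rw [φ.apply_symm_apply, φ.apply_symm_apply] at this
    exact this.symm
  obtain ⟨u, v, w, hind⟩ :=
    (transfer_star φ.symm hiso' hind' (Classical.arbitrary P')).2
  choose F hF using fun Q : P => (transfer_star φ hiso hind Q).1
  choose G hG using fun Q' : P' => (transfer_star φ.symm hiso' hind' Q').1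
  have hGF : ∀ Q : P, G (F Q) = Q := by
    intro Q
    apply eq_of_forall_line hind
    intro l
    have h1 := hG (F Q) (φ l)
    rw [φ.symm_apply_apply] at h1
    exact h1.symm.trans (hF Q l).symm
  have hFG : ∀ Q' : P', F (G Q') = Q' := by
    intro Q'
    apply eq_of_forall_line hind'
    intro l'
    have h1 := hF (G Q') (φ.symm l')
    rw [φ.apply_symm_apply] at h1
    exact h1.symm.trans (hG Q' l').symm
  refine ⟨⟨F, G, hGF, hFG⟩, fun a b _ Q hQ => ⟨(hF Q a).1 hQ.1, (hF Q b).1 hQ.2⟩, ?_⟩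
  intro Q R S
  constructor
  · intro hcol
    by_cases hdeg : Q = R ∨ Q = S ∨ R = S
    · apply collinear_degenerate
      rcases hdeg with h | h | h
      · exact Or.inl (by rw [h])
      · exact Or.inr (Or.inl (by rw [h]))
      · exact Or.inr (Or.inr (by rw [h]))
    · push_neg at hdeg
      obtain ⟨l, hQl, hRl, hSl⟩ := line_of_collinear hcol hdeg.1
      exact collinear_of_line (φ l) ((hF Q l).1 hQl) ((hF R l).1 hRl) ((hF S l).1 hSl)
  · intro hcol
    by_cases hdeg : Q = R ∨ Q = S ∨ R = S
    · exact collinear_degenerate hdeg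
    · push_neg at hdeg
      have hFQR : (⟨F, G, hGF, hFG⟩ : P ≃ P') Q ≠ (⟨F, G, hGF, hFG⟩ : P ≃ P') R := by
        intro h
        exact hdeg.1 (by rw [← hGF Q, show F Q = F R from h, hGF R])
      obtain ⟨l', hQl', hRl', hSl'⟩ := line_of_collinear hcol hFQR
      have hmem : ∀ X : P, F X ∈ l'.1 → X ∈ (φ.symm l').1 := by
        intro X hX
        have h1 := hF X (φ.symm l')
        rw [φ.apply_symm_apply] at h1
        exact h1.2 hX
      exact collinear_of_line (φ.symm l') (hmem Q hQl') (hmem R hRl') (hmem S hSl')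
end

section
/- In an affine space of dimension ≥ 2, three mutually distinct points Q, R, S are collinear if and only if the stars of lines L(Q), L(R), L(S) have exactly one common line. -/
variable (k V P : Type*) [DivisionRing k] [AddCommGroup V] [Module k V] [AddTorsor V P]

lemma pline_eq_of_mem {s : Set P} (hs : IsPLine k V P s) {Q R : P}
    (hQ : Q ∈ s) (hR : R ∈ s) (hQR : Q ≠ R) :
    s = {q | ∃ t : k, q = t • (R -ᵥ Q) +ᵥ Q} := by
  obtain ⟨p, v, hv, rfl⟩ := hs
  obtain ⟨a, ha⟩ := hQ
  obtain ⟨b, hb⟩ := hR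
  have hRQ : R -ᵥ Q = (b - a) • v := by
    rw [ha, hb, vadd_vsub_vadd_cancel_right, sub_smul]
  have hba : b - a ≠ 0 := by
    intro h
    apply hQR
    have : b = a := sub_eq_zero.mp h
    rw [ha, hb, this]
  ext q
  constructor
  · rintro ⟨t, rfl⟩
    refine ⟨(t - a) * (b - a)⁻¹, ?_⟩
    rw [hRQ, smul_smul, mul_assoc, inv_mul_cancel₀ hba, mul_one, ha,
      vadd_vadd, ← add_smul, sub_add_cancel]
  · rintro ⟨t, rfl⟩
    refine ⟨t * (b - a) + a, ?_⟩
    rw [hRQ, smul_smul, ha, vadd_vadd, ← add_smul]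

/-- In an affine space of dimension at least `2`, three mutually distinct points are
collinear iff their stars of lines have exactly one common line. -/
theorem stmt11 (hdim : 2 ≤ Module.rank k V) (Q R S : P)
    (hQR : Q ≠ R) (hQS : Q ≠ S) (hRS : R ≠ S) :
    Collinear k ({Q, R, S} : Set P) ↔
      ∃! l : PLine k V P, Q ∈ l.1 ∧ R ∈ l.1 ∧ S ∈ l.1 := by
  constructor
  · intro hcol
    rw [collinear_iff_of_mem (show Q ∈ ({Q, R, S} : Set P) by simp)] at hcol
    obtain ⟨v, hv⟩ := hcol
    obtain ⟨r, hrR⟩ := hv R (by simp)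
    obtain ⟨s, hrS⟩ := hv S (by simp)
    have hvne : v ≠ 0 := by
      rintro rfl
      exact hQR (show Q = R by simpa using hrR.symm)
    set L : Set P := {q | ∃ t : k, q = t • v +ᵥ Q} with hL
    have hLline : IsPLine k V P L := ⟨Q, v, hvne, rfl⟩
    have hQL : Q ∈ L := ⟨0, by simp⟩
    have hRL : R ∈ L := ⟨r, hrR⟩
    have hSL : S ∈ L := ⟨s, hrS⟩
    refine ⟨⟨L, hLline⟩, ⟨hQL, hRL, hSL⟩, ?_⟩
    rintro ⟨m, hm⟩ ⟨hQm, hRm, hSm⟩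
    have h1 := pline_eq_of_mem k V P hm hQm hRm hQR
    have h2 := pline_eq_of_mem k V P hLline hQL hRL hQR
    exact Subtype.ext (h1.trans h2.symm)
  · rintro ⟨⟨l, p, v, hv, rfl⟩, ⟨⟨a, ha⟩, ⟨b, hb⟩, ⟨c, hc⟩⟩, -⟩
    rw [collinear_iff_of_mem (show Q ∈ ({Q, R, S} : Set P) by simp)]
    refine ⟨v, ?_⟩
    rintro q hq
    have key : ∀ t : k, q = t • v +ᵥ p → ∃ r : k, q = r • v +ᵥ Q := by
      intro t ht
      exact ⟨t - a, by rw [ht, ha, vadd_vadd, ← add_smul, sub_add_cancel]⟩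
    rcases hq with rfl | rfl | rfl
    · exact key a ha
    · exact key b hb
    · exact key c hc
end

section
/- Let A, A' be affine spaces with dim A' ≥ 3 and φ : L → L' a bijection of line sets such that a ∼ b implies φ(a) ∼' φ(b) (meeting lines go to meeting lines). Then the induced map λ : P → P', a ∩ b ↦ φ(a) ∩ φ(b) for adjacent a, b, is a well-defined injection preserving collinearity and non-collinearity of points, and φ(L(Q)) = L'(λ(Q)) for every point Q. -/
variable (k V P : Type*) [DivisionRing k] [AddCommGroup V] [Module k V] [AddTorsor V P]

variable (k' V' P' : Type*) [DivisionRing k'] [AddCommGroup V'] [Module k' V'] [AddTorsor V' P']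

namespace Stmt13Aux

/-- the set of points on the line through `p` with direction `v` -/
def pts (K : Type*) [DivisionRing K] {W Q : Type*} [AddCommGroup W] [Module K W]
    [AddTorsor W Q] (p : Q) (v : W) : Set Q := {q | ∃ t : K, q = t • v +ᵥ p}

variable {k V P}

lemma vadd_cancel {z : V} {p : P} (h : z +ᵥ p = p) : z = 0 := by
  apply vadd_right_cancel p
  rw [h, zero_vadd]

lemma self_mem_pts (p : P) (v : V) : p ∈ pts k p v := ⟨0, by simp⟩

lemma vadd_mem_pts (p : P) (v : V) : v +ᵥ p ∈ pts k p v := ⟨1, by simp⟩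

lemma isPLine_pts {v : V} (hv : v ≠ 0) (p : P) : IsPLine k V P (pts k p v) :=
  ⟨p, v, hv, rfl⟩

lemma pts_eq_of_mem {p q : P} {v : V} (h : q ∈ pts k p v) : pts k q v = pts k p v := by
  obtain ⟨e, rfl⟩ := h
  ext x
  constructor
  · rintro ⟨t, rfl⟩
    exact ⟨t + e, by rw [vadd_vadd, ← add_smul]⟩
  · rintro ⟨t, rfl⟩
    exact ⟨t - e, by rw [vadd_vadd, ← add_smul, sub_add_cancel]⟩

/-- Key rewriting lemma: a line through two distinct points is the line
joining them. -/
lemma line_rep {s : Set P} (hs : IsPLine k V P s) {x y : P} (hx : x ∈ s) (hy : y ∈ s)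
    (hxy : x ≠ y) : s = pts k x (y -ᵥ x) := by
  obtain ⟨p, v, hv, rfl⟩ := hs
  obtain ⟨a, rfl⟩ := hx
  obtain ⟨b, rfl⟩ := hy
  have hd : (b • v +ᵥ p) -ᵥ (a • v +ᵥ p) = (b - a) • v := by
    rw [vadd_vsub_vadd_cancel_right, sub_smul]
  have hba : b - a ≠ 0 := by
    intro h
    apply hxy
    rw [sub_eq_zero] at h
    rw [h]
  ext q
  constructor
  · rintro ⟨t, rfl⟩
    refine ⟨(t - a) * (b - a)⁻¹, ?_⟩
    rw [hd, smul_smul, vadd_vadd, ← add_smul, mul_assoc, inv_mul_cancel₀ hba, mul_one,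
      sub_add_cancel]
  · rintro ⟨t, rfl⟩
    refine ⟨t * (b - a) + a, ?_⟩
    rw [hd, smul_smul, vadd_vadd, ← add_smul]

/-- Two lines sharing two distinct points are equal. -/
lemma line_eq_of_two_mem {s s' : Set P} (hs : IsPLine k V P s) (hs' : IsPLine k V P s')
    {x y : P} (hx : x ∈ s) (hy : y ∈ s) (hx' : x ∈ s') (hy' : y ∈ s') (hxy : x ≠ y) :
    s = s' := by
  rw [line_rep hs hx hy hxy, line_rep hs' hx' hy' hxy]

/-- Distinct lines meet in at most one point. -/
lemma eq_of_mem_inter {a b : PLine k V P} (hab : a ≠ b) {x y : P}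
    (hxa : x ∈ a.1) (hxb : x ∈ b.1) (hya : y ∈ a.1) (hyb : y ∈ b.1) : x = y := by
  by_contra h
  exact hab (Subtype.ext (line_eq_of_two_mem a.2 b.2 hxa hya hxb hyb h))

/-- A line is contained in any affine subspace containing two of its distinct points. -/
lemma line_subset {s : Set P} (hs : IsPLine k V P s) {x y : P} (hx : x ∈ s) (hy : y ∈ s)
    (hxy : x ≠ y) {σ : AffineSubspace k P} (hxσ : x ∈ σ) (hyσ : y ∈ σ) : s ⊆ σ := by
  rw [line_rep hs hx hy hxy]
  rintro q ⟨t, rfl⟩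
  exact σ.smul_vsub_vadd_mem t hyσ hxσ hxσ

lemma line_nonempty {s : Set P} (hs : IsPLine k V P s) : s.Nonempty := by
  obtain ⟨p, v, hv, rfl⟩ := hs
  exact ⟨p, self_mem_pts p v⟩

lemma exists_pair_mem {s : Set P} (hs : IsPLine k V P s) :
    ∃ x y : P, x ∈ s ∧ y ∈ s ∧ x ≠ y := by
  obtain ⟨p, v, hv, rfl⟩ := hs
  refine ⟨p, v +ᵥ p, self_mem_pts p v, vadd_mem_pts p v, fun h => hv (vadd_cancel h.symm)⟩

/-- lines as subsets of the affine space are collinear point sets -/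
lemma collinear_of_isPLine {s : Set P} (hs : IsPLine k V P s) : Collinear k s := by
  obtain ⟨p, v, hv, rfl⟩ := hs
  show Collinear k (pts k p v)
  rw [collinear_iff_of_mem (self_mem_pts p v)]
  exact ⟨v, fun q hq => hq⟩

/-- our hand-rolled independence predicate (avoids matrix indexing) -/
def Indep (K : Type*) [DivisionRing K] {W : Type*} [AddCommGroup W] [Module K W]
    (u w : W) : Prop := ∀ s t : K, s • u + t • w = 0 → s = 0 ∧ t = 0

lemma Indep.left_ne {u w : V} (h : Indep k u w) : u ≠ 0 := by
  intro hu
  have := (h 1 0 (by simp [hu])).1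
  simp at this

lemma Indep.right_ne {u w : V} (h : Indep k u w) : w ≠ 0 := by
  intro hw
  have := (h 0 1 (by simp [hw])).2
  simp at this

/-- distinct lines through the same point from an independent pair -/
lemma pts_ne_of_indep {u w : V} (h : Indep k u w) (p : P) : pts k p u ≠ pts k p w := by
  intro he
  have : u +ᵥ p ∈ pts k p w := he ▸ vadd_mem_pts p u
  obtain ⟨t, ht⟩ := this
  have : (1 : k) • u + (-t) • w = 0 := by
    have h2 : u = t • w := vadd_right_cancel p ht
    rw [one_smul, h2, neg_smul, add_neg_cancel]
  exact one_ne_zero ((h _ _ this).1)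

/-- from two distinct lines, get an independent pair of vectors -/
lemma exists_indep_of_two_lines {a b : Set P} (ha : IsPLine k V P a) (hb : IsPLine k V P b)
    (hab : a ≠ b) : ∃ u w : V, Indep k u w := by
  obtain ⟨p, v, hv, rfl⟩ := ha
  obtain ⟨q, w, hw, rfl⟩ := hb
  by_cases hiv : Indep k v w
  · exact ⟨v, w, hiv⟩
  -- v, w dependent: rewrite b as a line with direction v
  rw [Indep] at hiv
  push_neg at hiv
  obtain ⟨s, t, hst, hne⟩ := hiv
  have ht : t ≠ 0 := by
    intro h0
    rw [h0, zero_smul, add_zero] at hst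
    rcases smul_eq_zero.mp hst with h | h
    · exact hne h h0
    · exact hv h
  have hwv : w = (-(t⁻¹ * s)) • v := by
    have : t • w = -(s • v) := by
      rw [eq_neg_iff_add_eq_zero, add_comm]; exact hst
    calc w = t⁻¹ • t • w := by rw [smul_smul, inv_mul_cancel₀ ht, one_smul]
    _ = t⁻¹ • (-(s • v)) := by rw [this]
    _ = (-(t⁻¹ * s)) • v := by rw [smul_neg, smul_smul, neg_smul]
  set d := -(t⁻¹ * s) with hd
  have hdz : d ≠ 0 := by
    intro h0
    rw [h0, zero_smul] at hwv
    exact hw hwv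
  have hbv : (pts k q w : Set P) = pts k q v := by
    ext x
    constructor
    · rintro ⟨r, rfl⟩
      exact ⟨r * d, by rw [hwv, smul_smul]⟩
    · rintro ⟨r, rfl⟩
      refine ⟨r * d⁻¹, ?_⟩
      rw [hwv, smul_smul, mul_assoc, inv_mul_cancel₀ hdz, mul_one]
  refine ⟨v, q -ᵥ p, fun s' t' hrel => ?_⟩
  have ht' : t' = 0 := by
    by_contra h0
    have hq : q = (-(t'⁻¹ * s')) • v +ᵥ p := by
      have : t' • (q -ᵥ p) = -(s' • v) := by
        rw [eq_neg_iff_add_eq_zero, add_comm]; exact hrel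
      have h2 : q -ᵥ p = (-(t'⁻¹ * s')) • v := by
        calc q -ᵥ p = t'⁻¹ • t' • (q -ᵥ p) := by
              rw [smul_smul, inv_mul_cancel₀ h0, one_smul]
        _ = t'⁻¹ • (-(s' • v)) := by rw [this]
        _ = (-(t'⁻¹ * s')) • v := by rw [smul_neg, smul_smul, neg_smul]
      rw [eq_vadd_iff_vsub_eq]
      exact h2
    apply hab
    show (pts k p v : Set P) = pts k q w
    rw [hbv, show (pts k q v : Set P) = pts k p v from pts_eq_of_mem ⟨_, hq⟩]
  refine ⟨?_, ht'⟩
  rw [ht', zero_smul, add_zero] at hrel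
  rcases smul_eq_zero.mp hrel with h | h
  · exact h
  · exact absurd h hv

/-- Given an independent pair, every line misses some point. -/
lemma exists_not_mem_line {u w : V} (h : Indep k u w) {s : Set P}
    (hs : IsPLine k V P s) : ∃ X : P, X ∉ s := by
  obtain ⟨p, v, hv, rfl⟩ := hs
  by_cases hu : u +ᵥ p ∈ pts k p v
  · refine ⟨w +ᵥ p, fun hwp => ?_⟩
    obtain ⟨a, hA⟩ := hu
    obtain ⟨b, hB⟩ := hwp
    have hua : u = a • v := vadd_right_cancel p hA
    have hwb : w = b • v := vadd_right_cancel p hB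
    have hb0 : b ≠ 0 := by
      intro h0; rw [h0, zero_smul] at hwb; exact h.right_ne hwb
    have : (1 : k) • u + (-(a * b⁻¹)) • w = 0 := by
      rw [one_smul, hua, hwb, smul_smul, neg_mul, mul_assoc, inv_mul_cancel₀ hb0, mul_one,
        neg_smul, add_neg_cancel]
    exact one_ne_zero ((h _ _ this).1)
  · exact ⟨u +ᵥ p, hu⟩

section Rank

variable (hdim : 3 ≤ Module.rank k V)
include hdim

lemma exists_not_mem_span_pair (x y : V) : ∃ v : V, v ∉ Submodule.span k {x, y} := by
  by_contra h
  push_neg at h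
  have htop : Submodule.span k ({x, y} : Set V) = ⊤ := by
    rw [Submodule.eq_top_iff']
    exact h
  have h1 : Module.rank k V ≤ 2 := by
    have := rank_span_le (R := k) (M := V) ({x, y} : Set V)
    rw [htop] at this
    have h2 : Module.rank k (⊤ : Submodule k V) = Module.rank k V := rank_top k V
    rw [h2] at this
    refine this.trans ?_
    refine (Cardinal.mk_insert_le).trans ?_
    rw [Cardinal.mk_singleton]
    norm_num
  have : (3 : Cardinal) ≤ 2 := hdim.trans h1
  norm_num at this

lemma exists_indep_of_rank : ∃ u w : V, Indep k u w := by
  obtain ⟨u, hu⟩ := exists_not_mem_span_pair hdim (0 : V) 0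
  have hu0 : u ≠ 0 := by
    intro h
    exact hu (by rw [h]; exact Submodule.zero_mem _)
  obtain ⟨w, hw⟩ := exists_not_mem_span_pair hdim u u
  refine ⟨u, w, fun s t hst => ?_⟩
  have ht : t = 0 := by
    by_contra h0
    apply hw
    have : w = (-(t⁻¹ * s)) • u := by
      have h1 : t • w = -(s • u) := by rw [eq_neg_iff_add_eq_zero, add_comm]; exact hst
      calc w = t⁻¹ • t • w := by rw [smul_smul, inv_mul_cancel₀ h0, one_smul]
      _ = t⁻¹ • (-(s • u)) := by rw [h1]
      _ = (-(t⁻¹ * s)) • u := by rw [smul_neg, smul_smul, neg_smul]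
    rw [this]
    exact Submodule.smul_mem _ _ (Submodule.subset_span (by simp))
  refine ⟨?_, ht⟩
  rw [ht, zero_smul, add_zero] at hst
  rcases smul_eq_zero.mp hst with h | h
  · exact h
  · exact absurd h hu0

/-- two distinct lines avoiding any given point, from `rank ≥ 3` -/
lemma exists_two_lines_avoiding (S : P) :
    ∃ a b : PLine k V P, a ≠ b ∧ S ∉ a.1 ∧ S ∉ b.1 := by
  obtain ⟨u, w, h⟩ := exists_indep_of_rank hdim
  refine ⟨⟨pts k (u +ᵥ S) w, isPLine_pts h.right_ne _⟩,
          ⟨pts k (w +ᵥ S) u, isPLine_pts h.left_ne _⟩, ?_, ?_, ?_⟩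
  · intro he
    have h1 : u +ᵥ S ∈ pts k (w +ᵥ S) u := by
      have := congrArg Subtype.val he
      simp only at this
      rw [← this]
      exact self_mem_pts _ _
    obtain ⟨t, h2⟩ := h1
    rw [vadd_vadd] at h2
    have h3 : u = t • u + w := vadd_right_cancel S h2
    have h4 : (t - 1) • u + (1 : k) • w = 0 := by
      rw [sub_smul, one_smul, one_smul, sub_add_eq_add_sub, ← h3, sub_self]
    exact one_ne_zero (h _ _ h4).2
  · rintro ⟨t, h2⟩
    rw [vadd_vadd] at h2
    have h3 : (1 : k) • u + t • w = 0 := by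
      have := vadd_cancel (z := t • w + u) (p := S) h2.symm
      rw [one_smul, add_comm]
      exact this
    exact one_ne_zero (h _ _ h3).1
  · rintro ⟨t, h2⟩
    rw [vadd_vadd] at h2
    have h3 : t • u + (1 : k) • w = 0 := by
      have := vadd_cancel (z := t • u + w) (p := S) h2.symm
      rw [one_smul]
      exact this
    exact one_ne_zero (h _ _ h3).2

end Rank


section Star

variable {k' V' P' : Type*} [DivisionRing k'] [AddCommGroup V'] [Module k' V']
  [AddTorsor V' P']

/-- The star of lines through `Q` is mapped by `φ` into a star of lines in `P'`. -/
lemma star_lemma (hdim' : 3 ≤ Module.rank k' V')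
    (φ : PLine k V P ≃ PLine k' V' P')
    (hmono : ∀ a b : PLine k V P, PMeets k V P a b → PMeets k' V' P' (φ a) (φ b))
    {u w : V} (huw : Indep k u w) (Q : P) :
    ∃ S' : P', ∀ e : PLine k V P, Q ∈ e.1 → S' ∈ (φ e).1 := by
  set a : PLine k V P := ⟨pts k Q u, isPLine_pts huw.left_ne Q⟩ with ha
  set b : PLine k V P := ⟨pts k Q w, isPLine_pts huw.right_ne Q⟩ with hb
  have hab : a ≠ b := fun h => pts_ne_of_indep huw Q (congrArg Subtype.val h)
  have hQa : Q ∈ a.1 := self_mem_pts Q u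
  have hQb : Q ∈ b.1 := self_mem_pts Q w
  have hfab : φ a ≠ φ b := fun h => hab (φ.injective h)
  obtain ⟨S', hS'a, hS'b⟩ := hmono a b ⟨Q, hQa, hQb⟩
  refine ⟨S', ?_⟩
  by_contra hcon
  push_neg at hcon
  obtain ⟨c, hQc, hS'c⟩ := hcon
  have hfca : φ c ≠ φ a := fun h => hS'c (h ▸ hS'a)
  have hfcb : φ c ≠ φ b := fun h => hS'c (h ▸ hS'b)
  obtain ⟨A', hA'a, hA'c⟩ := hmono a c ⟨Q, hQa, hQc⟩
  obtain ⟨B', hB'b, hB'c⟩ := hmono b c ⟨Q, hQb, hQc⟩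
  have hA'S : A' ≠ S' := fun h => hS'c (h ▸ hA'c)
  have hB'S : B' ≠ S' := fun h => hS'c (h ▸ hB'c)
  have hAB : A' ≠ B' := by
    intro h
    exact hA'S (eq_of_mem_inter hfab hA'a (h ▸ hB'b) hS'a hS'b)
  set W : Submodule k' V' := Submodule.span k' {A' -ᵥ S', B' -ᵥ S'} with hW
  set σ : AffineSubspace k' P' := AffineSubspace.mk' S' W with hσ
  have hS'σ : S' ∈ σ := AffineSubspace.self_mem_mk' _ _
  have hA'σ : A' ∈ σ := by
    rw [hσ, AffineSubspace.mem_mk']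
    exact Submodule.subset_span (Set.mem_insert _ _)
  have hB'σ : B' ∈ σ := by
    rw [hσ, AffineSubspace.mem_mk']
    exact Submodule.subset_span (Set.mem_insert_of_mem _ rfl)
  have hfa_sub : (φ a).1 ⊆ σ := line_subset (φ a).2 hS'a hA'a (Ne.symm hA'S) hS'σ hA'σ
  have hfb_sub : (φ b).1 ⊆ σ := line_subset (φ b).2 hS'b hB'b (Ne.symm hB'S) hS'σ hB'σ
  have hfc_sub : (φ c).1 ⊆ σ := line_subset (φ c).2 hA'c hB'c hAB hA'σ hB'σ
  have key : ∀ e : PLine k V P, Q ∈ e.1 → (φ e).1 ⊆ σ := by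
    intro e hQe
    by_cases hea : e = a
    · rw [hea]; exact hfa_sub
    by_cases heb : e = b
    · rw [heb]; exact hfb_sub
    by_cases hec : e = c
    · rw [hec]; exact hfc_sub
    obtain ⟨x, hxa, hxe⟩ := hmono a e ⟨Q, hQa, hQe⟩
    obtain ⟨z, hzc, hze⟩ := hmono c e ⟨Q, hQc, hQe⟩
    by_cases hxz : x = z
    · have hxA : x = A' := eq_of_mem_inter hfca (hxz ▸ hzc) hxa hA'c hA'a
      obtain ⟨y, hyb, hye⟩ := hmono b e ⟨Q, hQb, hQe⟩
      have hyA : A' ≠ y := by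
        intro h
        exact hA'S (eq_of_mem_inter hfab hA'a (h ▸ hyb) hS'a hS'b)
      exact line_subset (φ e).2 (hxA ▸ hxe) hye hyA hA'σ (hfb_sub hyb)
    · exact line_subset (φ e).2 hxe hze hxz (hfa_sub hxa) (hfc_sub hzc)
  obtain ⟨v', hv'⟩ := exists_not_mem_span_pair hdim' (A' -ᵥ S') (B' -ᵥ S')
  have hAS0 : A' -ᵥ S' ≠ 0 := vsub_ne_zero.2 hA'S
  set m' : PLine k' V' P' := ⟨pts k' (v' +ᵥ S') (A' -ᵥ S'), isPLine_pts hAS0 _⟩ with hm'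
  have hdisj : ∀ q ∈ m'.1, q ∉ σ := by
    rintro q ⟨t, rfl⟩ hq
    rw [hσ, AffineSubspace.mem_mk'] at hq
    rw [vadd_vadd, vadd_vsub] at hq
    apply hv'
    have h2 : t • (A' -ᵥ S') ∈ W := W.smul_mem t (Submodule.subset_span (Set.mem_insert _ _))
    have := W.sub_mem hq h2
    simpa using this
  set e₀ : PLine k V P := φ.symm m' with he₀
  have hfe₀ : φ e₀ = m' := φ.apply_symm_apply m'
  by_cases hQe₀ : Q ∈ e₀.1
  · have hsub := key e₀ hQe₀
    rw [hfe₀] at hsub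
    have hbase : v' +ᵥ S' ∈ m'.1 := self_mem_pts _ _
    exact hdisj _ hbase (hsub hbase)
  · obtain ⟨X, hXe₀⟩ := line_nonempty e₀.2
    have hXQ : X ≠ Q := fun h => hQe₀ (h ▸ hXe₀)
    set ℓ : PLine k V P := ⟨pts k Q (X -ᵥ Q), isPLine_pts (vsub_ne_zero.2 hXQ) Q⟩ with hℓ
    have hQℓ : Q ∈ ℓ.1 := self_mem_pts _ _
    have hXℓ : X ∈ ℓ.1 := ⟨1, by rw [one_smul, vsub_vadd]⟩
    obtain ⟨y, hyℓ, hym⟩ := hmono ℓ e₀ ⟨X, hXℓ, hXe₀⟩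
    rw [hfe₀] at hym
    exact hdisj y hym (key ℓ hQℓ hyℓ)

end Star

end Stmt13Aux

open Stmt13Aux

/-- For a bijection `φ` of line sets with `dim A' ≥ 3` taking meeting lines to meeting
lines, the induced point map `λ` (sending `a ∩ b` to `φ a ∩ φ b` for adjacent lines) is a
well-defined injection preserving collinearity and non-collinearity, and `φ` maps the star
of `Q` onto the star of `λ Q`. -/

theorem stmt13 (hdim' : 3 ≤ Module.rank k' V')
    (φ : PLine k V P ≃ PLine k' V' P')
    (hmono : ∀ a b : PLine k V P, PMeets k V P a b → PMeets k' V' P' (φ a) (φ b)) :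
    ∃ lam : P → P',
      Function.Injective lam ∧
      (∀ a b : PLine k V P, a ≠ b → ∀ Q : P, Q ∈ a.1 ∩ b.1 →
        lam Q ∈ (φ a).1 ∩ (φ b).1) ∧
      (∀ Q R S : P,
        Collinear k ({Q, R, S} : Set P) ↔
          Collinear k' ({lam Q, lam R, lam S} : Set P')) ∧
      (∀ Q : P, ⇑φ '' {l : PLine k V P | Q ∈ l.1} =
        {l' : PLine k' V' P' | lam Q ∈ l'.1}) := by
  classical
  -- an independent pair in V, obtained by pulling back two distinct lines of P'
  obtain ⟨p'⟩ := (inferInstance : Nonempty P')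
  obtain ⟨u', w', hu'w'⟩ := exists_indep_of_rank hdim'
  have huw : ∃ u w : V, Indep k u w := by
    set a' : PLine k' V' P' := ⟨pts k' p' u', isPLine_pts hu'w'.left_ne p'⟩ with ha'
    set b' : PLine k' V' P' := ⟨pts k' p' w', isPLine_pts hu'w'.right_ne p'⟩ with hb'
    have hab' : a' ≠ b' := fun h => pts_ne_of_indep hu'w' p' (congrArg Subtype.val h)
    have hd : φ.symm a' ≠ φ.symm b' := fun h => hab' (φ.symm.injective h)
    exact exists_indep_of_two_lines (φ.symm a').2 (φ.symm b').2
      (fun h => hd (Subtype.ext h))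
  obtain ⟨u, w, huw⟩ := huw
  -- the point map
  have hstar := fun Q : P => star_lemma hdim' φ hmono huw Q
  set lam : P → P' := fun Q => (hstar Q).choose with hlamdef
  have hlam : ∀ (Q : P) (e : PLine k V P), Q ∈ e.1 → lam Q ∈ (φ e).1 :=
    fun Q => (hstar Q).choose_spec
  -- injectivity
  have hinj : Function.Injective lam := by
    intro Q R hQR
    by_contra hne
    have hRQ : R ≠ Q := fun h => hne h.symm
    set ℓ : PLine k V P := ⟨pts k Q (R -ᵥ Q), isPLine_pts (vsub_ne_zero.2 hRQ) Q⟩ with hℓ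
    have hQℓ : Q ∈ ℓ.1 := self_mem_pts _ _
    have hRℓ : R ∈ ℓ.1 := ⟨1, by rw [one_smul, vsub_vadd]⟩
    -- every point off ℓ has the same image S' = lam Q
    have hX : ∀ X : P, X ∉ ℓ.1 → lam X = lam Q := by
      intro X hXℓ
      have hQX : Q ≠ X := fun h => hXℓ (h ▸ hQℓ)
      have hRX : R ≠ X := fun h => hXℓ (h ▸ hRℓ)
      set ℓ1 : PLine k V P := ⟨pts k X (Q -ᵥ X), isPLine_pts (vsub_ne_zero.2 hQX) X⟩
      set ℓ2 : PLine k V P := ⟨pts k X (R -ᵥ X), isPLine_pts (vsub_ne_zero.2 hRX) X⟩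
      have hXℓ1 : X ∈ ℓ1.1 := self_mem_pts _ _
      have hQℓ1 : Q ∈ ℓ1.1 := ⟨1, by rw [one_smul, vsub_vadd]⟩
      have hXℓ2 : X ∈ ℓ2.1 := self_mem_pts _ _
      have hRℓ2 : R ∈ ℓ2.1 := ⟨1, by rw [one_smul, vsub_vadd]⟩
      have h12 : ℓ1 ≠ ℓ2 := by
        intro h
        have hR1 : R ∈ ℓ1.1 := by rw [h]; exact hRℓ2
        have : ℓ1.1 = ℓ.1 := line_eq_of_two_mem ℓ1.2 ℓ.2 hQℓ1 hR1 hQℓ hRℓ hRQ.symm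
        exact hXℓ (this ▸ hXℓ1)
      have hf12 : φ ℓ1 ≠ φ ℓ2 := fun h => h12 (φ.injective h)
      by_contra hXQ'
      have h1 : (φ ℓ1).1 = (φ ℓ2).1 := by
        refine line_eq_of_two_mem (φ ℓ1).2 (φ ℓ2).2 (hlam X ℓ1 hXℓ1) (hlam Q ℓ1 hQℓ1)
          (hlam X ℓ2 hXℓ2) ?_ hXQ'
        have := hlam R ℓ2 hRℓ2
        rwa [← hQR] at this
      exact hf12 (Subtype.ext h1)
    -- hence all lines other than ℓ pass through lam Q after applying φ
    have hall : ∀ d : PLine k V P, d ≠ ℓ → lam Q ∈ (φ d).1 := by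
      intro d hd
      obtain ⟨x, y, hx, hy, hxy⟩ := exists_pair_mem d.2
      have : ∃ X, X ∈ d.1 ∧ X ∉ ℓ.1 := by
        by_cases hxℓ : x ∈ ℓ.1
        · refine ⟨y, hy, fun hyℓ => ?_⟩
          exact hd (Subtype.ext (line_eq_of_two_mem d.2 ℓ.2 hx hy hxℓ hyℓ hxy))
        · exact ⟨x, hx, hxℓ⟩
      obtain ⟨X, hXd, hXnl⟩ := this
      have := hlam X d hXd
      rwa [hX X hXnl] at this
    obtain ⟨a', b', hne', hSa', hSb'⟩ := exists_two_lines_avoiding hdim' (lam Q)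
    have hda : φ.symm a' = ℓ := by
      by_contra h
      exact hSa' (by have := hall _ h; rwa [φ.apply_symm_apply] at this)
    have hdb : φ.symm b' = ℓ := by
      by_contra h
      exact hSb' (by have := hall _ h; rwa [φ.apply_symm_apply] at this)
    exact hne' (φ.symm.injective (hda.trans hdb.symm))
  refine ⟨lam, hinj, ?_, ?_, ?_⟩
  · rintro a b hab Q ⟨hQa, hQb⟩
    exact ⟨hlam Q a hQa, hlam Q b hQb⟩
  · intro Q R S
    constructor
    · intro hcol
      obtain ⟨v, hv⟩ := (collinear_iff_of_mem (Set.mem_insert Q {R, S})).1 hcol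
      by_cases hv0 : v = 0
      · obtain ⟨r, hr⟩ := hv R (by simp)
        obtain ⟨s, hs⟩ := hv S (by simp)
        rw [hv0, smul_zero, zero_vadd] at hr hs
        have : ({lam Q, lam R, lam S} : Set P') ⊆ {lam Q} := by
          rw [hr, hs]; simp
        exact (collinear_singleton k' (lam Q)).subset this
      · set ℓ : PLine k V P := ⟨pts k Q v, isPLine_pts hv0 Q⟩ with hℓ
        have hQℓ : Q ∈ ℓ.1 := self_mem_pts _ _
        have hRℓ : R ∈ ℓ.1 := hv R (by simp)
        have hSℓ : S ∈ ℓ.1 := hv S (by simp)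
        refine (collinear_of_isPLine (φ ℓ).2).subset ?_
        rintro x (rfl | rfl | rfl)
        · exact hlam Q ℓ hQℓ
        · exact hlam R ℓ hRℓ
        · exact hlam S ℓ hSℓ
    · intro hcol'
      by_cases hQR : Q = R
      · refine (collinear_pair k Q S).subset ?_
        rintro x (rfl | rfl | rfl) <;> simp [hQR]
      by_cases hRS : R = S
      · refine (collinear_pair k Q R).subset ?_
        rintro x (rfl | rfl | rfl) <;> simp [hRS]
      by_cases hQS : Q = S
      · refine (collinear_pair k Q R).subset ?_
        rintro x (rfl | rfl | rfl) <;> simp [hQS]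
      -- all distinct
      have hlQR : lam Q ≠ lam R := fun h => hQR (hinj h)
      have hlRS : lam R ≠ lam S := fun h => hRS (hinj h)
      obtain ⟨v', hv'⟩ := (collinear_iff_of_mem (Set.mem_insert (lam Q) {lam R, lam S})).1 hcol'
      have hv'0 : v' ≠ 0 := by
        intro h0
        obtain ⟨r, hr⟩ := hv' (lam R) (by simp)
        rw [h0, smul_zero, zero_vadd] at hr
        exact hlQR hr.symm
      set m' : PLine k' V' P' := ⟨pts k' (lam Q) v', isPLine_pts hv'0 _⟩ with hm'
      have hQm : lam Q ∈ m'.1 := self_mem_pts _ _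
      have hRm : lam R ∈ m'.1 := hv' (lam R) (by simp)
      have hSm : lam S ∈ m'.1 := hv' (lam S) (by simp)
      set ℓ1 : PLine k V P := ⟨pts k Q (R -ᵥ Q),
        isPLine_pts (vsub_ne_zero.2 (Ne.symm hQR)) Q⟩ with hℓ1
      set ℓ2 : PLine k V P := ⟨pts k R (S -ᵥ R),
        isPLine_pts (vsub_ne_zero.2 (Ne.symm hRS)) R⟩ with hℓ2
      have hQℓ1 : Q ∈ ℓ1.1 := self_mem_pts _ _
      have hRℓ1 : R ∈ ℓ1.1 := ⟨1, by rw [one_smul, vsub_vadd]⟩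
      have hRℓ2 : R ∈ ℓ2.1 := self_mem_pts _ _
      have hSℓ2 : S ∈ ℓ2.1 := ⟨1, by rw [one_smul, vsub_vadd]⟩
      have h1 : (φ ℓ1).1 = m'.1 :=
        line_eq_of_two_mem (φ ℓ1).2 m'.2 (hlam Q ℓ1 hQℓ1) (hlam R ℓ1 hRℓ1) hQm hRm hlQR
      have h2 : (φ ℓ2).1 = m'.1 :=
        line_eq_of_two_mem (φ ℓ2).2 m'.2 (hlam R ℓ2 hRℓ2) (hlam S ℓ2 hSℓ2) hRm hSm hlRS
      have h12 : ℓ1 = ℓ2 := φ.injective (Subtype.ext (h1.trans h2.symm))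
      have hSℓ1 : S ∈ ℓ1.1 := by rw [h12]; exact hSℓ2
      refine (collinear_of_isPLine ℓ1.2).subset ?_
      rintro x (rfl | rfl | rfl)
      · exact hQℓ1
      · exact hRℓ1
      · exact hSℓ1
  · intro Q
    ext l'
    constructor
    · rintro ⟨e, hQe, rfl⟩
      exact hlam Q e hQe
    · intro hl'
      refine ⟨φ.symm l', ?_, φ.apply_symm_apply l'⟩
      show Q ∈ (φ.symm l').1
      by_contra hQc
      obtain ⟨X, hXc⟩ := line_nonempty (φ.symm l').2
      have hXQ : X ≠ Q := fun h => hQc (h ▸ hXc)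
      have hlamX : lam X ∈ l'.1 := by
        have := hlam X (φ.symm l') hXc
        rwa [φ.apply_symm_apply] at this
      have hne : lam X ≠ lam Q := fun h => hXQ (hinj h)
      set ℓ : PLine k V P := ⟨pts k Q (X -ᵥ Q), isPLine_pts (vsub_ne_zero.2 hXQ) Q⟩ with hℓ
      have hQℓ : Q ∈ ℓ.1 := self_mem_pts _ _
      have hXℓ : X ∈ ℓ.1 := ⟨1, by rw [one_smul, vsub_vadd]⟩
      have h1 : (φ ℓ).1 = l'.1 :=
        line_eq_of_two_mem (φ ℓ).2 l'.2 (hlam X ℓ hXℓ) (hlam Q ℓ hQℓ) hlamX hl' hne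
      have h2 : ℓ = φ.symm l' := φ.injective
        (show φ ℓ = φ (φ.symm l') by rw [φ.apply_symm_apply]; exact Subtype.ext h1)
      exact hQc (h2 ▸ hQℓ)
end

section
/- Let A, A' be affine spaces, dim A' ≥ 3, and φ : L → L' a bijection with a ∼ b ⟹ φ(a) ∼' φ(b). Then dim A ≥ 3. -/
variable (k V P : Type*) [DivisionRing k] [AddCommGroup V] [Module k V] [AddTorsor V P]

variable (k' V' P' : Type*) [DivisionRing k'] [AddCommGroup V'] [Module k' V'] [AddTorsor V' P']

section AuxStmt14

variable {K W : Type*} [DivisionRing K] [AddCommGroup W] [Module K W]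

open Submodule Cardinal

/-- Three vectors built by successive non-membership give rank ≥ 3. -/
lemma aux14_indep3 {u w e : W} (hu : u ≠ 0) (hw : w ∉ span K {u})
    (he : e ∉ span K {u, w}) : 3 ≤ Module.rank K W := by
  have h1 : LinearIndependent K ![u] := LinearIndependent.of_subsingleton (0 : Fin 1) hu
  have h2 : LinearIndependent K (Fin.cons w ![u] : Fin 2 → W) := by
    rw [linearIndependent_fin_cons]
    refine ⟨h1, ?_⟩
    simpa using hw
  have h3 : LinearIndependent K (Fin.cons e (Fin.cons w ![u]) : Fin 3 → W) := by
    rw [linearIndependent_fin_cons]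
    refine ⟨h2, ?_⟩
    have : Set.range (Fin.cons w ![u] : Fin 2 → W) = {u, w} := by
      ext x
      simp [Fin.range_cons, Set.pair_comm]
    rwa [this]
  have := h3.cardinal_lift_le_rank
  simpa using this

/-- If rank ≥ 3 then the span of any pair misses some vector. -/
lemma aux14_exists_notmem (h3 : 3 ≤ Module.rank K W) (a b : W) :
    ∃ e : W, e ∉ span K {a, b} := by
  by_contra h
  push_neg at h
  have htop : span K ({a, b} : Set W) = ⊤ := eq_top_iff'.2 h
  have hle : Module.rank K (span K ({a, b} : Set W)) ≤ #({a, b} : Set W) :=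
    rank_span_le _
  have hcard : #({a, b} : Set W) ≤ 2 := by
    calc #({a, b} : Set W) ≤ #({b} : Set W) + 1 := Cardinal.mk_insert_le
    _ = 2 := by simp; norm_num
  rw [htop, rank_top] at hle
  have : (3 : Cardinal) ≤ 2 := le_trans h3 (le_trans hle hcard)
  norm_num at this

/-- In a space of rank ≥ 3, given two directions and an offset, there is a line
(direction `w`, offset `x`) disjoint from both given lines. -/
lemma aux14_exists_wx (exn : ∀ a b : W, ∃ e : W, e ∉ span K {a, b})
    (u v d : W) (hu : u ≠ 0) :
    ∃ w x : W, w ≠ 0 ∧ x ∉ span K {u, w} ∧ x - d ∉ span K {v, w} := by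
  by_cases hd : d ∈ span K {u, v}
  · -- case 1 : take w = u, x = e outside span {u,v}
    obtain ⟨e, he⟩ := exn u v
    rw [mem_span_pair] at hd
    obtain ⟨m', n', hd'⟩ := hd
    refine ⟨u, e, hu, ?_, ?_⟩
    · intro hmem
      rw [mem_span_pair] at hmem
      obtain ⟨m, n, hmn⟩ := hmem
      apply he
      rw [mem_span_pair]
      refine ⟨m + n, 0, ?_⟩
      rw [← hmn, add_smul, zero_smul, add_zero]
    · intro hmem
      rw [mem_span_pair] at hmem
      obtain ⟨m, n, hmn⟩ := hmem
      apply he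
      rw [mem_span_pair]
      refine ⟨n + m', m + n', ?_⟩
      have he2 : e = (m • v + n • u) + (m' • u + n' • v) := by
        rw [hmn, hd']; abel
      rw [he2, add_smul, add_smul]; abel
  · -- case 2 : w = u + d
    have hwne : u + d ≠ 0 := by
      intro h0
      apply hd
      rw [mem_span_pair]
      refine ⟨-1, 0, ?_⟩
      rw [eq_neg_of_add_eq_zero_right h0, neg_one_smul, zero_smul, add_zero]
    by_cases hva : v ∈ span K {u, d}
    · -- subcase 2b : x = e outside span {u, d}
      obtain ⟨e, he⟩ := exn u d
      rw [mem_span_pair] at hva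
      obtain ⟨m', n', hv'⟩ := hva
      refine ⟨u + d, e, hwne, ?_, ?_⟩
      · intro hmem
        rw [mem_span_pair] at hmem
        obtain ⟨m, n, hmn⟩ := hmem
        apply he
        rw [mem_span_pair]
        refine ⟨m + n, n, ?_⟩
        rw [← hmn, add_smul, smul_add]; abel
      · intro hmem
        rw [mem_span_pair] at hmem
        obtain ⟨m, n, hmn⟩ := hmem
        apply he
        rw [mem_span_pair]
        refine ⟨m * m' + n, m * n' + n + 1, ?_⟩
        have he2 : e = (m • v + n • (u + d)) + d := by rw [hmn]; abel
        rw [he2, ← hv']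
        simp only [smul_add, add_smul, one_smul, ← smul_smul]
        abel
    · -- subcase 2a : x = v
      refine ⟨u + d, v, hwne, ?_, ?_⟩
      · intro hmem
        rw [mem_span_pair] at hmem
        obtain ⟨m, n, hmn⟩ := hmem
        apply hva
        rw [mem_span_pair]
        refine ⟨m + n, n, ?_⟩
        rw [← hmn, add_smul, smul_add]; abel
      · intro hmem
        rw [mem_span_pair] at hmem
        obtain ⟨m, n, hmn⟩ := hmem
        rw [smul_add] at hmn
        -- hmn : m • v + (n • u + n • d) = v - d
        by_cases hm : m = 1
        · rw [hm, one_smul] at hmn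
          have key0 : n • u + (n • d + d) = 0 := by
            have h2 := congrArg (fun z => z - v + d) hmn
            rw [show v + (n • u + n • d) - v + d = n • u + (n • d + d) from by abel,
                show v - d - v + d = (0 : W) from by abel] at h2
            exact h2
          by_cases hn1 : (n : K) + 1 = 0
          · have hnz : (n : K) ≠ 0 := by
              intro h0; rw [h0, zero_add] at hn1; exact one_ne_zero hn1
            have hu0 : n • u = 0 := by
              have h3 : n • d + d = (n + 1) • d := by rw [add_smul, one_smul]
              rw [h3, hn1, zero_smul, add_zero] at key0
              exact key0
            apply hu
            have := congrArg (fun z => (n : K)⁻¹ • z) hu0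
            simpa [smul_smul, inv_mul_cancel₀ hnz] using this
          · apply hd
            rw [mem_span_pair]
            refine ⟨-((n + 1)⁻¹ * n), 0, ?_⟩
            have h1 : (n + 1) • d = -(n • u) := by
              have h3 : n • d + d = (n + 1) • d := by rw [add_smul, one_smul]
              rw [h3] at key0
              rw [add_comm] at key0
              exact eq_neg_of_add_eq_zero_left key0
            have hdd : d = -((n + 1)⁻¹ * n) • u := by
              have h4 := congrArg (fun z => (n + 1 : K)⁻¹ • z) h1
              rw [smul_smul, inv_mul_cancel₀ hn1, one_smul, smul_neg, smul_smul] at h4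
              rw [h4, neg_smul]
            rw [hdd, zero_smul, add_zero]
        · have hm' : (1 : K) - m ≠ 0 := sub_ne_zero.mpr (Ne.symm hm)
          have key : (1 - m) • v = n • u + (n + 1) • d := by
            rw [sub_smul, one_smul, add_smul, one_smul]
            have h2 := congrArg (fun z => z + d - m • v) hmn
            rw [show m • v + (n • u + n • d) + d - m • v = n • u + (n • d + d) from by abel,
                show v - d + d - m • v = v - m • v from by abel] at h2
            exact h2.symm
          apply hva
          rw [mem_span_pair]
          refine ⟨(1 - m)⁻¹ * n, (1 - m)⁻¹ * (n + 1), ?_⟩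
          have h3 := congrArg (fun z => (1 - m : K)⁻¹ • z) key
          rw [smul_smul, inv_mul_cancel₀ hm', one_smul, smul_add, smul_smul, smul_smul] at h3
          exact h3.symm

variable {Q : Type*} [AddTorsor W Q]

/-- In rank ≥ 3, any two lines admit a line disjoint from both. -/
lemma aux14_exists_disjoint (h3 : 3 ≤ Module.rank K W) (a b : PLine K W Q) :
    ∃ n : PLine K W Q, ¬ PMeets K W Q a n ∧ ¬ PMeets K W Q b n := by
  obtain ⟨p, u, hu, ha⟩ := a.2
  obtain ⟨q, v, hv, hb⟩ := b.2
  obtain ⟨w, x, hw, hx1, hx2⟩ :=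
    aux14_exists_wx (aux14_exists_notmem h3) u v (q -ᵥ p) hu
  refine ⟨⟨{y | ∃ t : K, y = t • w +ᵥ (x +ᵥ p)}, x +ᵥ p, w, hw, rfl⟩, ?_, ?_⟩
  · rintro ⟨y, hy1, hy2⟩
    rw [ha] at hy1
    obtain ⟨s, rfl⟩ := hy1
    obtain ⟨t, ht⟩ := hy2
    apply hx1
    rw [mem_span_pair]
    refine ⟨s, -t, ?_⟩
    rw [vadd_vadd] at ht
    have h5 : s • u = t • w + x := vadd_right_cancel p ht
    rw [neg_smul, h5]; abel
  · rintro ⟨y, hy1, hy2⟩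
    rw [hb] at hy1
    obtain ⟨s, rfl⟩ := hy1
    obtain ⟨t, ht⟩ := hy2
    apply hx2
    rw [mem_span_pair]
    refine ⟨s, -t, ?_⟩
    rw [vadd_vadd] at ht
    have hq : s • v +ᵥ q = (s • v + (q -ᵥ p)) +ᵥ p := by
      rw [← vadd_vadd, vsub_vadd]
    rw [hq] at ht
    have h5 : s • v + (q -ᵥ p) = t • w + x := vadd_right_cancel p ht
    have h6 : x - (q -ᵥ p) = s • v - t • w := by
      have h7 := congrArg (fun z => z - t • w - (q -ᵥ p)) h5
      rw [show s • v + (q -ᵥ p) - t • w - (q -ᵥ p) = s • v - t • w from by abel,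
          show t • w + x - t • w - (q -ᵥ p) = x - (q -ᵥ p) from by abel] at h7
      exact h7.symm
    rw [neg_smul, h6]; abel

/-- In rank < 3, two disjoint lines are parallel. -/
lemma aux14_parallel (hrank : Module.rank K W < 3)
    (p q : Q) (u w : W) (hu : u ≠ 0)
    (hdisj : ¬ ({x : Q | ∃ t : K, x = t • u +ᵥ p} ∩
      {x : Q | ∃ t : K, x = t • w +ᵥ q}).Nonempty) :
    w ∈ span K {u} := by
  by_contra hw
  have htop : span K ({u, w} : Set W) = ⊤ := by
    by_contra hne
    have hlt' : span K ({u, w} : Set W) < ⊤ := lt_top_iff_ne_top.mpr hne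
    obtain ⟨e, -, he⟩ := SetLike.exists_of_lt hlt'
    exact absurd (aux14_indep3 hu hw he) (not_le.mpr hrank)
  obtain ⟨s, t, hst⟩ := mem_span_pair.mp (htop ▸ mem_top (x := q -ᵥ p))
  apply hdisj
  refine ⟨s • u +ᵥ p, ⟨s, rfl⟩, ⟨-t, ?_⟩⟩
  rw [show q = (s • u + t • w) +ᵥ p from by rw [hst]; exact (vsub_vadd q p).symm,
    vadd_vadd]
  congr 1
  rw [neg_smul]; abel

end AuxStmt14

/-- If there is a bijection of line sets taking meeting lines to meeting lines and
`dim A' ≥ 3`, then `dim A ≥ 3`. -/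
theorem stmt14 (hdim' : 3 ≤ Module.rank k' V')
    (φ : PLine k V P ≃ PLine k' V' P')
    (hmono : ∀ a b : PLine k V P, PMeets k V P a b → PMeets k' V' P' (φ a) (φ b)) :
    3 ≤ Module.rank k V := by
  by_contra hlt
  push_neg at hlt
  obtain ⟨p'⟩ : Nonempty P' := AddTorsor.nonempty
  obtain ⟨u', hu'span⟩ := aux14_exists_notmem hdim' (0 : V') 0
  have hu' : u' ≠ 0 := fun h => hu'span (by rw [h]; exact Submodule.zero_mem _)
  obtain ⟨v', hv'span⟩ := aux14_exists_notmem hdim' u' u'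
  have hv'u : v' ∉ Submodule.span k' {u'} := by
    intro h
    apply hv'span
    rwa [Set.pair_eq_singleton]
  have hv' : v' ≠ 0 := fun h => hv'u (h ▸ Submodule.zero_mem _)
  by_cases H : ∃ u v : V, u ≠ 0 ∧ v ∉ Submodule.span k {u}
  · -- there are two non-parallel lines in P
    obtain ⟨u, v, hu, hvmem⟩ := H
    have hv : v ≠ 0 := fun h => hvmem (h ▸ Submodule.zero_mem _)
    obtain ⟨p⟩ : Nonempty P := AddTorsor.nonempty
    set a : PLine k V P := ⟨{q | ∃ t : k, q = t • u +ᵥ p}, p, u, hu, rfl⟩ with ha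
    set b : PLine k V P := ⟨{q | ∃ t : k, q = t • v +ᵥ p}, p, v, hv, rfl⟩ with hb
    obtain ⟨n, hn1, hn2⟩ := aux14_exists_disjoint hdim' (φ a) (φ b)
    set c : PLine k V P := φ.symm n with hc
    have hca : ¬ PMeets k V P a c := by
      intro h
      apply hn1
      have := hmono a c h
      rwa [hc, φ.apply_symm_apply] at this
    have hcb : ¬ PMeets k V P b c := by
      intro h
      apply hn2
      have := hmono b c h
      rwa [hc, φ.apply_symm_apply] at this
    obtain ⟨r, wc, hwc, hceq⟩ := c.2
    have h7 : ¬ (({q | ∃ t : k, q = t • u +ᵥ p} ∩ c.1).Nonempty) := hca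
    have h8 : ¬ (({q | ∃ t : k, q = t • v +ᵥ p} ∩ c.1).Nonempty) := hcb
    rw [hceq] at h7 h8
    have hd1 : wc ∈ Submodule.span k {u} := aux14_parallel hlt p r u wc hu h7
    have hd2 : wc ∈ Submodule.span k {v} := aux14_parallel hlt p r v wc hv h8
    obtain ⟨s, hs⟩ := Submodule.mem_span_singleton.mp hd1
    obtain ⟨t, ht⟩ := Submodule.mem_span_singleton.mp hd2
    have htz : t ≠ 0 := by
      intro h0
      rw [h0, zero_smul] at ht
      exact hwc ht.symm
    apply hvmem
    rw [Submodule.mem_span_singleton]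
    refine ⟨t⁻¹ * s, ?_⟩
    have h9 : t • v = s • u := by rw [hs, ht]
    have := congrArg (fun z => (t : k)⁻¹ • z) h9
    rw [smul_smul, smul_smul, inv_mul_cancel₀ htz, one_smul] at this
    exact this.symm
  · -- all lines are the whole space, so the line set is a subsingleton
    push_neg at H
    have huniv : ∀ a : PLine k V P, a.1 = Set.univ := by
      intro a
      obtain ⟨p, u, hu, ha⟩ := a.2
      rw [ha]
      ext q
      simp only [Set.mem_univ, iff_true, Set.mem_setOf_eq]
      obtain ⟨t, ht⟩ := Submodule.mem_span_singleton.mp (H u (q -ᵥ p) hu)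
      exact ⟨t, by rw [ht, vsub_vadd]⟩
    set l1 : PLine k' V' P' := ⟨{q | ∃ t : k', q = t • u' +ᵥ p'}, p', u', hu', rfl⟩
    set l2 : PLine k' V' P' := ⟨{q | ∃ t : k', q = t • v' +ᵥ p'}, p', v', hv', rfl⟩
    have hne : l1 ≠ l2 := by
      intro h
      have hmem : (u' +ᵥ p') ∈ l2.1 := by
        rw [← h]
        exact ⟨1, by rw [one_smul]⟩
      obtain ⟨t, ht⟩ := hmem
      have h6 : u' = t • v' := vadd_right_cancel p' ht
      have htz : t ≠ 0 := by
        intro h0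
        rw [h0, zero_smul] at h6
        exact hu' h6
      apply hv'u
      rw [Submodule.mem_span_singleton]
      refine ⟨t⁻¹, ?_⟩
      have := congrArg (fun z => (t : k')⁻¹ • z) h6
      rw [smul_smul, inv_mul_cancel₀ htz, one_smul] at this
      exact this
    apply hne
    have hsymm : φ.symm l1 = φ.symm l2 := Subtype.ext (by rw [huniv, huniv])
    rw [← φ.apply_symm_apply l1, ← φ.apply_symm_apply l2, hsymm]
end

section
/- Plücker spaces on affine planes A and A' (lines related iff they meet) are isomorphic if and only if A and A' have equipotent pencils of parallel lines, i.e., the orders of A and A' are equal. -/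
variable (k V P : Type*) [DivisionRing k] [AddCommGroup V] [Module k V] [AddTorsor V P]

section Model
variable {k V P : Type*} [DivisionRing k] [AddCommGroup V] [Module k V] [AddTorsor V P]
variable (b : Module.Basis (Fin 2) k V) (p₀ : P)

noncomputable def ptP (x y : k) : P := (x • b 0 + y • b 1) +ᵥ p₀
noncomputable def Xc (q : P) : k := b.repr (q -ᵥ p₀) 0
noncomputable def Yc (q : P) : k := b.repr (q -ᵥ p₀) 1

lemma Xc_pt (x y : k) : Xc b p₀ (ptP b p₀ x y) = x := by
  simp [Xc, ptP, vadd_vsub, Module.Basis.repr_self, Finsupp.single_apply]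

lemma Yc_pt (x y : k) : Yc b p₀ (ptP b p₀ x y) = y := by
  simp [Yc, ptP, vadd_vsub, Module.Basis.repr_self, Finsupp.single_apply]

lemma pt_spec (q : P) : ptP b p₀ (Xc b p₀ q) (Yc b p₀ q) = q := by
  have := b.sum_repr (q -ᵥ p₀)
  rw [Fin.sum_univ_two] at this
  rw [ptP, Xc, Yc, this, vsub_vadd]

/-- The combinatorial model of a line: slope (`none` = vertical) and intercept. -/
def mset : Option k × k → Set P
  | (none, c) => {q | Xc b p₀ q = c}
  | (some m, c) => {q | Yc b p₀ q = Xc b p₀ q * m + c}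

lemma smul_vadd_pt (s t x y : k) :
    (s • b 0 + t • b 1) +ᵥ ptP b p₀ x y = ptP b p₀ (s + x) (t + y) := by
  rw [ptP, ptP, vadd_vadd]
  congr 1
  rw [add_smul, add_smul]; abel

lemma isPLine_mset (u : Option k × k) : IsPLine k V P (mset b p₀ u) := by
  obtain ⟨m, c⟩ := u
  cases m with
  | none =>
    refine ⟨ptP b p₀ c 0, b 1, b.ne_zero 1, ?_⟩
    ext q
    constructor
    · intro hq
      exact ⟨Yc b p₀ q, by
        have : (Yc b p₀ q) • b 1 +ᵥ ptP b p₀ c 0 = ptP b p₀ c (Yc b p₀ q) := by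
          have := smul_vadd_pt b p₀ 0 (Yc b p₀ q) c 0
          simpa using this
        rw [this, ← hq, pt_spec]⟩
    · rintro ⟨t, rfl⟩
      have : t • b 1 +ᵥ ptP b p₀ c 0 = ptP b p₀ c t := by
        have := smul_vadd_pt b p₀ 0 t c 0
        simpa using this
      show Xc b p₀ _ = c
      rw [this, Xc_pt]
  | some m =>
    have hv : b 0 + m • b 1 ≠ 0 := by
      intro h
      have : b.repr (b 0 + m • b 1) 0 = 0 := by rw [h]; simp
      simp [Module.Basis.repr_self, Finsupp.single_apply] at this
    refine ⟨ptP b p₀ 0 c, b 0 + m • b 1, hv, ?_⟩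
    have key : ∀ t : k, t • (b 0 + m • b 1) +ᵥ ptP b p₀ 0 c = ptP b p₀ t (t * m + c) := by
      intro t
      have : t • (b 0 + m • b 1) = t • b 0 + (t * m) • b 1 := by
        rw [smul_add, smul_smul]
      rw [this]
      have := smul_vadd_pt b p₀ t (t * m) 0 c
      simpa using this
    ext q
    constructor
    · intro hq
      refine ⟨Xc b p₀ q, ?_⟩
      rw [key, ← hq, pt_spec]
    · rintro ⟨t, rfl⟩
      show Yc b p₀ _ = Xc b p₀ _ * m + c
      rw [key, Xc_pt, Yc_pt]

noncomputable def mlineG (u : Option k × k) : PLine k V P :=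
  ⟨mset b p₀ u, isPLine_mset b p₀ u⟩

lemma mlineG_injective : Function.Injective (mlineG b p₀) := by
  rintro ⟨m, c⟩ ⟨m', c'⟩ h
  have hs : mset b p₀ (m, c) = mset b p₀ (m', c') := congrArg Subtype.val h
  have hmem : ∀ q : P, q ∈ mset b p₀ (m, c) ↔ q ∈ mset b p₀ (m', c') := fun q => by rw [hs]
  cases m with
  | none => cases m' with
    | none =>
      have := (hmem (ptP b p₀ c 0)).mp (by show Xc _ _ _ = c; rw [Xc_pt])
      have hc : c = c' := by
        have h2 : Xc b p₀ (ptP b p₀ c 0) = c' := this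
        rwa [Xc_pt] at h2
      rw [hc]
    | some m' =>
      exfalso
      have h1 := (hmem (ptP b p₀ c 0)).mp (by show Xc _ _ _ = c; rw [Xc_pt])
      have h2 := (hmem (ptP b p₀ c 1)).mp (by show Xc _ _ _ = c; rw [Xc_pt])
      simp only [mset, Set.mem_setOf_eq, Xc_pt, Yc_pt] at h1 h2
      exact one_ne_zero (h2.trans h1.symm)
  | some m => cases m' with
    | none =>
      exfalso
      have h1 := (hmem (ptP b p₀ 0 c)).mp
        (by show Yc _ _ _ = Xc _ _ _ * m + c; rw [Xc_pt, Yc_pt, zero_mul, zero_add])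
      have h2 := (hmem (ptP b p₀ 1 (m + c))).mp
        (by show Yc _ _ _ = Xc _ _ _ * m + c; rw [Xc_pt, Yc_pt, one_mul])
      simp only [mset, Set.mem_setOf_eq, Xc_pt] at h1 h2
      exact one_ne_zero (h2.trans h1.symm)
    | some m' =>
      have h1 := (hmem (ptP b p₀ 0 c)).mp
        (by show Yc _ _ _ = Xc _ _ _ * m + c; rw [Xc_pt, Yc_pt, zero_mul, zero_add])
      have h2 := (hmem (ptP b p₀ 1 (m + c))).mp
        (by show Yc _ _ _ = Xc _ _ _ * m + c; rw [Xc_pt, Yc_pt, one_mul])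
      simp only [mset, Set.mem_setOf_eq, Xc_pt, Yc_pt, zero_mul, zero_add, one_mul] at h1 h2
      subst h1
      have : m = m' := by linear_combination (norm := noncomm_ring) h2
      rw [this]

lemma mlineG_surjective : Function.Surjective (mlineG b p₀) := by
  rintro ⟨s, p, v, hv, rfl⟩
  set a := b.repr v 0 with ha
  set d := b.repr v 1 with hd
  have hvad : v = a • b 0 + d • b 1 := by
    have := b.sum_repr v
    rw [Fin.sum_univ_two] at this
    rw [ha, hd, this]
  set xp := Xc b p₀ p with hxp
  set yp := Yc b p₀ p with hyp
  have hp : p = ptP b p₀ xp yp := (pt_spec b p₀ p).symm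
  have keyq : ∀ t : k, t • v +ᵥ p = ptP b p₀ (t * a + xp) (t * d + yp) := by
    intro t
    rw [hp, hvad, smul_add, smul_smul, smul_smul, smul_vadd_pt]
  by_cases hA : a = 0
  · have hD : d ≠ 0 := by
      intro hD; apply hv; rw [hvad, hA, hD, zero_smul, zero_smul, add_zero]
    refine ⟨(none, xp), ?_⟩
    apply Subtype.ext
    ext q
    simp only [mlineG, mset, Set.mem_setOf_eq]
    constructor
    · intro hq
      refine ⟨(Yc b p₀ q - yp) * d⁻¹, ?_⟩
      rw [keyq, hA, mul_zero, zero_add, mul_assoc, inv_mul_cancel₀ hD, mul_one,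
        sub_add_cancel, ← hq, pt_spec]
    · rintro ⟨t, rfl⟩
      rw [keyq, hA, mul_zero, zero_add, Xc_pt]
  · refine ⟨(some (a⁻¹ * d), yp - xp * (a⁻¹ * d)), ?_⟩
    apply Subtype.ext
    ext q
    simp only [mlineG, mset, Set.mem_setOf_eq]
    constructor
    · intro hq
      refine ⟨(Xc b p₀ q - xp) * a⁻¹, ?_⟩
      rw [keyq]
      have h1 : (Xc b p₀ q - xp) * a⁻¹ * a + xp = Xc b p₀ q := by
        rw [mul_assoc, inv_mul_cancel₀ hA, mul_one, sub_add_cancel]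
      have h2 : (Xc b p₀ q - xp) * a⁻¹ * d + yp = Yc b p₀ q := by
        rw [hq, mul_assoc, sub_mul]
        abel
      rw [h1, h2, pt_spec]
    · rintro ⟨t, rfl⟩
      rw [keyq, Xc_pt, Yc_pt]
      have hmul : (t * a + xp) * (a⁻¹ * d) = t * d + xp * (a⁻¹ * d) := by
        rw [add_mul]
        congr 1
        rw [mul_assoc, ← mul_assoc a, mul_inv_cancel₀ hA, one_mul]
      rw [hmul]
      abel

noncomputable def mEquiv : Option k × k ≃ PLine k V P :=
  Equiv.ofBijective (mlineG b p₀) ⟨mlineG_injective b p₀, mlineG_surjective b p₀⟩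

lemma solvable_iff (m m' c c' : k) :
    (∃ x : k, x * m + c = x * m' + c') ↔ (m ≠ m' ∨ c = c') := by
  constructor
  · rintro ⟨x, hx⟩
    by_cases hm : m = m'
    · right; subst hm; exact add_left_cancel hx
    · left; exact hm
  · rintro (hm | hc)
    · refine ⟨(c' - c) * (m - m')⁻¹, ?_⟩
      have h : (c' - c) * (m - m')⁻¹ * (m - m') = c' - c := by
        rw [mul_assoc, inv_mul_cancel₀ (sub_ne_zero.mpr hm), mul_one]
      rw [mul_sub] at h
      linear_combination (norm := noncomm_ring) h
    · subst hc; exact ⟨0, by rw [zero_mul, zero_mul]⟩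

lemma mem_mset_none (c : k) (q : P) : q ∈ mset b p₀ (none, c) ↔ Xc b p₀ q = c := Iff.rfl

lemma mem_mset_some (m c : k) (q : P) :
    q ∈ mset b p₀ (some m, c) ↔ Yc b p₀ q = Xc b p₀ q * m + c := Iff.rfl

lemma mEquiv_meets (u v : Option k × k) :
    PMeets k V P (mEquiv b p₀ u) (mEquiv b p₀ v) ↔ (u.1 ≠ v.1 ∨ u.2 = v.2) := by
  obtain ⟨m, c⟩ := u
  obtain ⟨m', c'⟩ := v
  have hval : ∀ w, ((mEquiv b p₀ w : PLine k V P) : Set P) = mset b p₀ w := fun w => rfl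
  rw [PMeets, hval, hval]
  cases m with
  | none => cases m' with
    | none =>
      constructor
      · rintro ⟨q, hq1, hq2⟩
        have h1 : Xc b p₀ q = c := hq1
        have h2 : Xc b p₀ q = c' := hq2
        exact Or.inr (h1.symm.trans h2)
      · intro h
        have hc : c = c' := by
          rcases h with h | h
          · exact absurd rfl h
          · exact h
        refine ⟨ptP b p₀ c 0, ?_, ?_⟩
        · exact (mem_mset_none b p₀ c _).mpr (Xc_pt b p₀ c 0)
        · exact (mem_mset_none b p₀ c' _).mpr ((Xc_pt b p₀ c 0).trans hc)
    | some m' =>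
      refine iff_of_true ⟨ptP b p₀ c (c * m' + c'), ?_, ?_⟩ (Or.inl (by simp))
      · exact (mem_mset_none b p₀ c _).mpr (Xc_pt b p₀ _ _)
      · refine (mem_mset_some b p₀ m' c' _).mpr ?_
        rw [Xc_pt, Yc_pt]
  | some m => cases m' with
    | none =>
      refine iff_of_true ⟨ptP b p₀ c' (c' * m + c), ?_, ?_⟩ (Or.inl (by simp))
      · refine (mem_mset_some b p₀ m c _).mpr ?_
        rw [Xc_pt, Yc_pt]
      · exact (mem_mset_none b p₀ c' _).mpr (Xc_pt b p₀ _ _)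
    | some m' =>
      constructor
      · rintro ⟨q, hq1, hq2⟩
        have h1 : Yc b p₀ q = Xc b p₀ q * m + c := hq1
        have h2 : Yc b p₀ q = Xc b p₀ q * m' + c' := hq2
        have : m ≠ m' ∨ c = c' := (solvable_iff m m' c c').mp ⟨Xc b p₀ q, h1.symm.trans h2⟩
        rcases this with h | h
        · exact Or.inl (by simpa using h)
        · exact Or.inr h
      · intro h
        have hx : ∃ x : k, x * m + c = x * m' + c' := by
          refine (solvable_iff m m' c c').mpr ?_
          rcases h with h | h
          · exact Or.inl (fun he => h (by rw [he]))
          · exact Or.inr h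
        obtain ⟨x, hxx⟩ := hx
        refine ⟨ptP b p₀ x (x * m + c), ?_, ?_⟩
        · refine (mem_mset_some b p₀ m c _).mpr ?_
          rw [Xc_pt, Yc_pt]
        · refine (mem_mset_some b p₀ m' c' _).mpr ?_
          rw [Xc_pt, Yc_pt, hxx]

end Model


section Aux
variable {k V P : Type*} [DivisionRing k] [AddCommGroup V] [Module k V] [AddTorsor V P]

lemma par_iff_aux {α β : Type*} (u v : α × β) :
    (u = v ∨ ¬(u.1 ≠ v.1 ∨ u.2 = v.2)) ↔ u.1 = v.1 := by
  constructor
  · rintro (rfl | h)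
    · rfl
    · push_neg at h
      exact h.1
  · intro h
    by_cases h2 : u.2 = v.2
    · exact Or.inl (Prod.ext h h2)
    · right; push_neg; exact ⟨h, h2⟩

noncomputable def basisOfRankTwo (h : Module.rank k V = 2) : Module.Basis (Fin 2) k V :=
  have : Module.Finite k V := Module.finite_of_rank_eq_nat (by exact_mod_cast h)
  Module.finBasisOfFinrankEq k V (Module.finrank_eq_of_rank_eq h)
end Aux


variable (k' V' P' : Type*) [DivisionRing k'] [AddCommGroup V'] [Module k' V'] [AddTorsor V' P']

/-- The Plücker spaces on two affine planes are isomorphic if and only if the planes have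
the same order (the common cardinality of all lines, i.e. of the ground field). -/
theorem stmt15 (hdim : Module.rank k V = 2) (hdim' : Module.rank k' V' = 2) :
    (∃ φ : PLine k V P ≃ PLine k' V' P',
        ∀ a b : PLine k V P, PMeets k V P a b ↔ PMeets k' V' P' (φ a) (φ b)) ↔
      Nonempty (k ≃ k') := by
  let b : Module.Basis (Fin 2) k V := basisOfRankTwo hdim
  let b' : Module.Basis (Fin 2) k' V' := basisOfRankTwo hdim'
  let p₀ : P := Classical.arbitrary P
  let p₀' : P' := Classical.arbitrary P'
  let E : Option k × k ≃ PLine k V P := mEquiv b p₀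
  let E' : Option k' × k' ≃ PLine k' V' P' := mEquiv b' p₀'
  constructor
  · rintro ⟨φ, hφ⟩
    let ψ : Option k × k ≃ Option k' × k' := (E.trans φ).trans E'.symm
    have hψval : ∀ u, E' (ψ u) = φ (E u) := by
      intro u
      simp [ψ, Equiv.trans_apply, Equiv.apply_symm_apply]
    have hψ : ∀ u v : Option k × k,
        (u.1 ≠ v.1 ∨ u.2 = v.2) ↔ ((ψ u).1 ≠ (ψ v).1 ∨ (ψ u).2 = (ψ v).2) := by
      intro u v
      rw [← mEquiv_meets b p₀ u v, ← mEquiv_meets b' p₀' (ψ u) (ψ v), hψval, hψval]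
      exact hφ (E u) (E v)
    have hpar : ∀ u v : Option k × k, u.1 = v.1 ↔ (ψ u).1 = (ψ v).1 := by
      intro u v
      rw [← par_iff_aux u v, ← par_iff_aux (ψ u) (ψ v), ← hψ u v,
        Equiv.apply_eq_iff_eq]
    let f : k → k' := fun x => (ψ (none, x)).2
    have hfst : ∀ x : k, (ψ (none, x)).1 = (ψ ((none : Option k), (0 : k))).1 := by
      intro x
      exact (hpar (none, x) (none, 0)).mp rfl
    have hinj : Function.Injective f := by
      intro x y hxy
      have : ψ (none, x) = ψ (none, y) :=
        Prod.ext ((hfst x).trans (hfst y).symm) hxy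
      have := ψ.injective this
      exact (Prod.ext_iff.mp this).2
    have hsurj : Function.Surjective f := by
      intro y'
      set u := ψ.symm ((ψ ((none : Option k), (0 : k))).1, y') with hu
      have hψu : ψ u = ((ψ ((none : Option k), (0 : k))).1, y') := ψ.apply_symm_apply _
      have hu1 : u.1 = none := by
        have : (u.1 : Option k) = ((none : Option k), (0 : k)).1 := by
          rw [hpar u (none, 0), hψu]
        exact this
      refine ⟨u.2, ?_⟩
      have hueq : ((none : Option k), u.2) = u := by
        rw [← hu1]
      show (ψ ((none : Option k), u.2)).2 = y'
      rw [hueq, hψu]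
    exact ⟨Equiv.ofBijective f ⟨hinj, hsurj⟩⟩
  · rintro ⟨e⟩
    let g : Option k × k ≃ Option k' × k' := Equiv.prodCongr e.optionCongr e
    have hg : ∀ u v : Option k × k,
        (u.1 ≠ v.1 ∨ u.2 = v.2) ↔ ((g u).1 ≠ (g v).1 ∨ (g u).2 = (g v).2) := by
      intro u v
      simp [g, Equiv.prodCongr_apply, Prod.map, ne_eq, Equiv.apply_eq_iff_eq,
        (Option.map_injective e.injective).eq_iff]
    refine ⟨(E.symm.trans g).trans E', ?_⟩
    intro a c
    have ha : a = E (E.symm a) := (E.apply_symm_apply a).symm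
    have hc : c = E (E.symm c) := (E.apply_symm_apply c).symm
    rw [ha, hc]
    rw [show PMeets k V P (E (E.symm a)) (E (E.symm c)) ↔ _ from
      mEquiv_meets b p₀ (E.symm a) (E.symm c)]
    have happ : ∀ x : PLine k V P,
        ((E.symm.trans g).trans E') (E (E.symm x)) = E' (g (E.symm x)) := by
      intro x
      simp [Equiv.trans_apply, Equiv.symm_apply_apply]
    rw [happ, happ]
    rw [show PMeets k' V' P' (E' (g (E.symm a))) (E' (g (E.symm c))) ↔ _ from
      mEquiv_meets b' p₀' (g (E.symm a)) (g (E.symm c))]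
    exact hg _ _
end

section
/- In an affine plane of infinite order (or more generally any affine plane with at least two parallel lines in some pencil), the transposition of two distinct parallel lines (fixing all other lines) is an automorphism of the Plücker space of lines, but it is not induced by any collineation of the plane. -/
variable (k V P : Type*) [DivisionRing k] [AddCommGroup V] [Module k V] [AddTorsor V P]

/-- Two lines are parallel iff one is a translate of the other. -/
def PPar (a b : PLine k V P) : Prop := ∃ v : V, b.1 = (fun q => v +ᵥ q) '' a.1

namespace Stmt16Aux

variable {k V P}

lemma mem_line {p q : P} {v : V} :
    q ∈ {x : P | ∃ t : k, x = t • v +ᵥ p} ↔ ∃ t : k, q -ᵥ p = t • v := by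
  constructor
  · rintro ⟨t, rfl⟩; exact ⟨t, vadd_vsub _ _⟩
  · rintro ⟨t, h⟩; exact ⟨t, by rw [← h, vsub_vadd]⟩

lemma self_mem_line {p : P} {v : V} : p ∈ {x : P | ∃ t : k, x = t • v +ᵥ p} :=
  ⟨0, by simp⟩

/-- Base change and direction rescaling for lines. -/
lemma line_rebase {p p' : P} {v v' : V} (c : k) (hc : c ≠ 0) (hv : v' = c • v)
    (hp : p' ∈ {x : P | ∃ t : k, x = t • v +ᵥ p}) :
    {x : P | ∃ t : k, x = t • v' +ᵥ p'} = {x : P | ∃ t : k, x = t • v +ᵥ p} := by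
  obtain ⟨s, rfl⟩ := hp
  ext q
  constructor
  · rintro ⟨t, rfl⟩
    exact ⟨t * c + s, by rw [hv, smul_smul, vadd_vadd, add_smul]⟩
  · rintro ⟨t, rfl⟩
    refine ⟨(t - s) * c⁻¹, ?_⟩
    rw [hv, smul_smul, mul_assoc, inv_mul_cancel₀ hc, mul_one, vadd_vadd, ← add_smul, sub_add_cancel]

/-- Translation of a line. -/
lemma line_vadd (u : V) (p : P) (v : V) :
    (fun q => u +ᵥ q) '' {x : P | ∃ t : k, x = t • v +ᵥ p}
      = {x : P | ∃ t : k, x = t • v +ᵥ (u +ᵥ p)} := by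
  ext q
  constructor
  · rintro ⟨_, ⟨t, rfl⟩, rfl⟩
    refine ⟨t, ?_⟩
    show u +ᵥ (t • v +ᵥ p) = t • v +ᵥ (u +ᵥ p)
    rw [vadd_vadd, vadd_vadd, add_comm]
  · rintro ⟨t, rfl⟩
    refine ⟨t • v +ᵥ p, ⟨t, rfl⟩, ?_⟩
    show u +ᵥ (t • v +ᵥ p) = t • v +ᵥ (u +ᵥ p)
    rw [vadd_vadd, vadd_vadd, add_comm]

/-- Two distinct common points force two lines to coincide. -/
lemma line_unique {p1 p2 q1 q2 : P} {v1 v2 : V} (h1 : v1 ≠ 0) (h2 : v2 ≠ 0)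
    (hq : q1 ≠ q2)
    (m11 : q1 ∈ {x : P | ∃ t : k, x = t • v1 +ᵥ p1})
    (m21 : q2 ∈ {x : P | ∃ t : k, x = t • v1 +ᵥ p1})
    (m12 : q1 ∈ {x : P | ∃ t : k, x = t • v2 +ᵥ p2})
    (m22 : q2 ∈ {x : P | ∃ t : k, x = t • v2 +ᵥ p2}) :
    {x : P | ∃ t : k, x = t • v1 +ᵥ p1} = {x : P | ∃ t : k, x = t • v2 +ᵥ p2} := by
  obtain ⟨t1, ht1⟩ := mem_line.1 m11
  obtain ⟨t2, ht2⟩ := mem_line.1 m21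
  obtain ⟨s1, hs1⟩ := mem_line.1 m12
  obtain ⟨s2, hs2⟩ := mem_line.1 m22
  have hd1 : q2 -ᵥ q1 = (t2 - t1) • v1 := by
    rw [← vsub_sub_vsub_cancel_right q2 q1 p1, ht1, ht2, sub_smul]
  have hd2 : q2 -ᵥ q1 = (s2 - s1) • v2 := by
    rw [← vsub_sub_vsub_cancel_right q2 q1 p2, hs1, hs2, sub_smul]
  have hne : q2 -ᵥ q1 ≠ 0 := vsub_ne_zero.2 (Ne.symm hq)
  have hs : s2 - s1 ≠ 0 := by
    rintro h; rw [hd2, h, zero_smul] at hne; exact hne rfl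
  have hv2 : v2 = ((s2 - s1)⁻¹ * (t2 - t1)) • v1 := by
    rw [mul_smul, ← hd1, hd2, smul_smul, inv_mul_cancel₀ hs, one_smul]
  have hcne : (s2 - s1)⁻¹ * (t2 - t1) ≠ 0 := by
    intro h
    rw [hv2, h, zero_smul] at h2; exact h2 rfl
  calc {x : P | ∃ t : k, x = t • v1 +ᵥ p1}
      = {x : P | ∃ t : k, x = t • v1 +ᵥ q1} :=
        (line_rebase 1 one_ne_zero (one_smul k v1).symm m11).symm
    _ = {x : P | ∃ t : k, x = t • v2 +ᵥ q1} :=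
        (line_rebase _ hcne hv2 (self_mem_line)).symm
    _ = {x : P | ∃ t : k, x = t • v2 +ᵥ p2} :=
        line_rebase 1 one_ne_zero (one_smul k v2).symm m12

lemma pline_nonempty (x : PLine k V P) : x.1.Nonempty := by
  obtain ⟨p, v, hv, hx⟩ := x.2
  exact ⟨p, hx ▸ self_mem_line⟩

lemma pmeets_refl (x : PLine k V P) : PMeets k V P x x := by
  obtain ⟨p, hp⟩ := pline_nonempty x
  exact ⟨p, hp, hp⟩

lemma pmeets_symm {x y : PLine k V P} (h : PMeets k V P x y) : PMeets k V P y x := by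
  obtain ⟨p, h1, h2⟩ := h; exact ⟨p, h2, h1⟩

lemma ppar_symm {x y : PLine k V P} (h : PPar k V P x y) : PPar k V P y x := by
  obtain ⟨u, hu⟩ := h
  refine ⟨-u, ?_⟩
  rw [hu, Set.image_image]
  simp

lemma ppar_trans {x y z : PLine k V P} (h : PPar k V P x y) (h' : PPar k V P y z) :
    PPar k V P x z := by
  obtain ⟨u, hu⟩ := h
  obtain ⟨u', hu'⟩ := h'
  refine ⟨u' + u, ?_⟩
  rw [hu', hu, Set.image_image]
  simp [vadd_vadd]

/-- Distinct parallel lines are disjoint. -/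
lemma ppar_eq_of_meets {x y : PLine k V P} (hpar : PPar k V P x y)
    (hm : PMeets k V P x y) : x = y := by
  obtain ⟨p, v, hv, hx⟩ := x.2
  obtain ⟨u, hu⟩ := hpar
  have hy : y.1 = {q : P | ∃ t : k, q = t • v +ᵥ (u +ᵥ p)} := by
    rw [hu, hx, line_vadd]
  obtain ⟨q, hq1, hq2⟩ := hm
  rw [hx] at hq1; rw [hy] at hq2
  obtain ⟨t, ht⟩ := mem_line.1 hq1
  obtain ⟨s, hs⟩ := mem_line.1 hq2
  have huv : (u +ᵥ p) ∈ {x : P | ∃ t : k, x = t • v +ᵥ p} := by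
    refine mem_line.2 ⟨t - s, ?_⟩
    rw [← vsub_sub_vsub_cancel_left (u +ᵥ p) p q, ht, hs, sub_smul]
  apply Subtype.ext
  rw [hx, hy]
  exact (line_rebase 1 one_ne_zero (one_smul k v).symm huv).symm

/-- In a plane, two lines either meet or are parallel. -/
lemma meets_or_par (hdim : Module.rank k V = 2) (x y : PLine k V P) :
    PMeets k V P x y ∨ PPar k V P x y := by
  obtain ⟨p, v, hv, hx⟩ := x.2
  obtain ⟨p', v', hv', hy⟩ := y.2
  by_cases hmem : v' ∈ Submodule.span k {v}
  · right
    obtain ⟨c, hc⟩ := Submodule.mem_span_singleton.1 hmem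
    have hc0 : c ≠ 0 := by rintro rfl; rw [zero_smul] at hc; exact hv' hc.symm
    refine ⟨p' -ᵥ p, ?_⟩
    rw [hy, hx, line_vadd, vsub_vadd]
    exact line_rebase c hc0 hc.symm (self_mem_line (p := p') (v := v))
  · left
    have hfin : Module.Finite k V :=
      Module.finite_of_rank_eq_nat (n := 2) (by rw [hdim]; norm_num)
    have hfr : Module.finrank k V = 2 :=
      Module.finrank_eq_of_rank_eq (n := 2) (by rw [hdim]; norm_num)
    have hind : LinearIndependent k ![v, v'] :=
      (LinearIndependent.pair_iff' hv).2 fun a ha => hmem (ha ▸ Submodule.smul_mem _ a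
        (Submodule.mem_span_singleton_self v))
    have hspan : Submodule.span k (Set.range ![v, v']) = ⊤ :=
      hind.span_eq_top_of_card_eq_finrank (by simp [hfr])
    have hrange : Set.range ![v, v'] = {v, v'} := by
      simp only [Matrix.range_cons, Matrix.range_empty, Set.union_empty,
        Set.union_singleton]
      exact Set.pair_comm v' v
    have hmem2 : (p' -ᵥ p) ∈ Submodule.span k ({v, v'} : Set V) := by
      rw [← hrange, hspan]; trivial
    obtain ⟨c, d, hcd⟩ := Submodule.mem_span_pair.1 hmem2
    refine ⟨c • v +ᵥ p, ?_, ?_⟩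
    · rw [hx]; exact ⟨c, rfl⟩
    · rw [hy]
      refine mem_line.2 ⟨-d, ?_⟩
      rw [vadd_vsub_assoc, ← neg_vsub_eq_vsub_rev, ← hcd, neg_smul]
      abel

/-- The key fact: a line distinct from both `a` and `b` meets `a` iff it meets `b`. -/
lemma meets_a_iff_meets_b (hdim : Module.rank k V = 2) {a b x : PLine k V P}
    (hpar : PPar k V P a b) (hxa : x ≠ a) (hxb : x ≠ b) :
    PMeets k V P x a ↔ PMeets k V P x b := by
  constructor
  · intro h
    by_contra hnb
    have hparxb : PPar k V P x b := (meets_or_par hdim x b).resolve_left hnb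
    have hparxa : PPar k V P x a := ppar_trans hparxb (ppar_symm hpar)
    exact hxa (ppar_eq_of_meets hparxa h)
  · intro h
    by_contra hna
    have hparxa : PPar k V P x a := (meets_or_par hdim x a).resolve_left hna
    have hparxb : PPar k V P x b := ppar_trans hparxa hpar
    exact hxb (ppar_eq_of_meets hparxb h)

end Stmt16Aux

open Stmt16Aux in
open scoped Classical in
/-- In an affine plane, the transposition of two distinct parallel lines is an
automorphism of the Plücker space of lines which is not induced by any collineation. -/
theorem stmt16 (hdim : Module.rank k V = 2) (a b : PLine k V P) (hab : a ≠ b)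
    (hpar : PPar k V P a b) :
    (∀ x y : PLine k V P,
      PMeets k V P x y ↔ PMeets k V P (Equiv.swap a b x) (Equiv.swap a b y)) ∧
    ¬ ∃ κ : P ≃ P,
        (∀ Q R S : P,
          Collinear k ({Q, R, S} : Set P) ↔ Collinear k ({κ Q, κ R, κ S} : Set P)) ∧
        ∀ (l : PLine k V P) (Q : P), Q ∈ l.1 → κ Q ∈ (Equiv.swap a b l).1 := by
  have hnab : ¬ PMeets k V P a b := fun h => hab (ppar_eq_of_meets hpar h)
  constructor
  · -- the swap is a Plücker automorphism
    have H : ∀ x y : PLine k V P, PMeets k V P x y →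
        PMeets k V P (Equiv.swap a b x) (Equiv.swap a b y) := by
      intro x y hxy
      by_cases hxy' : x = y
      · subst hxy'; exact pmeets_refl _
      rcases eq_or_ne x a with rfl | hxa
      · rcases eq_or_ne y b with rfl | hyb
        · exact absurd hxy hnab
        · have hya : y ≠ x := Ne.symm hxy'
          rw [Equiv.swap_apply_left, Equiv.swap_apply_of_ne_of_ne hya hyb]
          exact pmeets_symm ((meets_a_iff_meets_b hdim hpar hya hyb).1 (pmeets_symm hxy))
      rcases eq_or_ne x b with rfl | hxb
      · rcases eq_or_ne y a with rfl | hya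
        · exact absurd (pmeets_symm hxy) hnab
        · have hyb : y ≠ x := Ne.symm hxy'
          rw [Equiv.swap_apply_right, Equiv.swap_apply_of_ne_of_ne hya hyb]
          exact pmeets_symm ((meets_a_iff_meets_b hdim hpar hya hyb).2 (pmeets_symm hxy))
      rw [Equiv.swap_apply_of_ne_of_ne hxa hxb]
      rcases eq_or_ne y a with rfl | hya
      · rw [Equiv.swap_apply_left]
        exact (meets_a_iff_meets_b hdim hpar hxa hxb).1 hxy
      rcases eq_or_ne y b with rfl | hyb
      · rw [Equiv.swap_apply_right]
        exact (meets_a_iff_meets_b hdim hpar hxa hxb).2 hxy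
      · rw [Equiv.swap_apply_of_ne_of_ne hya hyb]
        exact hxy
    intro x y
    constructor
    · exact H x y
    · intro h
      have := H _ _ h
      simpa [Equiv.swap_apply_self] using this
  · -- the swap is not induced by a collineation
    rintro ⟨κ, -, hκ⟩
    obtain ⟨pa, u, hu, ha⟩ := a.2
    have hQa : pa ∈ a.1 := ha ▸ self_mem_line
    -- a direction independent from u
    have hspan_ne : Submodule.span k ({u} : Set V) ≠ ⊤ := by
      intro h
      have := rank_span_le (R := k) ({u} : Set V)
      rw [h, rank_top, hdim] at this
      simp at this
    obtain ⟨w, hw⟩ : ∃ w : V, w ∉ Submodule.span k ({u} : Set V) := by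
      by_contra h
      push_neg at h
      exact hspan_ne (Submodule.eq_top_iff'.2 h)
    have hw0 : w ≠ 0 := fun h => hw (h ▸ Submodule.zero_mem _)
    have huw0 : u + w ≠ 0 := by
      intro h
      have hwn : w = -u := neg_eq_of_add_eq_zero_right h ▸ rfl
      exact hw (hwn ▸ Submodule.neg_mem _ (Submodule.mem_span_singleton_self u))
    -- two transversal lines through pa
    set m : PLine k V P := ⟨{x : P | ∃ t : k, x = t • w +ᵥ pa}, pa, w, hw0, rfl⟩ with hm_def
    set m' : PLine k V P := ⟨{x : P | ∃ t : k, x = t • (u + w) +ᵥ pa}, pa, u + w, huw0, rfl⟩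
      with hm'_def
    have hpam : pa ∈ m.1 := self_mem_line
    have hpam' : pa ∈ m'.1 := self_mem_line
    have hwm : (w +ᵥ pa) ∈ m.1 := ⟨1, by rw [one_smul]⟩
    have huwm' : ((u + w) +ᵥ pa) ∈ m'.1 := ⟨1, by rw [one_smul]⟩
    have hma : m ≠ a := by
      intro h
      have hmem : (w +ᵥ pa) ∈ a.1 := h ▸ hwm
      rw [ha] at hmem
      obtain ⟨t, ht⟩ := Stmt16Aux.mem_line.1 hmem
      rw [vadd_vsub] at ht
      exact hw (Submodule.mem_span_singleton.2 ⟨t, ht.symm⟩)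
    have hm'a : m' ≠ a := by
      intro h
      have hmem : ((u + w) +ᵥ pa) ∈ a.1 := h ▸ huwm'
      rw [ha] at hmem
      obtain ⟨t, ht⟩ := Stmt16Aux.mem_line.1 hmem
      rw [vadd_vsub] at ht
      have : w = (t - 1) • u := by
        rw [sub_smul, ← ht, one_smul]
        abel
      exact hw (this ▸ Submodule.mem_span_singleton.2 ⟨t - 1, rfl⟩)
    have hmb : m ≠ b := by
      intro h
      exact hnab ⟨pa, hQa, h ▸ hpam⟩
    have hm'b : m' ≠ b := by
      intro h
      exact hnab ⟨pa, hQa, h ▸ hpam'⟩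
    have hmm' : m ≠ m' := by
      intro h
      have hmem : ((u + w) +ᵥ pa) ∈ m.1 := h ▸ huwm'
      obtain ⟨t, ht⟩ := Stmt16Aux.mem_line.1 hmem
      rw [vadd_vsub] at ht
      have ht1 : u = (t - 1) • w := by
        rw [sub_smul, ← ht, one_smul]
        abel
      have htne : t - 1 ≠ 0 := by
        rintro h0
        rw [h0, zero_smul] at ht1
        exact hu ht1
      have : w = (t - 1)⁻¹ • u := by
        rw [ht1, smul_smul, inv_mul_cancel₀ htne, one_smul]
      exact hw (this ▸ Submodule.mem_span_singleton.2 ⟨(t - 1)⁻¹, rfl⟩)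
    -- now derive the contradiction
    have hQb : κ pa ∈ b.1 := by
      have := hκ a pa hQa
      rwa [Equiv.swap_apply_left] at this
    have hQm : κ pa ∈ m.1 := by
      have := hκ m pa hpam
      rwa [Equiv.swap_apply_of_ne_of_ne hma hmb] at this
    have hQm' : κ pa ∈ m'.1 := by
      have := hκ m' pa hpam'
      rwa [Equiv.swap_apply_of_ne_of_ne hm'a hm'b] at this
    by_cases hfix : κ pa = pa
    · exact hnab ⟨pa, hQa, hfix ▸ hQb⟩
    · have heq : m.1 = m'.1 :=
        Stmt16Aux.line_unique hw0 huw0 (fun h => hfix h.symm) hpam hQm hpam' hQm'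
      exact hmm' (Subtype.ext heq)
end

section
/- If n ≥ 3, m ≥ 3, h ≥ 1 are integers with n − 1 = h(m − 1) and ∑_{i=0}^{n-1} 2^i = ∑_{i=0}^{m-1} 2^{hi}, then h = 1 and n = m. -/
/-- Arithmetic lemma: if `n, m ≥ 3`, `h ≥ 1`, `n - 1 = h * (m - 1)` and
`∑_{i<n} 2 ^ i = ∑_{i<m} 2 ^ (h * i)`, then `h = 1` and `n = m`. -/
theorem stmt17 (n m h : ℕ) (hn : 3 ≤ n) (hm : 3 ≤ m) (hh : 1 ≤ h)
    (h1 : n - 1 = h * (m - 1))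
    (h2 : ∑ i ∈ Finset.range n, 2 ^ i = ∑ i ∈ Finset.range m, 2 ^ (h * i)) :
    h = 1 ∧ n = m := by
  have hh1 : h = 1 := by
    by_contra hne
    have hh' : 2 ≤ h := by omega
    have himg : ∑ i ∈ Finset.range m, 2 ^ (h * i)
        = ∑ j ∈ (Finset.range m).image (fun i => h * i), 2 ^ j := by
      rw [Finset.sum_image]
      intro a _ b _ hab
      exact Nat.eq_of_mul_eq_mul_left (by omega) hab
    set S := (Finset.range m).image (fun i => h * i) with hS
    have hsub : S ⊆ Finset.range n := by
      intro j hj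
      simp only [hS, Finset.mem_image, Finset.mem_range] at hj ⊢
      obtain ⟨i, hi, rfl⟩ := hj
      have : h * i ≤ h * (m - 1) := Nat.mul_le_mul_left _ (by omega)
      omega
    have h1S : (1 : ℕ) ∉ S := by
      simp only [hS, Finset.mem_image, Finset.mem_range]
      rintro ⟨i, hi, hhi⟩
      have := Nat.eq_one_of_mul_eq_one_right hhi
      omega
    have hlt : ∑ j ∈ S, 2 ^ j < ∑ j ∈ Finset.range n, 2 ^ j := by
      refine Finset.sum_lt_sum_of_subset hsub (i := 1) ?_ h1S (by norm_num) ?_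
      · simp only [Finset.mem_range]; omega
      · intro j _ _; positivity
    omega
  subst hh1
  omega
end

section
/- If there exists a bijection between the line sets of the finite affine spaces AG(n, 2) and AG(m, p^h) (n, m ≥ 3, p prime, h ≥ 1) that maps every star of lines bijectively onto a star of lines, then p = 2, h = 1 and n = m. -/
variable (k V P : Type*) [DivisionRing k] [AddCommGroup V] [Module k V] [AddTorsor V P]

section Count

variable {K : Type*} [Field K] [Fintype K] {d : ℕ}

private def lineThru (Q v : Fin d → K) : Set (Fin d → K) := {q | ∃ t : K, q = t • v +ᵥ Q}

private lemma mem_lineThru (Q v : Fin d → K) : Q ∈ lineThru Q v :=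
  ⟨0, by simp⟩

private lemma lineThru_isPLine (Q : Fin d → K) {v : Fin d → K} (hv : v ≠ 0) :
    IsPLine K (Fin d → K) (Fin d → K) (lineThru Q v) := ⟨Q, v, hv, rfl⟩

private lemma reparam (p v : Fin d → K) {Q : Fin d → K}
    (hQ : Q ∈ {q | ∃ t : K, q = t • v +ᵥ p}) :
    {q | ∃ t : K, q = t • v +ᵥ p} = lineThru Q v := by
  obtain ⟨t0, rfl⟩ := hQ
  ext q
  constructor
  · rintro ⟨t, rfl⟩
    exact ⟨t - t0, by simp [lineThru, vadd_eq_add, sub_smul]; abel⟩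
  · rintro ⟨t, rfl⟩
    exact ⟨t + t0, by simp [vadd_eq_add, add_smul]; abel⟩

private lemma lineThru_eq_iff {Q v w : Fin d → K} (hv : v ≠ 0) (hw : w ≠ 0) :
    lineThru Q v = lineThru Q w ↔ ∃ c : K, v = c • w := by
  constructor
  · intro hvw
    have : v +ᵥ Q ∈ lineThru Q w := hvw ▸ ⟨1, by simp⟩
    obtain ⟨t, ht⟩ := this
    exact ⟨t, by simpa [vadd_eq_add] using ht⟩
  · rintro ⟨c, rfl⟩
    have hc : c ≠ 0 := by rintro rfl; simp at hv
    ext q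
    constructor
    · rintro ⟨t, rfl⟩; exact ⟨t * c, by rw [smul_smul]⟩
    · rintro ⟨t, rfl⟩
      refine ⟨t * c⁻¹, ?_⟩
      rw [smul_smul, mul_assoc, inv_mul_cancel₀ hc, mul_one]

private lemma card_ne_zero : Nat.card {v : Fin d → K // v ≠ 0} = Fintype.card K ^ d - 1 := by
  classical
  simp only [Nat.card_eq_fintype_card]
  rw [Fintype.card_subtype_compl, Fintype.card_subtype_eq, Fintype.card_fun, Fintype.card_fin]

/-- The number of lines through a point of `AG(d, K)` times `card K - 1` is `card K ^ d - 1`. -/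
private lemma star_count (Q : Fin d → K) :
    Nat.card {l : PLine K (Fin d → K) (Fin d → K) // Q ∈ l.1} * (Fintype.card K - 1)
      = Fintype.card K ^ d - 1 := by
  classical
  set S := {l : PLine K (Fin d → K) (Fin d → K) // Q ∈ l.1}
  set g : {v : Fin d → K // v ≠ 0} → S :=
    fun v => ⟨⟨lineThru Q v.1, lineThru_isPLine Q v.2⟩, mem_lineThru Q v.1⟩ with hg
  have gsurj : Function.Surjective g := by
    rintro ⟨⟨s, p, w, hw, rfl⟩, hQ⟩
    exact ⟨⟨w, hw⟩, by simp only [hg]; exact Subtype.ext (Subtype.ext (reparam p w hQ).symm)⟩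
  have hfib : ∀ l : S, Nat.card {v // g v = l} = Fintype.card K - 1 := by
    intro l
    obtain ⟨v0, hv0⟩ := gsurj l
    have e : Function.Bijective
        (fun c : {c : K // c ≠ 0} => (⟨⟨c.1 • v0.1, smul_ne_zero c.2 v0.2⟩,
          by
            rw [← hv0]
            apply Subtype.ext; apply Subtype.ext
            exact (lineThru_eq_iff (smul_ne_zero c.2 v0.2) v0.2).2 ⟨c.1, rfl⟩⟩ :
          {v // g v = l})) := by
      constructor
      · intro c c' hcc'
        have := congrArg (fun x => x.1.1) hcc'
        exact Subtype.ext (smul_left_injective K v0.2 this)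
      · rintro ⟨v, hv⟩
        have : lineThru Q v.1 = lineThru Q v0.1 := by
          have := congrArg (fun x : S => x.1.1) (hv.trans hv0.symm)
          simpa [hg] using this
        obtain ⟨c, hc⟩ := (lineThru_eq_iff v.2 v0.2).1 this
        have hc0 : c ≠ 0 := by rintro rfl; rw [zero_smul] at hc; exact v.2 hc
        exact ⟨⟨c, hc0⟩, by apply Subtype.ext; apply Subtype.ext; exact hc.symm⟩
    rw [← Nat.card_congr (Equiv.ofBijective _ e)]
    simp only [Nat.card_eq_fintype_card]
    rw [Fintype.card_subtype_compl, Fintype.card_subtype_eq]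
  have key := Nat.card_congr (Equiv.sigmaFiberEquiv g)
  rw [card_ne_zero] at key
  haveI : Fintype S := Fintype.ofFinite _
  haveI : ∀ l : S, Fintype {v // g v = l} := fun l => Fintype.ofFinite _
  rw [Nat.card_eq_fintype_card, Fintype.card_sigma] at key
  have : ∀ l : S, Fintype.card {v // g v = l} = Fintype.card K - 1 := by
    intro l; rw [← Nat.card_eq_fintype_card]; exact hfib l
  simp only [this, Finset.sum_const, smul_eq_mul, Finset.card_univ] at key
  rw [Nat.card_eq_fintype_card]
  omega

private lemma line_card (l : PLine K (Fin d → K) (Fin d → K)) :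
    Nat.card l.1 = Fintype.card K := by
  obtain ⟨s, p, v, hv, rfl⟩ := l
  have e : Function.Bijective (fun t : K => (⟨t • v +ᵥ p, t, rfl⟩ :
      {q : Fin d → K // q ∈ {q | ∃ t : K, q = t • v +ᵥ p}})) := by
    constructor
    · intro t t' htt'
      have : t • v +ᵥ p = t' • v +ᵥ p := congrArg Subtype.val htt'
      simp only [vadd_eq_add, add_left_inj] at this
      exact smul_left_injective K hv this
    · rintro ⟨q, t, rfl⟩; exact ⟨t, rfl⟩
  rw [← Nat.card_congr (Equiv.ofBijective _ e), Nat.card_eq_fintype_card]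

private lemma total_count :
    Nat.card (PLine K (Fin d → K) (Fin d → K)) * Fintype.card K * (Fintype.card K - 1)
      = Fintype.card K ^ d * (Fintype.card K ^ d - 1) := by
  classical
  set L := PLine K (Fin d → K) (Fin d → K)
  have e : (Σ l : L, l.1) ≃ (Σ Q : Fin d → K, {l : L // Q ∈ l.1}) :=
    { toFun := fun x => ⟨x.2.1, x.1, x.2.2⟩
      invFun := fun y => ⟨y.2.1, ⟨y.1, y.2.2⟩⟩
      left_inv := fun x => rfl
      right_inv := fun y => rfl }
  haveI : Fintype L := Fintype.ofFinite _
  haveI : ∀ l : L, Fintype l.1 := fun l => Fintype.ofFinite _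
  haveI : ∀ Q : Fin d → K, Fintype {l : L // Q ∈ l.1} := fun Q => Fintype.ofFinite _
  have key := Nat.card_congr e
  rw [Nat.card_eq_fintype_card, Nat.card_eq_fintype_card, Fintype.card_sigma,
    Fintype.card_sigma] at key
  have h1 : ∀ l : L, Fintype.card l.1 = Fintype.card K := fun l => by
    rw [← Nat.card_eq_fintype_card]; exact line_card l
  have h2 : ∀ Q : Fin d → K, Fintype.card {l : L // Q ∈ l.1} * (Fintype.card K - 1)
      = Fintype.card K ^ d - 1 := fun Q => by
    rw [← Nat.card_eq_fintype_card]; exact star_count Q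
  have hL : ∑ i : L, Fintype.card i.1 = Fintype.card L * Fintype.card K := by
    simp [h1, Finset.sum_const, Finset.card_univ]
  rw [hL] at key
  rw [Nat.card_eq_fintype_card, key, Finset.sum_mul]
  simp only [h2]
  rw [Finset.sum_const, smul_eq_mul, Finset.card_univ, Fintype.card_fun, Fintype.card_fin]

end Count

private lemma arith2 (a b : ℤ) (hA : 4 ≤ a) (hB : a * a ≤ b)
    (hE : (2 * b - 1) * (a - 1) = a * b - 1) : False := by
  nlinarith [hE, hA, hB, mul_le_mul_of_nonneg_right hA (by nlinarith : (0:ℤ) ≤ b)]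

private lemma arith (n m p h : ℕ) (hp : p.Prime) (hn : 3 ≤ n) (hm : 3 ≤ m) (hh : 1 ≤ h)
    (s t L q : ℕ) (hq : q = p ^ h)
    (hs : s * 1 = 2 ^ n - 1) (ht : t * (q - 1) = q ^ m - 1) (hst : s = t)
    (hL1 : L * 2 = 2 ^ n * s) (hL2 : L * q = q ^ m * t) : p = 2 ∧ h = 1 ∧ n = m := by
  rw [mul_one] at hs
  have hs7 : 7 ≤ s := by
    have : 2 ^ 3 ≤ 2 ^ n := Nat.pow_le_pow_right (by norm_num) hn
    omega
  have key : 2 ^ n * s * q = q ^ m * s * 2 := by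
    calc 2 ^ n * s * q = L * 2 * q := by rw [hL1]
    _ = L * q * 2 := by ring
    _ = q ^ m * t * 2 := by rw [hL2]
    _ = q ^ m * s * 2 := by rw [hst]
  have key2 : 2 ^ n * q = q ^ m * 2 := by
    have h3 : (2 ^ n * q) * s = (q ^ m * 2) * s := by
      calc (2 ^ n * q) * s = 2 ^ n * s * q := by ring
      _ = q ^ m * s * 2 := key
      _ = (q ^ m * 2) * s := by ring
    exact Nat.eq_of_mul_eq_mul_right (by omega) h3
  rw [hq, ← pow_mul] at key2
  have hp2 : p = 2 := by
    by_contra hp2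
    have hco : Nat.Coprime (2 ^ n) (p ^ (h * m)) :=
      Nat.Coprime.pow n (h * m) ((Nat.coprime_primes Nat.prime_two hp).mpr (Ne.symm hp2))
    have hdvd : 2 ^ n ∣ p ^ (h * m) * 2 := ⟨p ^ h, by rw [← key2]⟩
    have hd2 : 2 ^ n ∣ 2 := hco.dvd_of_dvd_mul_left hdvd
    have hle := Nat.le_of_dvd (by norm_num) hd2
    have : 2 ^ 3 ≤ 2 ^ n := Nat.pow_le_pow_right (by norm_num) hn
    omega
  subst hp2
  have hexp : n + h = h * m + 1 := by
    have heq : (2 : ℕ) ^ (n + h) = 2 ^ (h * m + 1) := by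
      rw [pow_add, pow_succ]; exact key2
    exact Nat.pow_right_injective (le_refl 2) heq
  have h1 : h = 1 := by
    by_contra hne
    have h2 : 2 ≤ h := by omega
    obtain ⟨a, ha⟩ : ∃ a, a = 2 ^ h := ⟨_, rfl⟩
    obtain ⟨b, hb⟩ : ∃ b, b = 2 ^ (h * (m - 1)) := ⟨_, rfl⟩
    have e1 : h * (m - 1) + h = h * m := by
      rw [← Nat.mul_succ, Nat.succ_eq_add_one, Nat.sub_add_cancel (show 1 ≤ m by omega)]
    have hnm : n = h * (m - 1) + 1 := by linarith
    have hsb : s = 2 * b - 1 := by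
      rw [hs, hnm, pow_succ, ← hb, mul_comm]
    have hqm : q ^ m = a * b := by
      rw [hq, ← pow_mul, ← e1, pow_add, ← hb, ← ha, mul_comm]
    have hE : (2 * b - 1) * (a - 1) = a * b - 1 := by
      rw [← hsb, hst, ← hqm, show a = q by rw [hq, ha]]
      exact ht
    have hA : 4 ≤ a := by
      rw [ha]
      calc (4:ℕ) = 2 ^ 2 := by norm_num
      _ ≤ 2 ^ h := Nat.pow_le_pow_right (by norm_num) h2
    have hB : a * a ≤ b := by
      have hmm : h * 2 ≤ h * (m - 1) := Nat.mul_le_mul_left h (by omega)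
      rw [ha, hb, ← pow_add]
      exact Nat.pow_le_pow_right (by norm_num) (by linarith)
    have hb1 : 1 ≤ b := hb ▸ Nat.one_le_two_pow
    have hab : 1 ≤ a * b := Nat.mul_pos (by omega) (by omega)
    zify [hA, hb1, hab, show 1 ≤ 2 * b by omega, show 1 ≤ a by omega] at hE
    exact arith2 a b (by exact_mod_cast hA) (by exact_mod_cast hB) hE
  subst h1
  exact ⟨rfl, rfl, by omega⟩
/-- If there is a bijection between the line sets of `AG(n, 2)` and `AG(m, p^h)`
(`n, m ≥ 3`, `p` prime, `h ≥ 1`) mapping every star of lines onto a star of lines, then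
`p = 2`, `h = 1` and `n = m`. -/
theorem stmt18 (n m p h : ℕ) [Fact p.Prime] (hn : 3 ≤ n) (hm : 3 ≤ m) (hh : 1 ≤ h)
    (φ : PLine (ZMod 2) (Fin n → ZMod 2) (Fin n → ZMod 2) ≃
      PLine (GaloisField p h) (Fin m → GaloisField p h) (Fin m → GaloisField p h))
    (hstar : ∀ Q : Fin n → ZMod 2, ∃ Q' : Fin m → GaloisField p h,
      ⇑φ '' {l : PLine (ZMod 2) (Fin n → ZMod 2) (Fin n → ZMod 2) | Q ∈ l.1} =
        {l' : PLine (GaloisField p h) (Fin m → GaloisField p h)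
          (Fin m → GaloisField p h) | Q' ∈ l'.1}) :
    p = 2 ∧ h = 1 ∧ n = m := by
  classical
  haveI : Fintype (GaloisField p h) := Fintype.ofFinite _
  have hq : Fintype.card (GaloisField p h) = p ^ h := by
    rw [← Nat.card_eq_fintype_card, GaloisField.card p h (by omega)]
  have hcard2 : Fintype.card (ZMod 2) = 2 := by simp
  -- star counts
  obtain ⟨Q', himg⟩ := hstar 0
  have hs1 := star_count (K := ZMod 2) (d := n) 0
  have hs2 := star_count (K := GaloisField p h) (d := m) Q'
  rw [hcard2] at hs1
  -- the two stars have the same cardinality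
  have hst : Nat.card {l : PLine (ZMod 2) (Fin n → ZMod 2) (Fin n → ZMod 2) // 0 ∈ l.1}
      = Nat.card {l' : PLine (GaloisField p h) (Fin m → GaloisField p h)
          (Fin m → GaloisField p h) // Q' ∈ l'.1} := by
    have := Nat.card_image_of_injective φ.injective
      {l : PLine (ZMod 2) (Fin n → ZMod 2) (Fin n → ZMod 2) | 0 ∈ l.1}
    rw [himg] at this
    exact this.symm
  -- total counts
  have ht1 := total_count (K := ZMod 2) (d := n)
  have ht2 := total_count (K := GaloisField p h) (d := m)
  rw [hcard2] at ht1
  have hLeq : Nat.card (PLine (ZMod 2) (Fin n → ZMod 2) (Fin n → ZMod 2))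
      = Nat.card (PLine (GaloisField p h) (Fin m → GaloisField p h)
          (Fin m → GaloisField p h)) := Nat.card_congr φ
  -- abbreviations
  set q := Fintype.card (GaloisField p h) with hqdef
  set s := Nat.card {l : PLine (ZMod 2) (Fin n → ZMod 2) (Fin n → ZMod 2) // 0 ∈ l.1} with hsdef
  set t := Nat.card {l' : PLine (GaloisField p h) (Fin m → GaloisField p h)
      (Fin m → GaloisField p h) // Q' ∈ l'.1} with htdef
  set L := Nat.card (PLine (ZMod 2) (Fin n → ZMod 2) (Fin n → ZMod 2)) with hLdef
  rw [← hLeq] at ht2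
  have hq2 : 2 ≤ q := Fintype.one_lt_card
  -- L * 2 = 2 ^ n * s
  have hL1 : L * 2 = 2 ^ n * s := by
    have h' : L * 2 * (2 - 1) = 2 ^ n * (2 ^ n - 1) := ht1
    rw [← hs1] at h'
    norm_num at h'
    exact h'
  -- L * q = q ^ m * t
  have hL2 : L * q = q ^ m * t := by
    have h' : L * q * (q - 1) = q ^ m * t * (q - 1) := by
      rw [ht2, ← hs2, mul_assoc]
    exact Nat.eq_of_mul_eq_mul_right (by omega) h'
  exact arith n m p h Fact.out hn hm hh s t L q hq hs1 hs2 hst hL1 hL2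
end
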